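/- arXiv:1908.02174 — 12 statements merged into one kernel-verified Lean document; each statement's English description precedes it below -/
import Mathlib

section
/- Let G = (U, W, E) be a convex bipartite graph with |U| ≥ 2 and |W| ≥ 2, and let D be a minimal connected dominating set of G. If i and j are two distinct vertices of U with N(i) ⊆ N(j), then at most one of i, j belongs to D. -/
/-- `D` is a dominating set of `G`: every vertex lies in `D` or has a neighbor in `D`. -/
def IsDominatingSet {V : Type*} (G : SimpleGraph V) (D : Set V) : Prop :=
  ∀ v : V, v ∈ D ∨ ∃ u ∈ D, G.Adj u v

/-- `D` is a connected dominating set of `G`. -/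
def IsConnectedDominatingSet {V : Type*} (G : SimpleGraph V) (D : Set V) : Prop :=
  IsDominatingSet G D ∧ (G.induce D).Connected

/-- `D` is a minimal connected dominating set of `G`. -/
def IsMinimalCDS {V : Type*} (G : SimpleGraph V) (D : Set V) : Prop :=
  IsConnectedDominatingSet G D ∧
    ∀ D' : Set V, D' ⊂ D → ¬ IsConnectedDominatingSet G D'

/-- A graph on `Fin a ⊕ Fin m` is convex bipartite (with parts `U = Fin a` and
`W = Fin m`, the latter carrying its natural linear order) if there are no edges inside
either part and the neighborhood of every vertex of `U` is an interval of `W`. -/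
def ConvexBipartite {a m : ℕ} (G : SimpleGraph (Fin a ⊕ Fin m)) : Prop :=
  (∀ x y : Fin a, ¬ G.Adj (Sum.inl x) (Sum.inl y)) ∧
  (∀ i j : Fin m, ¬ G.Adj (Sum.inr i) (Sum.inr j)) ∧
  (∀ u : Fin a, ∀ i j k : Fin m, i ≤ j → j ≤ k →
    G.Adj (Sum.inl u) (Sum.inr i) → G.Adj (Sum.inl u) (Sum.inr k) →
    G.Adj (Sum.inl u) (Sum.inr j))

/-- In a convex bipartite graph with `|U| ≥ 2` and `|W| ≥ 2`, if `D` is a minimal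
connected dominating set and `i ≠ j` are vertices of `U` with `N(i) ⊆ N(j)`,
then at most one of `i, j` belongs to `D`. -/
theorem mcds_nested_neighborhoods {a m : ℕ} (ha : 2 ≤ a) (hm : 2 ≤ m)
    (G : SimpleGraph (Fin a ⊕ Fin m)) (hG : ConvexBipartite G)
    (D : Set (Fin a ⊕ Fin m)) (hD : IsMinimalCDS G D)
    (i j : Fin a) (hij : i ≠ j)
    (hsub : G.neighborSet (Sum.inl i) ⊆ G.neighborSet (Sum.inl j)) :
    ¬ (Sum.inl i ∈ D ∧ Sum.inl j ∈ D) := by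
  rintro ⟨hiD, hjD⟩
  obtain ⟨⟨hdom, hconn⟩, hmin⟩ := hD
  have hij' : (Sum.inl i : Fin a ⊕ Fin m) ≠ Sum.inl j := fun h => hij (Sum.inl.inj h)
  set D' : Set (Fin a ⊕ Fin m) := D \ {Sum.inl i} with hD'def
  have hjD' : (Sum.inl j : Fin a ⊕ Fin m) ∈ D' := ⟨hjD, fun h => hij' h.symm⟩
  -- any G-neighbor of inl i is a G-neighbor of inl j and is not inl i or inl j
  have hkey : ∀ v, G.Adj (Sum.inl i) v → G.Adj (Sum.inl j) v := fun v h => hsub h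
  have hnotinl : ∀ v, G.Adj (Sum.inl i) v → ∀ x : Fin a, v ≠ Sum.inl x := by
    rintro v h x rfl; exact hG.1 i x h
  -- the map f
  let f : ↥D → ↥D' := fun x =>
    if h : x.val = Sum.inl i then ⟨Sum.inl j, hjD'⟩ else ⟨x.val, x.2, h⟩
  have hf : ∀ x y : ↥D, (G.induce D).Adj x y → (G.induce D').Adj (f x) (f y) := by
    rintro ⟨x, hx⟩ ⟨y, hy⟩ hadj
    have hadj' : G.Adj x y := hadj
    by_cases hxi : x = Sum.inl i
    · subst hxi
      have hyi : y ≠ Sum.inl i := fun h => G.irrefl (h ▸ hadj')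
      have h2 : G.Adj (Sum.inl j) y := hkey y hadj'
      simp only [f, dif_pos rfl, dif_neg hyi]
      exact h2
    · by_cases hyi : y = Sum.inl i
      · subst hyi
        have h2 : G.Adj (Sum.inl j) x := hkey x hadj'.symm
        simp only [f, dif_pos rfl, dif_neg hxi]
        exact h2.symm
      · simp only [f, dif_neg hxi, dif_neg hyi]
        exact hadj'
  let hom : G.induce D →g G.induce D' := ⟨f, fun h => hf _ _ h⟩
  have hconn' : (G.induce D').Connected := by
    haveI : Nonempty ↥D' := ⟨⟨Sum.inl j, hjD'⟩⟩
    constructor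
    rintro ⟨u, hu, hu'⟩ ⟨v, hv, hv'⟩
    have hr := (hconn.preconnected ⟨u, hu⟩ ⟨v, hv⟩).map hom
    have hfu : f ⟨u, hu⟩ = ⟨u, hu, hu'⟩ := by simp only [f, dif_neg (show u ≠ Sum.inl i from hu')]
    have hfv : f ⟨v, hv⟩ = ⟨v, hv, hv'⟩ := by simp only [f, dif_neg (show v ≠ Sum.inl i from hv')]
    rwa [show hom ⟨u, hu⟩ = f ⟨u, hu⟩ from rfl, show hom ⟨v, hv⟩ = f ⟨v, hv⟩ from rfl, hfu, hfv] at hr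
  -- inl i has a neighbor in D'
  have hnb : ∃ x ∈ D', G.Adj x (Sum.inl i) := by
    obtain ⟨p⟩ := hconn.preconnected ⟨Sum.inl i, hiD⟩ ⟨Sum.inl j, hjD⟩
    cases p with
    | nil => exact absurd rfl hij
    | @cons _ w _ h q =>
      have hadj : G.Adj (Sum.inl i) w.val := h
      exact ⟨w.val, ⟨w.2, fun he => G.irrefl (he ▸ hadj)⟩, hadj.symm⟩
  have hdom' : IsDominatingSet G D' := by
    intro v
    by_cases hvi : v = Sum.inl i
    · subst hvi
      obtain ⟨x, hx, hadj⟩ := hnb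
      exact Or.inr ⟨x, hx, hadj⟩
    · rcases hdom v with hv | ⟨u, hu, hadj⟩
      · exact Or.inl ⟨hv, hvi⟩
      · by_cases hui : u = Sum.inl i
        · subst hui
          exact Or.inr ⟨Sum.inl j, hjD', hkey v hadj⟩
        · exact Or.inr ⟨u, ⟨hu, hui⟩, hadj⟩
  have hss : D' ⊂ D := by
    constructor
    · exact Set.diff_subset
    · intro h
      exact (h hiD).2 rfl
  exact hmin D' hss ⟨hdom', hconn'⟩
end

section
/- Let G = (U, W, E) be a convex bipartite graph with |U| ≥ 2 and |W| ≥ 2, and let D be a minimal connected dominating set of G. If i and j are two distinct vertices of U whose neighbor intervals satisfy r(I_i) = r(I_j) or l(I_i) = l(I_j) (i.e. the intervals share a right endpoint or share a left endpoint), then at most one of i, j belongs to D. -/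
lemma mcds_key {a m : ℕ} (G : SimpleGraph (Fin a ⊕ Fin m)) (hG : ConvexBipartite G)
    (D : Set (Fin a ⊕ Fin m)) (hD : IsMinimalCDS G D)
    (i j : Fin a) (hij : i ≠ j)
    (hsub : ∀ w : Fin m, G.Adj (Sum.inl j) (Sum.inr w) → G.Adj (Sum.inl i) (Sum.inr w))
    (hi : Sum.inl i ∈ D) (hj : Sum.inl j ∈ D) : False := by
  classical
  set D' : Set (Fin a ⊕ Fin m) := D \ {Sum.inl j} with hD'
  have hineJ : (Sum.inl i : Fin a ⊕ Fin m) ≠ Sum.inl j := by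
    simpa using hij
  have hiD' : Sum.inl i ∈ D' := ⟨hi, hineJ⟩
  have hss : D' ⊂ D := by
    constructor
    · exact Set.diff_subset
    · intro h
      exact (h hj).2 rfl
  apply hD.2 D' hss
  have hadj : ∀ x y : Fin a ⊕ Fin m, G.Adj x y → x = Sum.inl j →
      G.Adj (Sum.inl i) y := by
    rintro x y hxy rfl
    match y with
    | Sum.inl b => exact absurd hxy (hG.1 _ _)
    | Sum.inr w => exact hsub w hxy
  let g : D → D' := fun x => if h : (x : Fin a ⊕ Fin m) = Sum.inl j then ⟨Sum.inl i, hiD'⟩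
    else ⟨x, x.2, h⟩
  have hg : ∀ (x : Fin a ⊕ Fin m) (hx : x ∈ D) (hx' : x ∈ D'),
      g ⟨x, hx⟩ = ⟨x, hx'⟩ := by
    intro x hx hx'
    have hxj : x ≠ Sum.inl j := hx'.2
    simp only [g, dif_neg hxj]
  let f : G.induce D →g G.induce D' := by
    refine ⟨g, ?_⟩
    rintro ⟨x, hx⟩ ⟨y, hy⟩ hxy
    simp only [SimpleGraph.comap_adj, Function.Embedding.coe_subtype] at hxy
    show (G.induce D').Adj (g ⟨x, hx⟩) (g ⟨y, hy⟩)
    by_cases hxj : x = Sum.inl j <;> by_cases hyj : y = Sum.inl j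
    · exact absurd (hxj ▸ hyj ▸ hxy) (G.loopless.irrefl _)
    · have h1 : g ⟨x, hx⟩ = ⟨Sum.inl i, hiD'⟩ := by simp only [g, dif_pos hxj]
      have h2 : g ⟨y, hy⟩ = ⟨y, hy, hyj⟩ := hg y hy ⟨hy, hyj⟩
      rw [h1, h2]
      exact hadj x y hxy hxj
    · have h1 : g ⟨x, hx⟩ = ⟨x, hx, hxj⟩ := hg x hx ⟨hx, hxj⟩
      have h2 : g ⟨y, hy⟩ = ⟨Sum.inl i, hiD'⟩ := by simp only [g, dif_pos hyj]
      rw [h1, h2]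
      exact (hadj y x hxy.symm hyj).symm
    · rw [hg x hx ⟨hx, hxj⟩, hg y hy ⟨hy, hyj⟩]
      exact hxy
  constructor
  · -- dominating
    intro v
    by_cases hv : v ∈ D'
    · exact Or.inl hv
    by_cases hvj : v = Sum.inl j
    · subst hvj
      have hconn := hD.1.2
      obtain ⟨p⟩ := hconn.preconnected ⟨Sum.inl j, hj⟩ ⟨Sum.inl i, hi⟩
      have hne : (⟨Sum.inl j, hj⟩ : D) ≠ ⟨Sum.inl i, hi⟩ := by
        simp [Subtype.ext_iff, hij.symm]
      have hnn : ¬ p.Nil := SimpleGraph.Walk.not_nil_of_ne hne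
      have hadj2 := p.adj_snd hnn
      set z := p.getVert 1 with hz
      have hzadj : G.Adj (Sum.inl j) (z : Fin a ⊕ Fin m) := hadj2
      refine Or.inr ⟨z, ⟨z.2, ?_⟩, hzadj.symm⟩
      intro hzj
      exact G.loopless.irrefl _ (hzj ▸ hzadj)
    · have hvD : v ∉ D := fun h => hv ⟨h, hvj⟩
      rcases hD.1.1 v with h | ⟨u, hu, huv⟩
      · exact absurd h hvD
      by_cases huj : u = Sum.inl j
      · subst huj
        exact Or.inr ⟨Sum.inl i, hiD', hadj _ _ huv rfl⟩
      · exact Or.inr ⟨u, ⟨hu, huj⟩, huv⟩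
  · -- connected
    rw [SimpleGraph.connected_iff]
    refine ⟨?_, ⟨⟨Sum.inl i, hiD'⟩⟩⟩
    intro u v
    have hu0 : (u : Fin a ⊕ Fin m) ∈ D := u.2.1
    have hv0 : (v : Fin a ⊕ Fin m) ∈ D := v.2.1
    have hr := hD.1.2.preconnected ⟨u, hu0⟩ ⟨v, hv0⟩
    have hr' := hr.map f
    have hfu : f ⟨u, hu0⟩ = u := hg u hu0 u.2
    have hfv : f ⟨v, hv0⟩ = v := hg v hv0 v.2
    rwa [hfu, hfv] at hr'

/-- In a convex bipartite graph with `|U| ≥ 2` and `|W| ≥ 2`, if `D` is a minimal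
connected dominating set and `i ≠ j` are vertices of `U` whose neighbor intervals
share their right endpoint or share their left endpoint, then at most one of
`i, j` belongs to `D`. -/
theorem mcds_shared_endpoint {a m : ℕ} (ha : 2 ≤ a) (hm : 2 ≤ m)
    (G : SimpleGraph (Fin a ⊕ Fin m)) (hG : ConvexBipartite G)
    (D : Set (Fin a ⊕ Fin m)) (hD : IsMinimalCDS G D)
    (i j : Fin a) (hij : i ≠ j)
    (hend : (∃ r : Fin m,
        IsGreatest {w : Fin m | G.Adj (Sum.inl i) (Sum.inr w)} r ∧
        IsGreatest {w : Fin m | G.Adj (Sum.inl j) (Sum.inr w)} r) ∨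
      (∃ l : Fin m,
        IsLeast {w : Fin m | G.Adj (Sum.inl i) (Sum.inr w)} l ∧
        IsLeast {w : Fin m | G.Adj (Sum.inl j) (Sum.inr w)} l)) :
    ¬ (Sum.inl i ∈ D ∧ Sum.inl j ∈ D) := by
  rintro ⟨hi, hj⟩
  rcases hend with ⟨r, hri, hrj⟩ | ⟨l, hli, hlj⟩
  · obtain ⟨li, hli, hlimin⟩ := Set.exists_min_image
      {w : Fin m | G.Adj (Sum.inl i) (Sum.inr w)} id (Set.toFinite _) ⟨r, hri.1⟩
    obtain ⟨lj, hlj, hljmin⟩ := Set.exists_min_image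
      {w : Fin m | G.Adj (Sum.inl j) (Sum.inr w)} id (Set.toFinite _) ⟨r, hrj.1⟩
    rcases le_total li lj with h | h
    · refine mcds_key G hG D hD i j hij (fun w hw => ?_) hi hj
      exact hG.2.2 i li w r (h.trans (hljmin w hw)) (hrj.2 hw) hli hri.1
    · refine mcds_key G hG D hD j i hij.symm (fun w hw => ?_) hj hi
      exact hG.2.2 j lj w r (h.trans (hlimin w hw)) (hri.2 hw) hlj hrj.1
  · obtain ⟨ri, hri, hrimax⟩ := Set.exists_max_image
      {w : Fin m | G.Adj (Sum.inl i) (Sum.inr w)} id (Set.toFinite _) ⟨l, hli.1⟩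
    obtain ⟨rj, hrj, hrjmax⟩ := Set.exists_max_image
      {w : Fin m | G.Adj (Sum.inl j) (Sum.inr w)} id (Set.toFinite _) ⟨l, hlj.1⟩
    rcases le_total rj ri with h | h
    · refine mcds_key G hG D hD i j hij (fun w hw => ?_) hi hj
      exact hG.2.2 i l w ri (hlj.2 hw) ((hrjmax w hw).trans h) hli.1 hri
    · refine mcds_key G hG D hD j i hij.symm (fun w hw => ?_) hj hi
      exact hG.2.2 j l w rj (hli.2 hw) ((hrimax w hw).trans h) hlj.1 hrj
end

section
/- Let G = (U, W, E) be a convex bipartite graph with |U| ≥ 2 and |W| ≥ 2, with W ordered as w_1 < w_2 < ... < w_{|W|}, and let D be a minimal connected dominating set of G. Then for every index i with 1 ≤ i ≤ |W| − 1 there exists a vertex u ∈ D ∩ U that is adjacent to both w_i and w_{i+1}. -/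
/-- In a convex bipartite graph with `|U| ≥ 2` and `|W| ≥ 2`, if `D` is a minimal
connected dominating set, then for any two consecutive vertices `w_i, w_{i+1}` of `W`
there is a vertex `u ∈ D ∩ U` adjacent to both. -/
theorem mcds_consecutive_common_neighbor {a m : ℕ} (ha : 2 ≤ a) (hm : 2 ≤ m)
    (G : SimpleGraph (Fin a ⊕ Fin m)) (hG : ConvexBipartite G)
    (D : Set (Fin a ⊕ Fin m)) (hD : IsMinimalCDS G D) :
    ∀ i : Fin m, ∀ h : (i : ℕ) + 1 < m,
      ∃ u : Fin a, Sum.inl u ∈ D ∧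
        G.Adj (Sum.inl u) (Sum.inr i) ∧
        G.Adj (Sum.inl u) (Sum.inr (⟨(i : ℕ) + 1, h⟩ : Fin m)) := by

  intro i h
  obtain ⟨⟨hdom, hconn⟩, -⟩ := hD
  by_contra hno
  push_neg at hno
  set i' : Fin m := ⟨(i : ℕ) + 1, h⟩ with hi'
  have hvi' : (i' : ℕ) = (i : ℕ) + 1 := rfl
  -- key: no u ∈ D has a neighbor with index ≤ i and a neighbor with index > i
  have key : ∀ u : Fin a, Sum.inl u ∈ D → ∀ j k : Fin m,
      G.Adj (Sum.inl u) (Sum.inr j) → G.Adj (Sum.inl u) (Sum.inr k) →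
      (j : ℕ) ≤ (i : ℕ) → (i : ℕ) < (k : ℕ) → False := by
    intro u hu j k haj hak hji hik
    have h1 : G.Adj (Sum.inl u) (Sum.inr i) :=
      hG.2.2 u j i k (Fin.le_def.mpr (by omega)) (Fin.le_def.mpr (by omega)) haj hak
    have h2 : G.Adj (Sum.inl u) (Sum.inr i') :=
      hG.2.2 u j i' k (Fin.le_def.mpr (by omega)) (Fin.le_def.mpr (by omega)) haj hak
    exact hno u hu h1 h2
  -- the set of "left" vertices
  set S : Set (Fin a ⊕ Fin m) :=
    {v | Sum.elim (fun u : Fin a => ∃ j : Fin m, (j : ℕ) ≤ (i : ℕ) ∧ G.Adj (Sum.inl u) (Sum.inr j))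
      (fun j : Fin m => (j : ℕ) ≤ (i : ℕ)) v} with hS
  have closed : ∀ v v' : Fin a ⊕ Fin m, v ∈ D → v' ∈ D → G.Adj v v' → v ∈ S → v' ∈ S := by
    rintro (u | j) (u' | j') hv hv' hadj hvS
    · exact absurd hadj (hG.1 u u')
    · rcases hvS with ⟨j0, hj0, hadj0⟩
      by_cases hj' : (j' : ℕ) ≤ (i : ℕ)
      · exact hj'
      · exact absurd (key u hv j0 j' hadj0 hadj hj0 (by omega)) (fun x => x)
    · exact ⟨j, hvS, hadj.symm⟩
    · exact absurd hadj (hG.2.1 j j')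
  have walkS : ∀ x y : ↥D, (G.induce D).Reachable x y → (x : Fin a ⊕ Fin m) ∈ S →
      (y : Fin a ⊕ Fin m) ∈ S := by
    intro x y hr
    obtain ⟨w⟩ := hr
    induction w with
    | nil => exact id
    | @cons p q r hadj _ ih =>
      intro hp
      exact ih (closed p.val q.val p.property q.property hadj hp)
  -- a D-vertex in S
  have hx : ∃ x ∈ D, x ∈ S := by
    rcases hdom (Sum.inr i) with hi | ⟨v, hv, hadj⟩
    · refine ⟨Sum.inr i, hi, ?_⟩
      simp [hS]
    · rcases v with u | j
      · exact ⟨Sum.inl u, hv, ⟨i, le_rfl, hadj⟩⟩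
      · exact absurd hadj (hG.2.1 j i)
  -- a D-vertex not in S
  have hy : ∃ y ∈ D, y ∉ S := by
    rcases hdom (Sum.inr i') with hi1 | ⟨v, hv, hadj⟩
    · refine ⟨Sum.inr i', hi1, ?_⟩
      simp only [hS, Set.mem_setOf_eq, Sum.elim_inr]
      omega
    · rcases v with u | j
      · refine ⟨Sum.inl u, hv, ?_⟩
        rintro ⟨j0, hj0, hadj0⟩
        exact key u hv j0 i' hadj0 hadj hj0 (by omega)
      · exact absurd hadj (hG.2.1 j i')
  obtain ⟨x, hxD, hxS⟩ := hx
  obtain ⟨y, hyD, hyS⟩ := hy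
  exact hyS (walkS ⟨x, hxD⟩ ⟨y, hyD⟩ (hconn.preconnected _ _) hxS)
end

section
/- Let G = (U, W, E) be a convex bipartite graph with |U| ≥ 2 and |W| ≥ 2, with W ordered as w_1 < w_2 < ... < w_{|W|}, and let D be a minimal connected dominating set of G. If w_i and w_j are two vertices of W ∩ D with i < j that are consecutive among the vertices of W ∩ D (i.e. there is no k with i < k < j and w_k ∈ D), then there exists a vertex u ∈ D ∩ U that is adjacent to both w_i and w_j. -/
/-- In a convex bipartite graph with `|U| ≥ 2` and `|W| ≥ 2`, if `D` is a minimal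
connected dominating set and `w_i < w_j` are consecutive vertices of `W ∩ D`
(no vertex of `W` strictly between them lies in `D`), then there is a vertex
`u ∈ D ∩ U` adjacent to both `w_i` and `w_j`. -/
theorem mcds_consecutive_in_D_common_neighbor {a m : ℕ} (ha : 2 ≤ a) (hm : 2 ≤ m)
    (G : SimpleGraph (Fin a ⊕ Fin m)) (hG : ConvexBipartite G)
    (D : Set (Fin a ⊕ Fin m)) (hD : IsMinimalCDS G D)
    (i j : Fin m) (hi : Sum.inr i ∈ D) (hj : Sum.inr j ∈ D) (hij : i < j)
    (hcons : ∀ k : Fin m, i < k → k < j → Sum.inr k ∉ D) :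
    ∃ u : Fin a, Sum.inl u ∈ D ∧
      G.Adj (Sum.inl u) (Sum.inr i) ∧ G.Adj (Sum.inl u) (Sum.inr j) := by
  obtain ⟨hWW, hdom⟩ := hG
  obtain ⟨hWWW, hconv⟩ := hdom
  have hconn := hD.1.2
  set G' := G.induce D with hG'
  have hreach : G'.Reachable ⟨Sum.inr i, hi⟩ ⟨Sum.inr j, hj⟩ :=
    hconn.preconnected _ _
  obtain ⟨p⟩ := hreach
  -- predicate on start vertices
  suffices h : ∀ (t v : D) (p : G'.Walk v t), t.1 = Sum.inr j →
      ((∃ x : Fin m, v.1 = Sum.inr x ∧ x ≤ i) ∨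
       (∃ u : Fin a, ∃ x : Fin m, v.1 = Sum.inl u ∧ x ≤ i ∧
          G.Adj (Sum.inl u) (Sum.inr x))) →
      ∃ u : Fin a, Sum.inl u ∈ D ∧
        G.Adj (Sum.inl u) (Sum.inr i) ∧ G.Adj (Sum.inl u) (Sum.inr j) by
    exact h _ _ p rfl (Or.inl ⟨i, rfl, le_refl i⟩)
  intro t v p
  induction p with
  | nil =>
    intro ht
    rintro (⟨x, hx, hxi⟩ | ⟨u, x, hu, _, _⟩)
    · have : x = j := by
        have := hx.symm.trans ht
        simpa using Sum.inr.inj this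
      exact absurd (this ▸ hxi) (not_le.mpr hij)
    · rw [ht] at hu; simp at hu
  | @cons v w t' h q ih =>
    intro ht
    rintro (⟨x, hx, hxi⟩ | ⟨u, x, hu, hxi, hadj⟩)
    · -- v is inr x; next vertex must be inl
      have hadj : G.Adj v.1 w.1 := h
      rw [hx] at hadj
      match hw : w.1 with
      | Sum.inr y =>
        rw [hw] at hadj
        exact absurd hadj (hWWW x y)
      | Sum.inl u =>
        rw [hw] at hadj
        exact ih ht (Or.inr ⟨u, x, hw, hxi, hadj.symm⟩)
    · -- v is inl u adjacent to inr x with x ≤ i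
      have hAdj : G.Adj v.1 w.1 := h
      rw [hu] at hAdj
      match hw : w.1 with
      | Sum.inl u' =>
        rw [hw] at hAdj
        exact absurd hAdj (hWW u u')
      | Sum.inr y =>
        rw [hw] at hAdj
        by_cases hjy : j ≤ y
        · refine ⟨u, ?_, ?_, ?_⟩
          · rw [← hu]; exact v.2
          · exact hconv u x i y hxi (le_of_lt (lt_of_lt_of_le hij hjy)) hadj hAdj
          · exact hconv u x j y (le_trans hxi (le_of_lt hij)) hjy hadj hAdj
        · have hyD : Sum.inr y ∈ D := hw ▸ w.2
          have hyi : y ≤ i := by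
            by_contra hiy
            exact hcons y (not_le.mp hiy) (not_le.mp hjy) hyD
          exact ih ht (Or.inl ⟨y, hw, hyi⟩)
end

section
/- Let G = (U, W, E) be a convex bipartite graph with |U| ≥ 2 and |W| ≥ 2, and let D be a minimal connected dominating set of G. Let i, j, k be three pairwise distinct vertices of U with i, j, k ∈ D such that N(i) ∩ N(j) ≠ ∅ and N(k) is a proper subset of N(i) ∪ N(j). Then N(i) ∩ N(j) ∩ D = ∅. -/
/-- In a convex bipartite graph with `|U| ≥ 2` and `|W| ≥ 2`, if `D` is a minimal
connected dominating set and `i, j, k` are pairwise distinct vertices of `U` lying in `D`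
with `N(i) ∩ N(j) ≠ ∅` and `N(k)` a proper subset of `N(i) ∪ N(j)`,
then `N(i) ∩ N(j) ∩ D = ∅`. -/
theorem mcds_forbidden_intersection {a m : ℕ} (ha : 2 ≤ a) (hm : 2 ≤ m)
    (G : SimpleGraph (Fin a ⊕ Fin m)) (hG : ConvexBipartite G)
    (D : Set (Fin a ⊕ Fin m)) (hD : IsMinimalCDS G D)
    (i j k : Fin a) (hij : i ≠ j) (hik : i ≠ k) (hjk : j ≠ k)
    (hiD : Sum.inl i ∈ D) (hjD : Sum.inl j ∈ D) (hkD : Sum.inl k ∈ D)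
    (hinter : (G.neighborSet (Sum.inl i) ∩ G.neighborSet (Sum.inl j)).Nonempty)
    (hk : G.neighborSet (Sum.inl k) ⊂
      G.neighborSet (Sum.inl i) ∪ G.neighborSet (Sum.inl j)) :
    G.neighborSet (Sum.inl i) ∩ G.neighborSet (Sum.inl j) ∩ D = ∅ := by
  by_contra hne
  rw [← Ne, ← Set.nonempty_iff_ne_empty] at hne
  obtain ⟨w, ⟨⟨hwi, hwj⟩, hwD⟩⟩ := hne
  have hwi : G.Adj (Sum.inl i) w := hwi
  have hwj : G.Adj (Sum.inl j) w := hwj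
  have hwk : w ∉ ({Sum.inl k} : Set (Fin a ⊕ Fin m)) := by
    intro h
    rw [Set.mem_singleton_iff] at h
    exact hG.1 i k (h ▸ hwi)
  set D' : Set (Fin a ⊕ Fin m) := D \ {Sum.inl k} with hD'def
  have hiD' : Sum.inl i ∈ D' := ⟨hiD, by simp [hik]⟩
  have hjD' : Sum.inl j ∈ D' := ⟨hjD, by simp [hjk]⟩
  have hwD' : w ∈ D' := ⟨hwD, hwk⟩
  -- k has a neighbor in D'
  have hknbr : ∃ z ∈ D', G.Adj z (Sum.inl k) := by
    obtain ⟨p⟩ := hD.1.2.preconnected ⟨Sum.inl k, hkD⟩ ⟨Sum.inl i, hiD⟩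
    cases p with
    | nil => exact absurd rfl hik
    | @cons _ z _ h p =>
      have hz : G.Adj (Sum.inl k) (z : Fin a ⊕ Fin m) := h
      exact ⟨z, ⟨z.2, by simpa using hz.ne'⟩, hz.symm⟩
  -- D' dominates
  have hdom : IsDominatingSet G D' := by
    intro v
    rcases hD.1.1 v with hv | ⟨u, huD, huv⟩
    · by_cases hvk : v = Sum.inl k
      · obtain ⟨z, hzD', hz⟩ := hknbr
        exact Or.inr ⟨z, hzD', hvk ▸ hz⟩
      · exact Or.inl ⟨hv, by simpa using hvk⟩
    · by_cases huk : u = Sum.inl k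
      · have : v ∈ G.neighborSet (Sum.inl k) := huk ▸ huv
        rcases hk.1 this with h | h
        · exact Or.inr ⟨Sum.inl i, hiD', h⟩
        · exact Or.inr ⟨Sum.inl j, hjD', h⟩
      · exact Or.inr ⟨u, ⟨huD, by simpa using huk⟩, huv⟩
  -- key reachability lemma
  have key : ∀ (x y : ↥D) (p : (G.induce D).Walk x y), (y : Fin a ⊕ Fin m) = Sum.inl i →
      ∀ hx : (x : Fin a ⊕ Fin m) ∉ ({Sum.inl k} : Set (Fin a ⊕ Fin m)),
      (G.induce D').Reachable ⟨(x : Fin a ⊕ Fin m), x.2, hx⟩ ⟨Sum.inl i, hiD'⟩ := by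
    intro x y p
    induction p with
    | @nil x =>
      intro hy hx
      have h2 : (⟨(x : Fin a ⊕ Fin m), x.2, hx⟩ : ↥D') = ⟨Sum.inl i, hiD'⟩ := Subtype.ext hy
      rw [h2]
    | @cons u z y h p ih =>
      intro hy hx
      by_cases hz : (z : Fin a ⊕ Fin m) ∈ ({Sum.inl k} : Set (Fin a ⊕ Fin m))
      · rw [Set.mem_singleton_iff] at hz
        have hadj : G.Adj (u : Fin a ⊕ Fin m) (Sum.inl k) := hz ▸ h
        have : (u : Fin a ⊕ Fin m) ∈ G.neighborSet (Sum.inl k) := hadj.symm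
        rcases hk.1 this with hui | huj
        · exact SimpleGraph.Adj.reachable
            (show (G.induce D').Adj ⟨(u : Fin a ⊕ Fin m), u.2, hx⟩ ⟨Sum.inl i, hiD'⟩ from hui.symm)
        · refine SimpleGraph.Adj.reachable
            (show (G.induce D').Adj ⟨(u : Fin a ⊕ Fin m), u.2, hx⟩ ⟨Sum.inl j, hjD'⟩ from huj.symm)
            |>.trans ?_
          refine SimpleGraph.Adj.reachable
            (show (G.induce D').Adj ⟨Sum.inl j, hjD'⟩ ⟨w, hwD'⟩ from hwj) |>.trans ?_
          exact SimpleGraph.Adj.reachable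
            (show (G.induce D').Adj ⟨w, hwD'⟩ ⟨Sum.inl i, hiD'⟩ from hwi.symm)
      · refine SimpleGraph.Adj.reachable
          (show (G.induce D').Adj ⟨(u : Fin a ⊕ Fin m), u.2, hx⟩ ⟨(z : Fin a ⊕ Fin m), z.2, hz⟩ from h)
          |>.trans (ih hy hz)
  -- connectivity of D'
  have hconn : (G.induce D').Connected := by
    rw [SimpleGraph.connected_iff]
    refine ⟨?_, ⟨⟨Sum.inl i, hiD'⟩⟩⟩
    intro x y
    have hx : (G.induce D').Reachable x ⟨Sum.inl i, hiD'⟩ := by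
      obtain ⟨p⟩ := hD.1.2.preconnected ⟨(x : Fin a ⊕ Fin m), x.2.1⟩ ⟨Sum.inl i, hiD⟩
      exact key _ _ p rfl x.2.2
    have hy : (G.induce D').Reachable y ⟨Sum.inl i, hiD'⟩ := by
      obtain ⟨p⟩ := hD.1.2.preconnected ⟨(y : Fin a ⊕ Fin m), y.2.1⟩ ⟨Sum.inl i, hiD⟩
      exact key _ _ p rfl y.2.2
    exact hx.trans hy.symm
  exact hD.2 D' (Set.sdiff_singleton_ssubset.mpr hkD) ⟨hdom, hconn⟩
end

section
/- Let G = (U, W, E) be a convex bipartite graph with |U| ≥ 2 and |W| ≥ 2, and let D be a minimal connected dominating set of G. Let i, j ∈ D ∩ U with N(i) ∩ N(j) ≠ ∅. Then there is at most one vertex k ∈ D ∩ U with k ∉ {i, j} such that N(k) is a proper subset of N(i) ∪ N(j). -/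
open SimpleGraph

section Aux

lemma induce_to_walk {V : Type*} {G : SimpleGraph V} {S : Set V} :
    ∀ {x y : ↥S} (_ : (G.induce S).Walk x y),
      ∃ q : G.Walk x.1 y.1, ∀ z ∈ q.support, z ∈ S := by
  intro x y p
  induction p with
  | nil =>
    refine ⟨Walk.nil, ?_⟩
    intro z hz
    simp only [Walk.support_nil, List.mem_singleton] at hz
    exact hz ▸ Subtype.coe_prop _
  | @cons u v w h p ih =>
    obtain ⟨q, hq⟩ := ih
    refine ⟨Walk.cons (show G.Adj u.1 v.1 from h) q, ?_⟩
    intro z hz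
    rw [Walk.support_cons, List.mem_cons] at hz
    rcases hz with hz | hz
    · exact hz ▸ Subtype.coe_prop _
    · exact hq z hz

lemma walk_to_induce {V : Type*} {G : SimpleGraph V} {S : Set V} :
    ∀ {x y : V} (p : G.Walk x y), (∀ z ∈ p.support, z ∈ S) →
      ∀ (hx : x ∈ S) (hy : y ∈ S), (G.induce S).Reachable ⟨x, hx⟩ ⟨y, hy⟩ := by
  intro x y p
  induction p with
  | nil => intro _ hx hy; exact Reachable.refl _
  | @cons u v w h p ih =>
    intro hp hx hy
    have hv : v ∈ S := hp v (by rw [Walk.support_cons]; exact List.mem_cons_of_mem _ p.start_mem_support)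
    have hadj : (G.induce S).Adj ⟨u, hx⟩ ⟨v, hv⟩ := h
    exact (hadj.reachable).trans
      (ih (fun z hz => hp z (by rw [Walk.support_cons]; exact List.mem_cons_of_mem _ hz)) hv hy)

lemma reroute {V : Type*} {G : SimpleGraph V} {D : Set V} {I J K : V}
    (hI : I ∈ D) (hJ : J ∈ D) (hKI : K ≠ I) (hKJ : K ≠ J)
    (hF : ∀ w, G.Adj K w → G.Adj I w ∨ G.Adj J w) :
    ∀ {x t : V} (p : G.Walk x t), t = I → (∀ z ∈ p.support, z ∈ D) → x ≠ K →
      ∃ z, (z = I ∨ z = J) ∧ ∃ q : G.Walk x z, ∀ y ∈ q.support, y ∈ D ∧ y ≠ K := by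
  intro x t p
  induction p with
  | nil =>
    rintro rfl _ hx
    refine ⟨_, Or.inl rfl, Walk.nil, ?_⟩
    intro y hy
    simp only [Walk.support_nil, List.mem_singleton] at hy
    subst hy
    exact ⟨hI, fun h => hKI h.symm⟩
  | @cons u v w h p ih =>
    rintro rfl hp hx
    have huD : u ∈ D := hp u (Walk.start_mem_support _)
    by_cases hv : v = K
    · subst hv
      rcases hF u h.symm with hIu | hJu
      · refine ⟨_, Or.inl rfl, Walk.cons hIu.symm Walk.nil, ?_⟩
        intro y hy
        simp only [Walk.support_cons, Walk.support_nil, List.mem_cons, List.mem_singleton,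
          List.not_mem_nil, or_false] at hy
        rcases hy with rfl | rfl
        · exact ⟨huD, hx⟩
        · exact ⟨hI, fun hh => hKI hh.symm⟩
      · refine ⟨_, Or.inr rfl, Walk.cons hJu.symm Walk.nil, ?_⟩
        intro y hy
        simp only [Walk.support_cons, Walk.support_nil, List.mem_cons, List.mem_singleton,
          List.not_mem_nil, or_false] at hy
        rcases hy with rfl | rfl
        · exact ⟨huD, hx⟩
        · exact ⟨hJ, fun hh => hKJ hh.symm⟩
    · obtain ⟨z, hz, q, hq⟩ := ih rfl
        (fun y hy => hp y (by rw [Walk.support_cons]; exact List.mem_cons_of_mem _ hy)) hv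
      refine ⟨z, hz, Walk.cons h q, ?_⟩
      intro y hy
      rw [Walk.support_cons, List.mem_cons] at hy
      rcases hy with rfl | hy
      · exact ⟨huD, hx⟩
      · exact hq y hy

lemma remove_vertex_CDS {V : Type*} {G : SimpleGraph V} {D : Set V} {I J K : V}
    (hD : IsMinimalCDS G D) (hI : I ∈ D) (hJ : J ∈ D) (hK : K ∈ D)
    (hKI : K ≠ I) (hKJ : K ≠ J)
    (hF : ∀ w, G.Adj K w → G.Adj I w ∨ G.Adj J w)
    (p₀ : G.Walk I J) (hp₀D : ∀ z ∈ p₀.support, z ∈ D) (hp₀K : K ∉ p₀.support) :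
    False := by
  classical
  set D' : Set V := D \ {K} with hD'def
  have hmemD' : ∀ z, z ∈ D → z ≠ K → z ∈ D' := fun z h1 h2 => ⟨h1, h2⟩
  have hID' : I ∈ D' := hmemD' I hI hKI.symm
  have hJD' : J ∈ D' := hmemD' J hJ hKJ.symm
  have hp₀D' : ∀ z ∈ p₀.support, z ∈ D' :=
    fun z hz => hmemD' z (hp₀D z hz) (fun h => hp₀K (h ▸ hz))
  -- every vertex of D' has a D'-supported walk to I
  have key : ∀ x, x ∈ D' → ∃ q : G.Walk x I, ∀ z ∈ q.support, z ∈ D' := by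
    intro x hx
    obtain ⟨w⟩ := hD.1.2.preconnected ⟨x, hx.1⟩ ⟨I, hI⟩
    obtain ⟨q, hq⟩ := induce_to_walk w
    obtain ⟨z, hz, r, hr⟩ := reroute hI hJ hKI hKJ hF q rfl hq hx.2
    rcases hz with rfl | rfl
    · exact ⟨r, fun y hy => hmemD' y (hr y hy).1 (hr y hy).2⟩
    · refine ⟨r.append p₀.reverse, ?_⟩
      intro y hy
      rw [Walk.mem_support_append_iff] at hy
      rcases hy with hy | hy
      · exact hmemD' y (hr y hy).1 (hr y hy).2
      · rw [Walk.support_reverse, List.mem_reverse] at hy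
        exact hp₀D' y hy
  have hconn : (G.induce D').Connected := by
    have hne : Nonempty ↥D' := ⟨⟨I, hID'⟩⟩
    refine ⟨?_⟩
    rintro ⟨u, hu⟩ ⟨v, hv⟩
    obtain ⟨qu, hqu⟩ := key u hu
    obtain ⟨qv, hqv⟩ := key v hv
    refine walk_to_induce (qu.append qv.reverse) ?_ hu hv
    intro z hz
    rw [Walk.mem_support_append_iff] at hz
    rcases hz with hz | hz
    · exact hqu z hz
    · rw [Walk.support_reverse, List.mem_reverse] at hz
      exact hqv z hz
  have hdom : IsDominatingSet G D' := by
    intro v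
    by_cases hvK : v = K
    · subst hvK
      obtain ⟨w⟩ := hD.1.2.preconnected ⟨v, hK⟩ ⟨I, hI⟩
      obtain ⟨q, hq⟩ := induce_to_walk w
      cases q with
      | nil => exact absurd rfl hKI
      | @cons _ u _ h q' =>
        refine Or.inr ⟨u, hmemD' u
          (hq u (by rw [Walk.support_cons]; exact List.mem_cons_of_mem _ q'.start_mem_support))
          h.ne.symm, h.symm⟩
    · rcases hD.1.1 v with hv | ⟨u, huD, hadj⟩
      · exact Or.inl (hmemD' v hv hvK)
      · by_cases huK : u = K
        · subst huK
          rcases hF v hadj with hIv | hJv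
          · exact Or.inr ⟨I, hID', hIv⟩
          · exact Or.inr ⟨J, hJD', hJv⟩
        · exact Or.inr ⟨u, hmemD' u huD huK, hadj⟩
  exact hD.2 D' ((Set.ssubset_iff_of_subset Set.diff_subset).mpr ⟨K, hK, fun h => h.2 rfl⟩)
    ⟨hdom, hconn⟩

lemma scan {V : Type*} {G : SimpleGraph V} {D : Set V} {I J K₁ K₂ : V}
    (hI : I ∈ D) (hJ : J ∈ D)
    (hIK₁ : I ≠ K₁) (hIK₂ : I ≠ K₂) (hJK₁ : J ≠ K₁) (hJK₂ : J ≠ K₂) (h12 : K₁ ≠ K₂)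
    (hF₁ : ∀ w, G.Adj K₁ w → (G.Adj I w ∨ G.Adj J w) ∧ w ≠ K₂)
    (hF₂ : ∀ w, G.Adj K₂ w → (G.Adj I w ∨ G.Adj J w) ∧ w ≠ K₁) :
    ∀ n : ℕ, ∀ {x t : V} (p : G.Walk x t), t = J → p.length ≤ n →
      (∀ z ∈ p.support, z ∈ D) →
      ∀ (pre : G.Walk I x), (∀ z ∈ pre.support, z ∈ D) →
        K₁ ∉ pre.support → K₂ ∉ pre.support →
      (∃ q : G.Walk I J, (∀ z ∈ q.support, z ∈ D) ∧ K₁ ∉ q.support) ∨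
      (∃ q : G.Walk I J, (∀ z ∈ q.support, z ∈ D) ∧ K₂ ∉ q.support) := by
  intro n
  induction n with
  | zero =>
    intro x t p hE hlen hp pre hpre h1 h2
    subst hE
    cases p with
    | nil => exact Or.inl ⟨pre, hpre, h1⟩
    | cons h p' => simp [Walk.length_cons] at hlen
  | succ n ih =>
    intro x t p hE hlen hp pre hpre h1 h2
    subst hE
    have hxK₁ : x ≠ K₁ := fun hh => h1 (hh ▸ pre.end_mem_support)
    have hxK₂ : x ≠ K₂ := fun hh => h2 (hh ▸ pre.end_mem_support)
    cases p with
    | nil => exact Or.inl ⟨pre, hpre, h1⟩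
    | @cons _ v _ h p' =>
      by_cases hv1 : v = K₁
      · subst v
        cases p' with
        | nil => exact absurd rfl hJK₁.symm
        | @cons _ w' _ h₂ p'' =>
          obtain ⟨hIJw', hw'K₂⟩ := hF₁ w' h₂
          have hw'K₁ : w' ≠ K₁ := fun hh => h₂.ne hh.symm
          have hw'D : w' ∈ D := hp w' (by
            rw [Walk.support_cons, Walk.support_cons]
            exact List.mem_cons_of_mem _ (List.mem_cons_of_mem _ p''.start_mem_support))
          rcases hIJw' with hIw' | hJw'
          · -- restart from I through w'
            refine ih p'' rfl ?_ ?_ (Walk.cons hIw' Walk.nil) ?_ ?_ ?_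
            · simp only [Walk.length_cons] at hlen ⊢; omega
            · intro z hz
              exact hp z (by
                rw [Walk.support_cons, Walk.support_cons]
                exact List.mem_cons_of_mem _ (List.mem_cons_of_mem _ hz))
            · intro z hz
              simp only [Walk.support_cons, Walk.support_nil, List.mem_cons,
                List.mem_singleton, List.not_mem_nil, or_false] at hz
              rcases hz with rfl | rfl
              · exact hI
              · exact hw'D
            · intro hz
              simp only [Walk.support_cons, Walk.support_nil, List.mem_cons,
                List.mem_singleton, List.not_mem_nil, or_false] at hz
              rcases hz with hz | hz
              · exact hIK₁ hz.symm
              · exact hw'K₁ hz.symm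
            · intro hz
              simp only [Walk.support_cons, Walk.support_nil, List.mem_cons,
                List.mem_singleton, List.not_mem_nil, or_false] at hz
              rcases hz with hz | hz
              · exact hIK₂ hz.symm
              · exact hw'K₂ hz.symm
          · -- direct connection avoiding K₂
            have hvD : K₁ ∈ D := hp K₁ (by
              rw [Walk.support_cons]
              exact List.mem_cons_of_mem _ (Walk.start_mem_support _))
            have hxD : x ∈ D := hp x (Walk.start_mem_support _)
            refine Or.inr ⟨pre.append (Walk.cons h (Walk.cons h₂ (Walk.cons hJw'.symm Walk.nil))), ?_, ?_⟩
            · intro z hz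
              rw [Walk.mem_support_append_iff] at hz
              rcases hz with hz | hz
              · exact hpre z hz
              · simp only [Walk.support_cons, Walk.support_nil, List.mem_cons,
                  List.mem_singleton, List.not_mem_nil, or_false] at hz
                rcases hz with rfl | rfl | rfl | rfl
                · exact hxD
                · exact hvD
                · exact hw'D
                · exact hJ
            · intro hz
              rw [Walk.mem_support_append_iff] at hz
              rcases hz with hz | hz
              · exact h2 hz
              · simp only [Walk.support_cons, Walk.support_nil, List.mem_cons,
                  List.mem_singleton, List.not_mem_nil, or_false] at hz
                rcases hz with hz | hz | hz | hz
                · exact hxK₂ hz.symm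
                · exact h12 hz.symm
                · exact hw'K₂ hz.symm
                · exact hJK₂ hz.symm
      · by_cases hv2 : v = K₂
        · subst v
          cases p' with
          | nil => exact absurd rfl hJK₂.symm
          | @cons _ w' _ h₂ p'' =>
            obtain ⟨hIJw', hw'K₁⟩ := hF₂ w' h₂
            have hw'K₂ : w' ≠ K₂ := fun hh => h₂.ne hh.symm
            have hw'D : w' ∈ D := hp w' (by
              rw [Walk.support_cons, Walk.support_cons]
              exact List.mem_cons_of_mem _ (List.mem_cons_of_mem _ p''.start_mem_support))
            rcases hIJw' with hIw' | hJw'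
            · refine ih p'' rfl ?_ ?_ (Walk.cons hIw' Walk.nil) ?_ ?_ ?_
              · simp only [Walk.length_cons] at hlen ⊢; omega
              · intro z hz
                exact hp z (by
                  rw [Walk.support_cons, Walk.support_cons]
                  exact List.mem_cons_of_mem _ (List.mem_cons_of_mem _ hz))
              · intro z hz
                simp only [Walk.support_cons, Walk.support_nil, List.mem_cons,
                  List.mem_singleton, List.not_mem_nil, or_false] at hz
                rcases hz with rfl | rfl
                · exact hI
                · exact hw'D
              · intro hz
                simp only [Walk.support_cons, Walk.support_nil, List.mem_cons,
                  List.mem_singleton, List.not_mem_nil, or_false] at hz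
                rcases hz with hz | hz
                · exact hIK₁ hz.symm
                · exact hw'K₁ hz.symm
              · intro hz
                simp only [Walk.support_cons, Walk.support_nil, List.mem_cons,
                  List.mem_singleton, List.not_mem_nil, or_false] at hz
                rcases hz with hz | hz
                · exact hIK₂ hz.symm
                · exact hw'K₂ hz.symm
            · have hvD : K₂ ∈ D := hp K₂ (by
                rw [Walk.support_cons]
                exact List.mem_cons_of_mem _ (Walk.start_mem_support _))
              have hxD : x ∈ D := hp x (Walk.start_mem_support _)
              refine Or.inl ⟨pre.append (Walk.cons h (Walk.cons h₂ (Walk.cons hJw'.symm Walk.nil))), ?_, ?_⟩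
              · intro z hz
                rw [Walk.mem_support_append_iff] at hz
                rcases hz with hz | hz
                · exact hpre z hz
                · simp only [Walk.support_cons, Walk.support_nil, List.mem_cons,
                    List.mem_singleton, List.not_mem_nil, or_false] at hz
                  rcases hz with rfl | rfl | rfl | rfl
                  · exact hxD
                  · exact hvD
                  · exact hw'D
                  · exact hJ
              · intro hz
                rw [Walk.mem_support_append_iff] at hz
                rcases hz with hz | hz
                · exact h1 hz
                · simp only [Walk.support_cons, Walk.support_nil, List.mem_cons,
                    List.mem_singleton, List.not_mem_nil, or_false] at hz
                  rcases hz with hz | hz | hz | hz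
                  · exact hxK₁ hz.symm
                  · exact h12 hz
                  · exact hw'K₁ hz.symm
                  · exact hJK₁ hz.symm
        · -- v is neither K₁ nor K₂: extend the prefix
          have hvD : v ∈ D := hp v (by
            rw [Walk.support_cons]
            exact List.mem_cons_of_mem _ (Walk.start_mem_support _))
          have hxD : x ∈ D := hp x (Walk.start_mem_support _)
          refine ih p' rfl ?_ ?_ (pre.append (Walk.cons h Walk.nil)) ?_ ?_ ?_
          · simp only [Walk.length_cons] at hlen ⊢; omega
          · intro z hz
            exact hp z (by rw [Walk.support_cons]; exact List.mem_cons_of_mem _ hz)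
          · intro z hz
            rw [Walk.mem_support_append_iff] at hz
            rcases hz with hz | hz
            · exact hpre z hz
            · simp only [Walk.support_cons, Walk.support_nil, List.mem_cons,
                List.mem_singleton, List.not_mem_nil, or_false] at hz
              rcases hz with rfl | rfl
              · exact hxD
              · exact hvD
          · intro hz
            rw [Walk.mem_support_append_iff] at hz
            rcases hz with hz | hz
            · exact h1 hz
            · simp only [Walk.support_cons, Walk.support_nil, List.mem_cons,
                List.mem_singleton, List.not_mem_nil, or_false] at hz
              rcases hz with hz | hz
              · exact hxK₁ hz.symm
              · exact hv1 hz.symm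
          · intro hz
            rw [Walk.mem_support_append_iff] at hz
            rcases hz with hz | hz
            · exact h2 hz
            · simp only [Walk.support_cons, Walk.support_nil, List.mem_cons,
                List.mem_singleton, List.not_mem_nil, or_false] at hz
              rcases hz with hz | hz
              · exact hxK₂ hz.symm
              · exact hv2 hz.symm

end Aux

/-- In a convex bipartite graph with `|U| ≥ 2` and `|W| ≥ 2`, if `D` is a minimal
connected dominating set and `i, j ∈ D ∩ U` satisfy `N(i) ∩ N(j) ≠ ∅`, then there is
at most one vertex `k ∈ D ∩ U`, `k ∉ {i, j}`, with `N(k)` a proper subset of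
`N(i) ∪ N(j)`. -/
theorem mcds_at_most_one_inside {a m : ℕ} (ha : 2 ≤ a) (hm : 2 ≤ m)
    (G : SimpleGraph (Fin a ⊕ Fin m)) (hG : ConvexBipartite G)
    (D : Set (Fin a ⊕ Fin m)) (hD : IsMinimalCDS G D)
    (i j : Fin a) (hiD : Sum.inl i ∈ D) (hjD : Sum.inl j ∈ D)
    (hinter : (G.neighborSet (Sum.inl i) ∩ G.neighborSet (Sum.inl j)).Nonempty) :
    ∀ k₁ k₂ : Fin a,
      Sum.inl k₁ ∈ D → k₁ ≠ i → k₁ ≠ j →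
      G.neighborSet (Sum.inl k₁) ⊂
        G.neighborSet (Sum.inl i) ∪ G.neighborSet (Sum.inl j) →
      Sum.inl k₂ ∈ D → k₂ ≠ i → k₂ ≠ j →
      G.neighborSet (Sum.inl k₂) ⊂
        G.neighborSet (Sum.inl i) ∪ G.neighborSet (Sum.inl j) →
      k₁ = k₂ := by
  intro k₁ k₂ hk1D h1i h1j hsub1 hk2D h2i h2j hsub2
  by_contra hne
  have h12 : (Sum.inl k₁ : Fin a ⊕ Fin m) ≠ Sum.inl k₂ := fun h => hne (Sum.inl.inj h)
  have hK1I : (Sum.inl k₁ : Fin a ⊕ Fin m) ≠ Sum.inl i := fun h => h1i (Sum.inl.inj h)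
  have hK1J : (Sum.inl k₁ : Fin a ⊕ Fin m) ≠ Sum.inl j := fun h => h1j (Sum.inl.inj h)
  have hK2I : (Sum.inl k₂ : Fin a ⊕ Fin m) ≠ Sum.inl i := fun h => h2i (Sum.inl.inj h)
  have hK2J : (Sum.inl k₂ : Fin a ⊕ Fin m) ≠ Sum.inl j := fun h => h2j (Sum.inl.inj h)
  have hF₁ : ∀ w, G.Adj (Sum.inl k₁) w →
      (G.Adj (Sum.inl i) w ∨ G.Adj (Sum.inl j) w) ∧ w ≠ Sum.inl k₂ := by
    intro w hw
    have hmem : w ∈ G.neighborSet (Sum.inl i) ∪ G.neighborSet (Sum.inl j) := hsub1.subset hw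
    refine ⟨hmem, ?_⟩
    rintro rfl
    exact hG.1 _ _ hw
  have hF₂ : ∀ w, G.Adj (Sum.inl k₂) w →
      (G.Adj (Sum.inl i) w ∨ G.Adj (Sum.inl j) w) ∧ w ≠ Sum.inl k₁ := by
    intro w hw
    have hmem : w ∈ G.neighborSet (Sum.inl i) ∪ G.neighborSet (Sum.inl j) := hsub2.subset hw
    refine ⟨hmem, ?_⟩
    rintro rfl
    exact hG.1 _ _ hw
  obtain ⟨w0⟩ := hD.1.2.preconnected ⟨Sum.inl i, hiD⟩ ⟨Sum.inl j, hjD⟩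
  obtain ⟨p0, hp0⟩ := induce_to_walk w0
  have hnil1 : (Sum.inl k₁ : Fin a ⊕ Fin m) ∉ (Walk.nil : G.Walk (Sum.inl i) (Sum.inl i)).support := by
    simp only [Walk.support_nil, List.mem_singleton]
    exact hK1I
  have hnil2 : (Sum.inl k₂ : Fin a ⊕ Fin m) ∉ (Walk.nil : G.Walk (Sum.inl i) (Sum.inl i)).support := by
    simp only [Walk.support_nil, List.mem_singleton]
    exact hK2I
  have hnilD : ∀ z ∈ (Walk.nil : G.Walk (Sum.inl i) (Sum.inl i)).support, z ∈ D := by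
    intro z hz
    simp only [Walk.support_nil, List.mem_singleton] at hz
    exact hz ▸ hiD
  rcases scan hiD hjD hK1I.symm hK2I.symm hK1J.symm hK2J.symm h12 hF₁ hF₂
      p0.length p0 rfl le_rfl hp0 Walk.nil hnilD hnil1 hnil2 with
    ⟨q, hqD, hq1⟩ | ⟨q, hqD, hq2⟩
  · exact remove_vertex_CDS hD hiD hjD hk1D hK1I hK1J (fun w hw => (hF₁ w hw).1) q hqD hq1
  · exact remove_vertex_CDS hD hiD hjD hk2D hK2I hK2J (fun w hw => (hF₂ w hw).1) q hqD hq2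
end

section
/- There exists a constant C > 0 such that for every positive integer n, every convex bipartite graph on n vertices has at most C · 1.7254^n minimal connected dominating sets. -/
namespace MCDS

/-- minimum of a finset of naturals, with default value for the empty set -/
noncomputable def fmin (s : Finset ℕ) (d : ℕ) : ℕ := if h : s.Nonempty then s.min' h else d

lemma fmin_le {s : Finset ℕ} {d x : ℕ} (hx : x ∈ s) : fmin s d ≤ x := by
  rw [fmin, dif_pos ⟨x, hx⟩]; exact Finset.min'_le s x hx

lemma le_fmin {s : Finset ℕ} {d b : ℕ} (hd : b ≤ d) (h : ∀ x ∈ s, b ≤ x) : b ≤ fmin s d := by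
  rw [fmin]; split
  · next hne => exact h _ (s.min'_mem hne)
  · exact hd

lemma fmin_le_of {s : Finset ℕ} {d b : ℕ} (hd : d ≤ b) (h : ∀ x ∈ s, x ≤ b) : fmin s d ≤ b := by
  rw [fmin]; split
  · next hne => exact h _ (s.min'_mem hne)
  · exact hd

noncomputable def fmax (s : Finset ℕ) (d : ℕ) : ℕ := if h : s.Nonempty then s.max' h else d

lemma le_fmax {s : Finset ℕ} {d x : ℕ} (hx : x ∈ s) : x ≤ fmax s d := by
  rw [fmax, dif_pos ⟨x, hx⟩]; exact Finset.le_max' s x hx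

lemma fmax_le {s : Finset ℕ} {d b : ℕ} (hd : d ≤ b) (h : ∀ x ∈ s, x ≤ b) : fmax s d ≤ b := by
  rw [fmax]; split
  · next hne => exact h _ (s.max'_mem hne)
  · exact hd

/-! ### Numeric facts -/

lemma pow_ge (W : ℕ) (hW : 1 ≤ W) : (W : ℝ) + 1/14 ≤ (1.48:ℝ)^W := by
  induction W with
  | zero => omega
  | succ n ih =>
    rcases Nat.lt_or_ge n 3 with h3 | h3
    · interval_cases n <;> norm_num
    · have hn : 1 ≤ n := by omega
      have h := ih hn
      have h2 : ((n:ℝ) + 1/14) * 1.48 ≥ (n:ℝ) + 1 + 1/14 := by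
        have : (3:ℝ) ≤ n := by exact_mod_cast h3
        nlinarith
      calc ((n+1:ℕ):ℝ) + 1/14 = (n:ℝ) + 1 + 1/14 := by push_cast; ring
        _ ≤ ((n:ℝ) + 1/14) * 1.48 := h2
        _ ≤ (1.48:ℝ)^n * 1.48 := by nlinarith [pow_nonneg (by norm_num : (0:ℝ) ≤ 1.48) n]
        _ = (1.48:ℝ)^(n+1) := by ring

lemma key_ineq (W ν : ℕ) (hW : 1 ≤ W) (hWv : W ≤ ν) :
    1 + (W:ℝ) * (14 * 1.48^(ν - W)) ≤ 14 * 1.48^ν := by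
  have hX : (1:ℝ) ≤ 1.48^(ν - W) := one_le_pow₀ (by norm_num)
  have hcW : ((W:ℝ) + 1/14) ≤ (1.48:ℝ)^W := pow_ge W hW
  have hsplit : (1.48:ℝ)^ν = 1.48^(ν - W) * 1.48^W := by
    rw [← pow_add]; congr 1; omega
  rw [hsplit]
  have hWpos : (0:ℝ) ≤ W := by positivity
  nlinarith [pow_nonneg (by norm_num : (0:ℝ) ≤ 1.48) W]

end MCDS

namespace MCDS

/-! ### Abstract chain-counting lemma -/

section Chain

set_option linter.unusedSectionVars false

variable {β : Type*} [DecidableEq β] (κ : β → ℕ) (window : List β → Finset β)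

/-- the κ-minimal element of a nonempty finset -/
noncomputable def pick (C : Finset β) (h : C.Nonempty) : β :=
  (Finset.exists_min_image C κ h).choose

lemma pick_mem (C : Finset β) (h : C.Nonempty) : pick κ C h ∈ C :=
  (Finset.exists_min_image C κ h).choose_spec.1

lemma pick_min (C : Finset β) (h : C.Nonempty) : ∀ y ∈ C, κ (pick κ C h) ≤ κ y :=
  (Finset.exists_min_image C κ h).choose_spec.2

lemma pick_eq (hκ : Function.Injective κ) (C : Finset β) (h : C.Nonempty)
    {x : β} (hx : x ∈ C) (hmin : ∀ y ∈ C, κ x ≤ κ y) : x = pick κ C h :=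
  hκ (le_antisymm (hmin _ (pick_mem κ C h)) (pick_min κ C h _ hx))

/-- `C` can be peeled from below (in `κ`-order) following the windows, starting
after prefix `pfx` (most recent first). -/
noncomputable def IsChainAux (pfx : List β) (C : Finset β) : Prop :=
  if h : C.Nonempty then
    pick κ C h ∈ window pfx ∧ IsChainAux (pick κ C h :: pfx) (C.erase (pick κ C h))
  else True
termination_by C.card
decreasing_by exact Finset.card_erase_lt_of_mem (pick_mem κ C h)

lemma isChainAux_empty (pfx : List β) : IsChainAux κ window pfx ∅ := by
  rw [IsChainAux]; simp

lemma isChainAux_nonempty {pfx : List β} {C : Finset β} (h : C.Nonempty)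
    (hch : IsChainAux κ window pfx C) :
    pick κ C h ∈ window pfx ∧ IsChainAux κ window (pick κ C h :: pfx) (C.erase (pick κ C h)) := by
  rw [IsChainAux, dif_pos h] at hch; exact hch

/-- build a chain certificate from an invariant -/
lemma isChainAux_of_inv (P : List β → Finset β → Prop)
    (hstep : ∀ pfx C (h : C.Nonempty), P pfx C →
      pick κ C h ∈ window pfx ∧ P (pick κ C h :: pfx) (C.erase (pick κ C h))) :
    ∀ (N : ℕ) (C : Finset β), C.card ≤ N → ∀ pfx, P pfx C → IsChainAux κ window pfx C := by
  intro N
  induction N with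
  | zero =>
    intro C hC pfx _
    have : C = ∅ := Finset.card_eq_zero.1 (by omega)
    subst this; exact isChainAux_empty κ window pfx
  | succ N ih =>
    intro C hC pfx hP
    by_cases h : C.Nonempty
    · rw [IsChainAux, dif_pos h]
      obtain ⟨h1, h2⟩ := hstep pfx C h hP
      refine ⟨h1, ih _ ?_ _ h2⟩
      have := Finset.card_erase_lt_of_mem (pick_mem κ C h)
      omega
    · rw [Finset.not_nonempty_iff_eq_empty] at h
      subst h; exact isChainAux_empty κ window pfx

variable [Fintype β] (A : List β → ℕ)

/-- remaining capacity -/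
noncomputable def νcap (pfx : List β) : ℕ :=
  (Finset.univ.filter (fun v => A pfx ≤ κ v)).card

variable (hwin : ∀ pfx, ∀ x ∈ window pfx, A pfx ≤ κ x)
  (hstep : ∀ pfx, ∀ x ∈ window pfx, ∀ y ∈ window pfx, ¬ (A (x :: pfx) ≤ κ y))
  (hmono : ∀ pfx, ∀ x ∈ window pfx, A pfx ≤ A (x :: pfx))

include hwin hstep hmono in
lemma nu_step {pfx : List β} {x : β} (hx : x ∈ window pfx) :
    νcap κ A (x :: pfx) ≤ νcap κ A pfx - (window pfx).card := by
  have hsub : Finset.univ.filter (fun v => A (x :: pfx) ≤ κ v) ⊆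
      (Finset.univ.filter (fun v => A pfx ≤ κ v)) \ window pfx := by
    intro v hv
    rw [Finset.mem_filter] at hv
    rw [Finset.mem_sdiff, Finset.mem_filter]
    refine ⟨⟨Finset.mem_univ _, le_trans (hmono pfx x hx) hv.2⟩, fun hvw => ?_⟩
    exact hstep pfx x hx v hvw hv.2
  calc νcap κ A (x :: pfx) ≤ ((Finset.univ.filter (fun v => A pfx ≤ κ v)) \ window pfx).card :=
        Finset.card_le_card hsub
    _ = νcap κ A pfx - (window pfx).card := by
        rw [Finset.card_sdiff_of_subset (fun y hy => Finset.mem_filter.2 ⟨Finset.mem_univ _, hwin pfx y hy⟩)]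
        rfl

include hwin hstep hmono in
lemma chain_count (hκ : Function.Injective κ) :
    ∀ (n : ℕ) (pfx : List β), νcap κ A pfx ≤ n →
    ∀ (𝒞 : Finset (Finset β)), (∀ C ∈ 𝒞, IsChainAux κ window pfx C) →
    (𝒞.card : ℝ) ≤ 14 * 1.48 ^ (νcap κ A pfx) := by
  intro n
  induction n with
  | zero =>
    intro pfx hν 𝒞 h𝒞
    -- window pfx must be empty-effective: any nonempty C has pick ∈ window with A pfx ≤ κ, so ν ≥ 1
    have hone : ∀ C ∈ 𝒞, C = ∅ := by
      intro C hC
      by_contra hne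
      have hCne : C.Nonempty := Finset.nonempty_iff_ne_empty.2 hne
      have := (isChainAux_nonempty κ window hCne (h𝒞 C hC)).1
      have hk : A pfx ≤ κ (pick κ C hCne) := hwin pfx _ this
      have : pick κ C hCne ∈ Finset.univ.filter (fun v => A pfx ≤ κ v) := by
        rw [Finset.mem_filter]; exact ⟨Finset.mem_univ _, hk⟩
      have : 1 ≤ νcap κ A pfx := Finset.card_pos.2 ⟨_, this⟩
      omega
    have : 𝒞 ⊆ {∅} := fun C hC => by simp [hone C hC]
    have hcard : 𝒞.card ≤ 1 := le_trans (Finset.card_le_card this) (by simp)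
    have h1 : (1:ℝ) ≤ 14 * 1.48 ^ (νcap κ A pfx) := by
      have : (1:ℝ) ≤ 1.48 ^ (νcap κ A pfx) := one_le_pow₀ (by norm_num)
      nlinarith
    calc (𝒞.card : ℝ) ≤ 1 := by exact_mod_cast hcard
      _ ≤ _ := h1
  | succ n ih =>
    intro pfx hν 𝒞 h𝒞
    classical
    -- split off the empty chain
    by_cases hallempty : ∀ C ∈ 𝒞, C = ∅
    · have : 𝒞 ⊆ {∅} := fun C hC => by simp [hallempty C hC]
      have hcard : 𝒞.card ≤ 1 := le_trans (Finset.card_le_card this) (by simp)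
      have h1 : (1:ℝ) ≤ 14 * 1.48 ^ (νcap κ A pfx) := by
        have : (1:ℝ) ≤ 1.48 ^ (νcap κ A pfx) := one_le_pow₀ (by norm_num)
        nlinarith
      calc (𝒞.card : ℝ) ≤ 1 := by exact_mod_cast hcard
        _ ≤ _ := h1
    · push_neg at hallempty
      obtain ⟨C₀, hC₀, hC₀ne⟩ := hallempty
      have hβ : Nonempty β := ⟨hC₀ne.choose⟩
      -- the "first element" function
      set f : Finset β → β := fun C =>
        if h : C.Nonempty then pick κ C h else Classical.arbitrary β with hf
      set 𝒞' := 𝒞.erase ∅ with h𝒞'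
      have hmem : ∀ C ∈ 𝒞', f C ∈ window pfx := by
        intro C hC
        have hCne : C.Nonempty := Finset.nonempty_iff_ne_empty.2 (Finset.mem_erase.1 hC).1
        rw [hf]; simp only [dif_pos hCne]
        exact (isChainAux_nonempty κ window hCne (h𝒞 C (Finset.mem_erase.1 hC).2)).1
      have hWpos : (window pfx).Nonempty := by
        refine ⟨f C₀, hmem C₀ ?_⟩
        exact Finset.mem_erase.2 ⟨hC₀ne.ne_empty, hC₀⟩
      set W := (window pfx).card with hW
      have hW1 : 1 ≤ W := Finset.card_pos.2 hWpos
      -- fiberwise count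
      have hsum : 𝒞'.card = ∑ x ∈ window pfx, (𝒞'.filter (fun C => f C = x)).card :=
        Finset.card_eq_sum_card_fiberwise hmem
      -- each fiber
      have hfiber : ∀ x ∈ window pfx,
          ((𝒞'.filter (fun C => f C = x)).card : ℝ) ≤ 14 * 1.48 ^ (νcap κ A pfx - W) := by
        intro x hxw
        set cls := 𝒞'.filter (fun C => f C = x) with hcls
        set img := cls.image (fun C => C.erase x) with himg
        have hinj : Set.InjOn (fun C : Finset β => C.erase x) ↑cls := by
          intro C1 h1 C2 h2 heq
          have hx1 : x ∈ C1 := by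
            have h1' := Finset.mem_filter.1 h1
            have hne : C1.Nonempty :=
              Finset.nonempty_iff_ne_empty.2 (Finset.mem_erase.1 h1'.1).1
            have := pick_mem κ C1 hne
            rw [show pick κ C1 hne = f C1 by rw [hf]; simp [dif_pos hne], h1'.2] at this
            exact this
          have hx2 : x ∈ C2 := by
            have h2' := Finset.mem_filter.1 h2
            have hne : C2.Nonempty :=
              Finset.nonempty_iff_ne_empty.2 (Finset.mem_erase.1 h2'.1).1
            have := pick_mem κ C2 hne
            rw [show pick κ C2 hne = f C2 by rw [hf]; simp [dif_pos hne], h2'.2] at this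
            exact this
          have heq' : C1.erase x = C2.erase x := heq
          have : insert x (C1.erase x) = insert x (C2.erase x) := by rw [heq']
          rwa [Finset.insert_erase hx1, Finset.insert_erase hx2] at this
        have hcard : cls.card = img.card := (Finset.card_image_of_injOn hinj).symm
        have himgchain : ∀ C' ∈ img, IsChainAux κ window (x :: pfx) C' := by
          intro C' hC'
          obtain ⟨C, hC, hCeq⟩ := Finset.mem_image.1 hC'
          have hC2 := Finset.mem_filter.1 hC
          have hne : C.Nonempty := Finset.nonempty_iff_ne_empty.2 (Finset.mem_erase.1 hC2.1).1
          have hpx : pick κ C hne = x := by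
            rw [show pick κ C hne = f C by rw [hf]; simp [dif_pos hne]]; exact hC2.2
          have := (isChainAux_nonempty κ window hne (h𝒞 C (Finset.mem_erase.1 hC2.1).2)).2
          rw [hpx] at this
          rw [← hCeq]; exact this
        have hνx : νcap κ A (x :: pfx) ≤ νcap κ A pfx - W :=
          nu_step κ window A hwin hstep hmono hxw
        have hνn : νcap κ A (x :: pfx) ≤ n := by
          have : W ≤ νcap κ A pfx := by
            apply Finset.card_le_card
            intro y hy
            rw [Finset.mem_filter]
            exact ⟨Finset.mem_univ _, hwin pfx y hy⟩
          omega
        have := ih (x :: pfx) hνn img himgchain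
        have hmon : (14:ℝ) * 1.48 ^ (νcap κ A (x :: pfx)) ≤ 14 * 1.48 ^ (νcap κ A pfx - W) := by
          have := pow_le_pow_right₀ (by norm_num : (1:ℝ) ≤ 1.48) hνx
          nlinarith
        rw [hcls] at hcard ⊢
        rw [hcard]
        exact le_trans this hmon
      -- assemble
      have h1 : (𝒞.card : ℝ) ≤ 1 + 𝒞'.card := by
        have hsub2 : 𝒞 ⊆ insert ∅ 𝒞' := by
          intro C hC
          by_cases hCe : C = ∅
          · subst hCe; exact Finset.mem_insert_self _ _
          · exact Finset.mem_insert_of_mem (Finset.mem_erase.2 ⟨hCe, hC⟩)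
        have h3 : 𝒞.card ≤ 𝒞'.card + 1 :=
          le_trans (Finset.card_le_card hsub2) (Finset.card_insert_le _ _)
        have h3' : (𝒞.card:ℝ) ≤ (𝒞'.card:ℝ) + 1 := by exact_mod_cast h3
        linarith [h3']
      have h2 : (𝒞'.card : ℝ) ≤ W * (14 * 1.48 ^ (νcap κ A pfx - W)) := by
        rw [hsum]
        push_cast
        calc (∑ x ∈ window pfx, ((𝒞'.filter (fun C => f C = x)).card : ℝ))
            ≤ ∑ _x ∈ window pfx, 14 * 1.48 ^ (νcap κ A pfx - W) :=
              Finset.sum_le_sum hfiber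
          _ = W * (14 * 1.48 ^ (νcap κ A pfx - W)) := by
              rw [Finset.sum_const, hW]; simp [nsmul_eq_mul]
      have hWν : W ≤ νcap κ A pfx := by
        apply Finset.card_le_card
        intro y hy
        rw [Finset.mem_filter]
        exact ⟨Finset.mem_univ _, hwin pfx y hy⟩
      calc (𝒞.card : ℝ) ≤ 1 + 𝒞'.card := h1
        _ ≤ 1 + W * (14 * 1.48 ^ (νcap κ A pfx - W)) := by linarith
        _ ≤ 14 * 1.48 ^ (νcap κ A pfx) := key_ineq W _ hW1 hWν

end Chain

end MCDS

namespace MCDS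

open scoped Classical

noncomputable section GraphSetup

variable {a m : ℕ} (G : SimpleGraph (Fin a ⊕ Fin m))

/-- adjacency between the two sides -/
def adjU (u : Fin a) (w : Fin m) : Prop := G.Adj (Sum.inl u) (Sum.inr w)

def nbrF (u : Fin a) : Finset (Fin m) := Finset.univ.filter (fun w => adjU G u w)

def hasN (u : Fin a) : Prop := (nbrF G u).Nonempty

def lu (u : Fin a) : ℕ := fmin ((nbrF G u).image Fin.val) 0
def ru (u : Fin a) : ℕ := fmax ((nbrF G u).image Fin.val) 0

lemma adj_hasN {u : Fin a} {w : Fin m} (h : adjU G u w) : hasN G u :=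
  ⟨w, Finset.mem_filter.2 ⟨Finset.mem_univ _, h⟩⟩

lemma adj_lu {u : Fin a} {w : Fin m} (h : adjU G u w) : lu G u ≤ w.val :=
  fmin_le (Finset.mem_image.2 ⟨w, Finset.mem_filter.2 ⟨Finset.mem_univ _, h⟩, rfl⟩)

lemma adj_ru {u : Fin a} {w : Fin m} (h : adjU G u w) : w.val ≤ ru G u :=
  le_fmax (Finset.mem_image.2 ⟨w, Finset.mem_filter.2 ⟨Finset.mem_univ _, h⟩, rfl⟩)

variable (hG : ConvexBipartite G)

include hG in
/-- convexity: anything between `lu` and `ru` is adjacent -/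
lemma adj_of_between {u : Fin a} (hu : hasN G u) {w : Fin m}
    (h1 : lu G u ≤ w.val) (h2 : w.val ≤ ru G u) : adjU G u w := by
  obtain ⟨wl, hwl, hwlv⟩ := Finset.mem_image.1
    (show lu G u ∈ (nbrF G u).image Fin.val by
      rw [lu, fmin, dif_pos (hu.image Fin.val)]; exact Finset.min'_mem _ _)
  obtain ⟨wr, hwr, hwrv⟩ := Finset.mem_image.1
    (show ru G u ∈ (nbrF G u).image Fin.val by
      rw [ru, fmax, dif_pos (hu.image Fin.val)]; exact Finset.max'_mem _ _)
  have hal : adjU G u wl := (Finset.mem_filter.1 hwl).2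
  have har : adjU G u wr := (Finset.mem_filter.1 hwr).2
  have hle1 : wl ≤ w := by rw [Fin.le_def, hwlv]; exact h1
  have hle2 : w ≤ wr := by rw [Fin.le_def, hwrv]; exact h2
  exact hG.2.2 u wl w wr hle1 hle2 hal har

/-- the vertex subset determined by the two sides -/
def DD (ss : Finset (Fin a)) (ts : Finset (Fin m)) : Set (Fin a ⊕ Fin m) :=
  fun v => Sum.elim (fun u => u ∈ ss) (fun w => w ∈ ts) v

lemma mem_DD_inl {ss : Finset (Fin a)} {ts : Finset (Fin m)} {u : Fin a} :
    (Sum.inl u : Fin a ⊕ Fin m) ∈ DD ss ts ↔ u ∈ ss := Iff.rfl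

lemma mem_DD_inr {ss : Finset (Fin a)} {ts : Finset (Fin m)} {w : Fin m} :
    (Sum.inr w : Fin a ⊕ Fin m) ∈ DD ss ts ↔ w ∈ ts := Iff.rfl

/-- satisfaction conditions -/
def Sat1 (ss : Finset (Fin a)) : Prop := ∀ w : Fin m, ∃ u ∈ ss, adjU G u w

def Sat2 (ss : Finset (Fin a)) (ts : Finset (Fin m)) : Prop :=
  ∀ t ∈ ts, ∀ t' ∈ ts, t < t' → (∀ s ∈ ts, ¬(t < s ∧ s < t')) →
    ∃ u ∈ ss, adjU G u t ∧ adjU G u t'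

def Sat3 (ts : Finset (Fin m)) : Prop := ∀ u : Fin a, ∃ t ∈ ts, adjU G u t

/-! ### walk helpers -/

lemma exists_neighbor {V : Type*} (H : SimpleGraph V) (hc : H.Connected) {v v' : V}
    (hne : v' ≠ v) : ∃ x, H.Adj x v := by
  obtain ⟨w⟩ := hc.preconnected v v'
  cases w with
  | nil => exact absurd rfl (Ne.symm hne)
  | @cons _ y _ h p =>
    exact ⟨y, h.symm⟩

lemma crossing {V : Type*} (H : SimpleGraph V) (P : V → Prop) {x y : V} (w : H.Walk x y)
    (hx : P x) (hy : ¬ P y) : ∃ p q, H.Adj p q ∧ P p ∧ ¬ P q := by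
  induction w with
  | nil => exact absurd hx hy
  | @cons u v z h p ih =>
    by_cases hv : P v
    · exact ih hv hy
    · exact ⟨u, v, h, hx, hv⟩

/-! ### sufficiency: the three conditions imply CDS -/

include hG in
lemma cds_of_sats {ss : Finset (Fin a)} {ts : Finset (Fin m)}
    (hss : ss.Nonempty) (hts : ts.Nonempty)
    (h1 : Sat1 G ss) (h2 : Sat2 G ss ts) (h3 : Sat3 G ts) :
    IsConnectedDominatingSet G (DD ss ts) := by
  constructor
  · -- dominating
    intro v
    cases v with
    | inl u =>
      by_cases hu : u ∈ ss
      · exact Or.inl hu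
      · obtain ⟨t, ht, hadj⟩ := h3 u
        exact Or.inr ⟨Sum.inr t, ht, hadj.symm⟩
    | inr w =>
      by_cases hw : w ∈ ts
      · exact Or.inl hw
      · obtain ⟨u, hu, hadj⟩ := h1 w
        exact Or.inr ⟨Sum.inl u, hu, hadj⟩
  · -- connected
    rw [SimpleGraph.connected_iff]
    set H := G.induce (DD ss ts) with hH
    set t₀ := ts.min' hts with ht₀def
    have ht₀ : t₀ ∈ ts := ts.min'_mem hts
    have hbase : (Sum.inr t₀ : Fin a ⊕ Fin m) ∈ DD ss ts := ht₀
    have hadjH : ∀ (x y : Fin a ⊕ Fin m) (hx : x ∈ DD ss ts) (hy : y ∈ DD ss ts),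
        G.Adj x y → H.Adj ⟨x, hx⟩ ⟨y, hy⟩ := fun _ _ _ _ h => h
    -- every ts-vertex reaches the base
    have key : ∀ (n : ℕ) (t : Fin m) (ht : t ∈ ts), t.val ≤ n →
        H.Reachable ⟨Sum.inr t, ht⟩ ⟨Sum.inr t₀, hbase⟩ := by
      intro n
      induction n with
      | zero =>
        intro t ht htn
        have : t = t₀ := by
          have := ts.min'_le t ht
          have : t₀ ≤ t := this
          have h0 : t.val = 0 := by omega
          have h0' : t₀.val ≤ t.val := this
          exact Fin.ext (by omega)
        subst this
        rfl
      | succ n ih =>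
        intro t ht htn
        by_cases heq : t = t₀
        · subst heq; rfl
        · have hlt : t₀ < t := lt_of_le_of_ne (ts.min'_le t ht) (Ne.symm heq)
          set prevs := ts.filter (fun s => s < t) with hprevs
          have hpne : prevs.Nonempty := ⟨t₀, Finset.mem_filter.2 ⟨ht₀, hlt⟩⟩
          set tp := prevs.max' hpne with htpdef
          have htpmem := prevs.max'_mem hpne
          have htp : tp ∈ ts := (Finset.mem_filter.1 htpmem).1
          have htplt : tp < t := (Finset.mem_filter.1 htpmem).2
          have hcons : ∀ s ∈ ts, ¬(tp < s ∧ s < t) := by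
            intro s hs ⟨hs1, hs2⟩
            have : s ∈ prevs := Finset.mem_filter.2 ⟨hs, hs2⟩
            exact absurd (prevs.le_max' s this) (not_le.2 hs1)
          obtain ⟨u, hu, hadj1, hadj2⟩ := h2 tp htp t ht htplt hcons
          have hu' : (Sum.inl u : Fin a ⊕ Fin m) ∈ DD ss ts := hu
          have e1 : H.Adj ⟨Sum.inr t, ht⟩ ⟨Sum.inl u, hu'⟩ := hadjH _ _ _ _ hadj2.symm
          have e2 : H.Adj ⟨Sum.inl u, hu'⟩ ⟨Sum.inr tp, htp⟩ := hadjH _ _ _ _ hadj1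
          have htpn : tp.val ≤ n := by
            have h1' : tp.val < t.val := htplt
            omega
          exact (e1.reachable.trans e2.reachable).trans (ih tp htp htpn)
    have reachbase : ∀ (v : ↥(DD ss ts)), H.Reachable v ⟨Sum.inr t₀, hbase⟩ := by
      rintro ⟨x, hx⟩
      cases x with
      | inl u =>
        obtain ⟨t, ht, hadj⟩ := h3 u
        have e : H.Adj ⟨Sum.inl u, hx⟩ ⟨Sum.inr t, ht⟩ := hadjH _ _ _ _ hadj
        exact e.reachable.trans (key t.val t ht le_rfl)
      | inr w =>
        exact key w.val w hx le_rfl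
    refine ⟨fun x y => (reachbase x).trans (reachbase y).symm, ⟨⟨Sum.inr t₀, hbase⟩⟩⟩

/-! ### necessity -/

include hG in
lemma sats_of_mincds {ss : Finset (Fin a)} {ts : Finset (Fin m)}
    (hss : ss.Nonempty) (hts : ts.Nonempty)
    (hcds : IsConnectedDominatingSet G (DD ss ts)) :
    Sat1 G ss ∧ Sat2 G ss ts ∧ Sat3 G ts := by
  obtain ⟨hdom, hconn⟩ := hcds
  set H := G.induce (DD ss ts) with hH
  obtain ⟨u₀, hu₀⟩ := hss
  obtain ⟨t₀, ht₀⟩ := hts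
  have hu₀' : (Sum.inl u₀ : Fin a ⊕ Fin m) ∈ DD ss ts := hu₀
  have ht₀' : (Sum.inr t₀ : Fin a ⊕ Fin m) ∈ DD ss ts := ht₀
  refine ⟨?_, ?_, ?_⟩
  · -- Sat1
    intro w
    by_cases hw : w ∈ ts
    · -- use a neighbor in the induced connected graph
      have hw' : (Sum.inr w : Fin a ⊕ Fin m) ∈ DD ss ts := hw
      have hne : (⟨Sum.inl u₀, hu₀'⟩ : ↥(DD ss ts)) ≠ ⟨Sum.inr w, hw'⟩ := by
        intro h; exact absurd (congrArg Subtype.val h) (by simp)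
      obtain ⟨x, hxadj⟩ := exists_neighbor H hconn hne
      obtain ⟨xv, hxv⟩ := x
      cases xv with
      | inl u =>
        exact ⟨u, hxv, hxadj⟩
      | inr w' =>
        exact absurd hxadj (hG.2.1 w' w)
    · rcases hdom (Sum.inr w) with hmem | ⟨d, hd, hadj⟩
      · exact absurd hmem hw
      · cases d with
        | inl u => exact ⟨u, hd, hadj⟩
        | inr w' => exact absurd hadj (hG.2.1 w' w)
  · -- Sat2
    intro t ht t' ht' hlt hcons
    have ht2 : (Sum.inr t : Fin a ⊕ Fin m) ∈ DD ss ts := ht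
    have ht2' : (Sum.inr t' : Fin a ⊕ Fin m) ∈ DD ss ts := ht'
    obtain ⟨wk⟩ := hconn.preconnected ⟨Sum.inr t, ht2⟩ ⟨Sum.inr t', ht2'⟩
    set P : ↥(DD ss ts) → Prop :=
      fun v => Sum.elim (fun u => ∀ s ∈ ts, adjU G u s → s ≤ t) (fun s => s ≤ t) v.val with hP
    have hPx : P ⟨Sum.inr t, ht2⟩ := le_refl t
    have hPy : ¬ P ⟨Sum.inr t', ht2'⟩ := not_le.2 hlt
    obtain ⟨p, q, hpq, hPp, hPq⟩ := crossing H P wk hPx hPy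
    obtain ⟨pv, hpmem⟩ := p
    obtain ⟨qv, hqmem⟩ := q
    have hpq' : G.Adj pv qv := hpq
    cases pv with
    | inl u =>
      cases qv with
      | inl u' => exact absurd hpq' (hG.1 u u')
      | inr s =>
        have hs : s ∈ ts := hqmem
        have : s ≤ t := hPp s hs hpq'
        exact absurd this hPq
    | inr s =>
      cases qv with
      | inr s' => exact absurd hpq' (hG.2.1 s s')
      | inl u =>
        have hu : u ∈ ss := hqmem
        have hs : s ∈ ts := hpmem
        have hst : s ≤ t := hPp
        rw [hP] at hPq
        simp only [Sum.elim_inl] at hPq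
        push_neg at hPq
        obtain ⟨s', hs', hadjs', hs't⟩ := hPq
        have hs'ge : t' ≤ s' := by
          rcases lt_or_ge s' t' with hc | hc
          · exact absurd ⟨hs't, hc⟩ (hcons s' hs')
          · exact hc
        have hadjs : adjU G u s := hpq'.symm
        have h1 : adjU G u t := hG.2.2 u s t s' (le_of_lt (lt_of_le_of_lt hst hlt) |>.trans (le_refl _) |> fun _ => hst) (le_trans (le_of_lt hlt) hs'ge) hadjs hadjs'
        have h2 : adjU G u t' := hG.2.2 u s t' s' (le_trans hst (le_of_lt hlt)) hs'ge hadjs hadjs'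
        exact ⟨u, hu, h1, h2⟩
  · -- Sat3
    intro u
    by_cases hu : u ∈ ss
    · have hu' : (Sum.inl u : Fin a ⊕ Fin m) ∈ DD ss ts := hu
      have hne : (⟨Sum.inr t₀, ht₀'⟩ : ↥(DD ss ts)) ≠ ⟨Sum.inl u, hu'⟩ := by
        intro h; exact absurd (congrArg Subtype.val h) (by simp)
      obtain ⟨x, hxadj⟩ := exists_neighbor H hconn hne
      obtain ⟨xv, hxv⟩ := x
      cases xv with
      | inr w => exact ⟨w, hxv, hxadj.symm⟩
      | inl u' =>
        exact absurd hxadj (hG.1 u' u)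
    · rcases hdom (Sum.inl u) with hmem | ⟨d, hd, hadj⟩
      · exact absurd hmem hu
      · cases d with
        | inr w => exact ⟨w, hd, hadj.symm⟩
        | inl u' => exact absurd hadj (hG.1 u' u)

/-! ### T-side fiber: counting the W-parts for a fixed U-part -/

section TSide

variable {a m : ℕ} (G : SimpleGraph (Fin a ⊕ Fin m)) (ss : Finset (Fin a))

/-- envelope: furthest right reach of `ss`-intervals through `p` -/
def fEnv (p : Fin m) : ℕ := fmax ((ss.filter (fun u => adjU G u p)).image (ru G)) 0

/-- minimal deadline of a potential private interval at `t` with left end beyond `po` -/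
def dPriv (t : Fin m) (po : Option (Fin m)) : ℕ :=
  fmin ((Finset.univ.filter (fun u : Fin a => adjU G u t ∧
    (match po with | none => True | some p => p.val < lu G u))).image (ru G)) (m+1)

/-- minimal deadline of intervals lying strictly beyond `t` -/
def dNext (t : Option (Fin m)) : ℕ :=
  fmin ((Finset.univ.filter (fun u : Fin a => hasN G u ∧
    (match t with | none => True | some t => t.val < lu G u))).image (ru G)) m

def AT : List (Fin m) → ℕ
  | [] => 0
  | [t] => dPriv G t none + 1
  | t :: p :: _ => min (dPriv G t (some p)) (fEnv G ss p) + 1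

def BT : List (Fin m) → ℕ
  | [] => dNext G none
  | t :: _ => min (fEnv G ss t) (dNext G (some t))

def windowT (pfx : List (Fin m)) : Finset (Fin m) :=
  Finset.univ.filter (fun w => AT G ss pfx ≤ w.val ∧ w.val ≤ BT G ss pfx)

variable {G ss}

lemma ru_lt (u : Fin a) (hu : hasN G u) : ru G u < m := by
  rw [ru, fmax, dif_pos (hu.image Fin.val)]
  obtain ⟨w, hw, hwv⟩ := Finset.mem_image.1 (Finset.max'_mem ((nbrF G u).image Fin.val) _)
  rw [← hwv]; exact w.isLt

lemma dNext_le (t : Option (Fin m)) : dNext G t ≤ m := by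
  apply fmin_le_of le_rfl
  intro x hx
  simp only [Finset.mem_image, Finset.mem_filter, Finset.mem_univ, true_and] at hx
  obtain ⟨u, hu, huv⟩ := hx
  rw [← huv]
  exact le_of_lt (ru_lt u hu.1)

lemma AT_step (pfx : List (Fin m)) (x : Fin m) : BT G ss pfx < AT G ss (x :: pfx) := by
  cases pfx with
  | nil =>
    show dNext G none < dPriv G x none + 1
    have : dNext G none ≤ dPriv G x none := by
      apply le_fmin (le_trans (dNext_le none) (by omega))
      intro y hy
      simp only [Finset.mem_image, Finset.mem_filter, Finset.mem_univ, true_and] at hy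
      obtain ⟨u, hu, huv⟩ := hy
      rw [← huv]
      apply fmin_le
      simp only [Finset.mem_image, Finset.mem_filter, Finset.mem_univ, true_and]
      exact ⟨u, ⟨adj_hasN G hu.1, trivial⟩, rfl⟩
    omega
  | cons t rest =>
    show min (fEnv G ss t) (dNext G (some t)) < min (dPriv G x (some t)) (fEnv G ss t) + 1
    have h1 : dNext G (some t) ≤ dPriv G x (some t) := by
      apply le_fmin (le_trans (dNext_le (some t)) (by omega))
      intro y hy
      simp only [Finset.mem_image, Finset.mem_filter, Finset.mem_univ, true_and] at hy
      obtain ⟨u, hu, huv⟩ := hy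
      rw [← huv]
      apply fmin_le
      simp only [Finset.mem_image, Finset.mem_filter, Finset.mem_univ, true_and]
      exact ⟨u, ⟨adj_hasN G hu.1, hu.2⟩, rfl⟩
    have h2 : min (fEnv G ss t) (dNext G (some t)) ≤ min (dPriv G x (some t)) (fEnv G ss t) := by
      rcases le_total (dPriv G x (some t)) (fEnv G ss t) with hc | hc
      · calc min (fEnv G ss t) (dNext G (some t)) ≤ dNext G (some t) := min_le_right _ _
          _ ≤ dPriv G x (some t) := h1
          _ = min (dPriv G x (some t)) (fEnv G ss t) := (min_eq_left hc).symm
      · calc min (fEnv G ss t) (dNext G (some t)) ≤ fEnv G ss t := min_le_left _ _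
          _ = min (dPriv G x (some t)) (fEnv G ss t) := (min_eq_right hc).symm
    omega

lemma windowT_hwin : ∀ pfx, ∀ x ∈ windowT G ss pfx, AT G ss pfx ≤ x.val :=
  fun _ _ hx => (Finset.mem_filter.1 hx).2.1

lemma windowT_hstep : ∀ pfx, ∀ x ∈ windowT G ss pfx, ∀ y ∈ windowT G ss pfx,
    ¬ (AT G ss (x :: pfx) ≤ y.val) := by
  intro pfx x _ y hy h
  have h2 := (Finset.mem_filter.1 hy).2.2
  have h3 := AT_step (G := G) (ss := ss) pfx x
  omega

lemma windowT_hmono : ∀ pfx, ∀ x ∈ windowT G ss pfx, AT G ss pfx ≤ AT G ss (x :: pfx) := by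
  intro pfx x hx
  have h1 := (Finset.mem_filter.1 hx).2.1
  have h2 := (Finset.mem_filter.1 hx).2.2
  have h3 := AT_step (G := G) (ss := ss) pfx x
  omega

variable (G ss)

variable {ts : Finset (Fin m)}

/-- removing an inr vertex -/
lemma DD_erase_inr (t : Fin m) : DD ss (ts.erase t) = DD ss ts \ {Sum.inr t} := by
  ext v
  cases v with
  | inl u =>
    show u ∈ ss ↔ (Sum.inl u : Fin a ⊕ Fin m) ∈ (DD ss ts \ {Sum.inr t})
    rw [Set.mem_diff, Set.mem_singleton_iff]
    constructor
    · intro h; exact ⟨h, by simp⟩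
    · intro h; exact h.1
  | inr w =>
    show w ∈ ts.erase t ↔ (Sum.inr w : Fin a ⊕ Fin m) ∈ (DD ss ts \ {Sum.inr t})
    rw [Set.mem_diff, Set.mem_singleton_iff, Finset.mem_erase]
    constructor
    · rintro ⟨h1, h2⟩; exact ⟨h2, by simpa using h1⟩
    · rintro ⟨h1, h2⟩; exact ⟨by simpa using h2, h1⟩

lemma not_cds_erase_inr (hmin : IsMinimalCDS G (DD ss ts)) {t : Fin m} (ht : t ∈ ts) :
    ¬ IsConnectedDominatingSet G (DD ss (ts.erase t)) := by
  rw [DD_erase_inr]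
  apply hmin.2
  constructor
  · exact Set.diff_subset
  · intro hsub
    have : (Sum.inr t : Fin a ⊕ Fin m) ∈ DD ss ts \ {Sum.inr t} := hsub ht
    simp at this

variable {G ss}

lemma adj_between' (hG : ConvexBipartite G) {u : Fin a} {w w1 w2 : Fin m}
    (h1 : adjU G u w1) (h2 : adjU G u w2) (hle1 : w1.val ≤ w.val) (hle2 : w.val ≤ w2.val) :
    adjU G u w :=
  adj_of_between G hG (adj_hasN G h1) (le_trans (adj_lu G h1) hle1)
    (le_trans hle2 (adj_ru G h2))

lemma not_adj_cases (hG : ConvexBipartite G) {u : Fin a} {w : Fin m} (hu : hasN G u)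
    (h : ¬ adjU G u w) : w.val < lu G u ∨ ru G u < w.val := by
  by_contra hc
  push_neg at hc
  exact h (adj_of_between G hG hu (by omega) (by omega))

/-- the two upper-window bounds -/
lemma upper_fEnv (hsat2 : Sat2 G ss ts) {t x : Fin m} (ht : t ∈ ts) (hx : x ∈ ts)
    (hlt : t < x) (hcons : ∀ s ∈ ts, ¬(t < s ∧ s < x)) : x.val ≤ fEnv G ss t := by
  obtain ⟨u, hu, h1, h2⟩ := hsat2 t ht x hx hlt hcons
  refine le_trans (adj_ru G h2) (le_fmax ?_)
  simp only [Finset.mem_image, Finset.mem_filter]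
  exact ⟨u, ⟨hu, h1⟩, rfl⟩

lemma upper_dNext (hsat3 : Sat3 G ts) {t x : Fin m} (hx : x ∈ ts)
    (hlt : t < x) (hcons : ∀ s ∈ ts, ¬(t < s ∧ s < x)) : x.val ≤ dNext G (some t) := by
  apply le_fmin (le_of_lt x.isLt)
  intro y hy
  simp only [Finset.mem_image, Finset.mem_filter, Finset.mem_univ, true_and] at hy
  obtain ⟨u, ⟨hun, hul⟩, huv⟩ := hy
  obtain ⟨s, hs, hadj⟩ := hsat3 u
  have hts : t < s := by
    have := adj_lu G hadj
    rw [Fin.lt_def]; omega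
  have hxs : x ≤ s := by
    rcases lt_or_ge s x with hc | hc
    · exact absurd ⟨hts, hc⟩ (hcons s hs)
    · exact hc
  have := adj_ru G hadj
  rw [← huv, Fin.le_def] at *
  omega

lemma upper_dNext_none (hsat3 : Sat3 G ts) {x : Fin m}
    (hmin : ∀ s ∈ ts, x ≤ s) : x.val ≤ dNext G none := by
  apply le_fmin (le_of_lt x.isLt)
  intro y hy
  simp only [Finset.mem_image, Finset.mem_filter, Finset.mem_univ, true_and] at hy
  obtain ⟨u, hun, huv⟩ := hy
  obtain ⟨s, hs, hadj⟩ := hsat3 u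
  have h1 := hmin s hs
  have := adj_ru G hadj
  rw [← huv] at *
  rw [Fin.le_def] at h1
  omega

/-- privacy of the minimum element of `ts` -/
lemma privacy_none (hG : ConvexBipartite G) (hss : ss.Nonempty)
    (hmin : IsMinimalCDS G (DD ss ts))
    (hsat1 : Sat1 G ss) (hsat2 : Sat2 G ss ts) (hsat3 : Sat3 G ts)
    {t x : Fin m} (ht : t ∈ ts) (hx : x ∈ ts)
    (htmin : ∀ s ∈ ts, t ≤ s) (hlt : t < x) (hcons : ∀ s ∈ ts, ¬(t < s ∧ s < x)) :
    dPriv G t none < x.val := by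
  by_contra hcon
  push_neg at hcon
  have hxt : x ≠ t := by intro h; rw [h] at hlt; exact lt_irrefl _ hlt
  have hsat3' : Sat3 G (ts.erase t) := by
    intro u
    obtain ⟨s, hs, hadj⟩ := hsat3 u
    by_cases hst : s = t
    · subst hst
      by_contra hno
      push_neg at hno
      have hno' : ∀ s' ∈ ts, adjU G u s' → s' = s := by
        intro s' hs' hadj'
        by_contra hne
        exact hno s' (Finset.mem_erase.2 ⟨hne, hs'⟩) hadj'
      have hdp : dPriv G s none ≤ ru G u := by
        apply fmin_le
        simp only [Finset.mem_image, Finset.mem_filter, Finset.mem_univ, true_and]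
        exact ⟨u, ⟨hadj, trivial⟩, rfl⟩
      have hnadjx : ¬ adjU G u x := by
        intro h
        exact hxt (hno' x hx h)
      rcases not_adj_cases hG (adj_hasN G hadj) hnadjx with hc | hc
      · have := adj_lu G hadj
        rw [Fin.lt_def] at hlt; omega
      · omega
    · exact ⟨s, Finset.mem_erase.2 ⟨hst, hs⟩, hadj⟩
  have hsat2' : Sat2 G ss (ts.erase t) := by
    intro t' ht' t'' ht'' hlt' hcons'
    have ht'ts := (Finset.mem_erase.1 ht').2
    have ht''ts := (Finset.mem_erase.1 ht'').2
    have htt' : t < t' := lt_of_le_of_ne (htmin t' ht'ts) (Ne.symm (Finset.mem_erase.1 ht').1)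
    apply hsat2 t' ht'ts t'' ht''ts hlt'
    intro s hs ⟨h1, h2⟩
    have hst : s ≠ t := by
      intro h; subst h; exact absurd htt' (not_lt.2 (le_of_lt h1))
    exact hcons' s (Finset.mem_erase.2 ⟨hst, hs⟩) ⟨h1, h2⟩
  exact not_cds_erase_inr G ss hmin ht
    (cds_of_sats G hG hss ⟨x, Finset.mem_erase.2 ⟨hxt, hx⟩⟩ hsat1 hsat2' hsat3')

/-- privacy of an interior element of `ts` -/
lemma privacy_some (hG : ConvexBipartite G) (hss : ss.Nonempty)
    (hmin : IsMinimalCDS G (DD ss ts))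
    (hsat1 : Sat1 G ss) (hsat2 : Sat2 G ss ts) (hsat3 : Sat3 G ts)
    {p t x : Fin m} (hp : p ∈ ts) (ht : t ∈ ts) (hx : x ∈ ts)
    (hpt : p < t) (hconsp : ∀ s ∈ ts, ¬(p < s ∧ s < t))
    (hlt : t < x) (hcons : ∀ s ∈ ts, ¬(t < s ∧ s < x)) :
    min (dPriv G t (some p)) (fEnv G ss p) < x.val := by
  by_contra hcon
  push_neg at hcon
  have hcon1 : x.val ≤ dPriv G t (some p) := le_trans hcon (min_le_left _ _)
  have hcon2 : x.val ≤ fEnv G ss p := le_trans hcon (min_le_right _ _)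
  have hxt : x ≠ t := by intro h; rw [h] at hlt; exact lt_irrefl _ hlt
  have hpt' : p ≠ t := ne_of_lt hpt
  have hsat3' : Sat3 G (ts.erase t) := by
    intro u
    obtain ⟨s, hs, hadj⟩ := hsat3 u
    by_cases hst : s = t
    · subst hst
      by_contra hno
      push_neg at hno
      have hno' : ∀ s' ∈ ts, adjU G u s' → s' = s := by
        intro s' hs' hadj'
        by_contra hne
        exact hno s' (Finset.mem_erase.2 ⟨hne, hs'⟩) hadj'
      have hnadjp : ¬ adjU G u p := by
        intro h; exact hpt' (hno' p hp h)
      have hlup : p.val < lu G u := by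
        rcases not_adj_cases hG (adj_hasN G hadj) hnadjp with hc | hc
        · exact hc
        · have := adj_ru G hadj
          rw [Fin.lt_def] at hpt; omega
      have hdp : dPriv G s (some p) ≤ ru G u := by
        apply fmin_le
        simp only [Finset.mem_image, Finset.mem_filter, Finset.mem_univ, true_and]
        exact ⟨u, ⟨hadj, hlup⟩, rfl⟩
      have hnadjx : ¬ adjU G u x := by
        intro h; exact hxt (hno' x hx h)
      rcases not_adj_cases hG (adj_hasN G hadj) hnadjx with hc | hc
      · have := adj_lu G hadj
        rw [Fin.lt_def] at hlt; omega
      · omega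
    · exact ⟨s, Finset.mem_erase.2 ⟨hst, hs⟩, hadj⟩
  have hsat2' : Sat2 G ss (ts.erase t) := by
    intro t' ht' t'' ht'' hlt' hcons'
    have ht'ts := (Finset.mem_erase.1 ht').2
    have ht''ts := (Finset.mem_erase.1 ht'').2
    by_cases hstr : t' < t ∧ t < t''
    · -- straddling pair: must be (p, x); use the envelope
      have ht'p : t' = p := by
        have h1 : t' ≤ p := by
          by_contra hc
          push_neg at hc
          exact hconsp t' ht'ts ⟨hc, hstr.1⟩
        rcases lt_or_eq_of_le h1 with hc | hc
        · exfalso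
          apply hcons' p (Finset.mem_erase.2 ⟨hpt', hp⟩)
          exact ⟨hc, lt_trans hpt hstr.2⟩
        · exact hc
      have ht''x : t'' = x := by
        have h1 : x ≤ t'' := by
          by_contra hc
          push_neg at hc
          exact hcons t'' ht''ts ⟨hstr.2, hc⟩
        rcases lt_or_eq_of_le h1 with hc | hc
        · exfalso
          apply hcons' x (Finset.mem_erase.2 ⟨hxt, hx⟩)
          refine ⟨?_, hc⟩
          rw [ht'p]; exact lt_trans hpt hlt
        · exact hc.symm
      rw [ht'p, ht''x]
      -- find the envelope witness
      have hxpos : 0 < x.val := by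
        rw [Fin.lt_def] at hlt hpt; omega
      have hne : (ss.filter (fun u => adjU G u p)).Nonempty := by
        by_contra hc
        rw [Finset.not_nonempty_iff_eq_empty] at hc
        rw [fEnv, hc] at hcon2
        simp [fmax] at hcon2
        omega
      have hne' : ((ss.filter (fun u => adjU G u p)).image (ru G)).Nonempty :=
        hne.image _
      have hmem := Finset.max'_mem _ hne'
      rw [show ((ss.filter (fun u => adjU G u p)).image (ru G)).max' hne' = fEnv G ss p by
        rw [fEnv, fmax, dif_pos hne']] at hmem
      simp only [Finset.mem_image, Finset.mem_filter] at hmem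
      obtain ⟨u, ⟨hu, hadjp⟩, huv⟩ := hmem
      have hruu : x.val ≤ ru G u := by rw [huv]; exact hcon2
      have hadjx : adjU G u x := by
        apply adj_of_between G hG (adj_hasN G hadjp)
        · exact le_trans (adj_lu G hadjp) (by rw [Fin.lt_def] at hpt hlt; omega)
        · exact hruu
      exact ⟨u, hu, hadjp, hadjx⟩
    · -- non-straddling: consecutive in ts as well
      apply hsat2 t' ht'ts t'' ht''ts hlt'
      intro s hs ⟨h1, h2⟩
      have hst : s ≠ t := by
        intro h; subst h; exact hstr ⟨h1, h2⟩
      exact hcons' s (Finset.mem_erase.2 ⟨hst, hs⟩) ⟨h1, h2⟩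
  exact not_cds_erase_inr G ss hmin ht
    (cds_of_sats G hG hss ⟨x, Finset.mem_erase.2 ⟨hxt, hx⟩⟩ hsat1 hsat2' hsat3')

/-- the invariant for peeling `ts` -/
def PT (ts : Finset (Fin m)) (pfx : List (Fin m)) (C : Finset (Fin m)) : Prop :=
  (∀ p ∈ pfx, p ∈ ts) ∧ (∀ y ∈ C, y ∈ ts) ∧ (∀ s ∈ ts, s ∈ C ∨ s ∈ pfx) ∧
    pfx.Pairwise (· > ·) ∧ (∀ p ∈ pfx, ∀ y ∈ C, p < y)

theorem tside_chain (hG : ConvexBipartite G) (hss : ss.Nonempty) (hts : ts.Nonempty)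
    (hmin : IsMinimalCDS G (DD ss ts)) :
    IsChainAux Fin.val (windowT G ss) [] ts := by
  obtain ⟨hsat1, hsat2, hsat3⟩ := sats_of_mincds G hG hss hts hmin.1
  apply isChainAux_of_inv Fin.val (windowT G ss) (PT ts) _ ts.card ts le_rfl []
  · exact ⟨by simp, fun y hy => hy, fun s hs => Or.inl hs, List.Pairwise.nil, by simp⟩
  · -- the peel step
    intro pfx C hC hP
    obtain ⟨hpfx, hCts, hcover, hpw, hplt⟩ := hP
    set x := pick Fin.val C hC with hxdef
    have hxC : x ∈ C := pick_mem _ _ _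
    have hxts : x ∈ ts := hCts x hxC
    have hxmin : ∀ y ∈ C, x ≤ y := by
      intro y hy
      rw [Fin.le_def]
      exact pick_min Fin.val C hC y hy
    have hconsx : ∀ t ∈ pfx.head?, (t < x ∧ ∀ s ∈ ts, ¬(t < s ∧ s < x)) := by
      intro t hth
      have htpfx : t ∈ pfx := by
        cases pfx with
        | nil => simp at hth
        | cons hd tl => simp at hth; subst hth; exact List.mem_cons_self
      refine ⟨hplt t htpfx x hxC, ?_⟩
      intro s hs ⟨h1, h2⟩
      rcases hcover s hs with hsC | hspfx
      · exact absurd h2 (not_lt.2 (hxmin s hsC))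
      · -- s ∈ pfx and s > t = head: contradicts pairwise desc (head is max)
        cases pfx with
        | nil => simp at hspfx
        | cons hd tl =>
          simp only [List.head?_cons, Option.mem_def, Option.some.injEq] at hth
          subst hth
          rcases List.mem_cons.1 hspfx with h | h
          · subst h; exact lt_irrefl _ h1
          · have := (List.pairwise_cons.1 hpw).1 s h
            exact absurd h1 (not_lt.2 (le_of_lt this))
    have hwinmem : x ∈ windowT G ss pfx := by
      simp only [windowT, Finset.mem_filter, Finset.mem_univ, true_and]
      constructor
      · -- lower bound AT
        cases pfx with
        | nil => simp [AT]
        | cons t tl =>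
          obtain ⟨htx, hconss⟩ := hconsx t (by simp)
          have hts' : t ∈ ts := hpfx t (List.mem_cons_self)
          cases tl with
          | nil =>
            show AT G ss [t] ≤ x.val
            have htmin : ∀ s ∈ ts, t ≤ s := by
              intro s hs
              rcases hcover s hs with hsC | hspfx
              · exact le_of_lt (hplt t (List.mem_cons_self) s hsC)
              · simp only [List.mem_singleton] at hspfx
                subst hspfx; exact le_refl _
            have := privacy_none hG hss hmin hsat1 hsat2 hsat3 hts' hxts htmin htx hconss
            show dPriv G t none + 1 ≤ x.val
            omega
          | cons p tl2 =>
            show min (dPriv G t (some p)) (fEnv G ss p) + 1 ≤ x.val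
            have hpts : p ∈ ts := hpfx p (by simp)
            have hpt : p < t := (List.pairwise_cons.1 hpw).1 p (by simp)
            have hconspt : ∀ s ∈ ts, ¬(p < s ∧ s < t) := by
              intro s hs ⟨h1, h2⟩
              rcases hcover s hs with hsC | hspfx
              · exact absurd h2 (not_lt.2 (le_of_lt (hplt t (by simp) s hsC)))
              · rcases List.mem_cons.1 hspfx with h | h
                · subst h; exact lt_irrefl _ h2
                · rcases List.mem_cons.1 h with h' | h'
                  · subst h'; exact lt_irrefl _ h1
                  · have := (List.pairwise_cons.1 (List.pairwise_cons.1 hpw).2).1 s h'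
                    exact absurd h1 (not_lt.2 (le_of_lt this))
            have := privacy_some hG hss hmin hsat1 hsat2 hsat3 hpts hts' hxts hpt hconspt
              htx hconss
            omega
      · -- upper bound BT
        cases pfx with
        | nil =>
          show x.val ≤ dNext G none
          apply upper_dNext_none hsat3
          intro s hs
          rcases hcover s hs with hsC | hspfx
          · exact hxmin s hsC
          · simp at hspfx
        | cons t tl =>
          obtain ⟨htx, hconss⟩ := hconsx t (by simp)
          have hts' : t ∈ ts := hpfx t (List.mem_cons_self)
          show x.val ≤ min (fEnv G ss t) (dNext G (some t))
          exact le_min (upper_fEnv hsat2 hts' hxts htx hconss)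
            (upper_dNext hsat3 hxts htx hconss)
    refine ⟨hwinmem, ?_, ?_, ?_, ?_, ?_⟩
    · intro p hp
      rcases List.mem_cons.1 hp with h | h
      · subst h; exact hxts
      · exact hpfx p h
    · intro y hy
      exact hCts y (Finset.mem_of_mem_erase hy)
    · intro s hs
      rcases hcover s hs with hsC | hspfx
      · by_cases hsx : s = x
        · exact Or.inr (by subst hsx; exact List.mem_cons_self)
        · exact Or.inl (Finset.mem_erase.2 ⟨hsx, hsC⟩)
      · exact Or.inr (List.mem_cons.2 (Or.inr hspfx))
    · rw [List.pairwise_cons]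
      exact ⟨fun p hp => hplt p hp x hxC, hpw⟩
    · intro p hp y hy
      have hyC : y ∈ C := Finset.mem_of_mem_erase hy
      rcases List.mem_cons.1 hp with h | h
      · subst h
        exact lt_of_le_of_ne (hxmin y hyC) (fun h => (Finset.mem_erase.1 hy).1 h.symm)
      · exact hplt p h y hyC

/-- the fiber of minimal CDS with a fixed `U`-part -/
def TFiber (G : SimpleGraph (Fin a ⊕ Fin m)) (ss : Finset (Fin a)) : Finset (Finset (Fin m)) :=
  Finset.univ.filter (fun ts => ts.Nonempty ∧ IsMinimalCDS G (DD ss ts))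

theorem tfiber_bound (hG : ConvexBipartite G) (hss : ss.Nonempty) :
    ((TFiber G ss).card : ℝ) ≤ 14 * 1.48 ^ m := by
  have hκ : Function.Injective (Fin.val : Fin m → ℕ) := Fin.val_injective
  have hν : νcap (Fin.val : Fin m → ℕ) (AT G ss) [] = m := by
    rw [νcap]
    have : (Finset.univ.filter (fun v : Fin m => AT G ss [] ≤ v.val)) = Finset.univ := by
      apply Finset.filter_true_of_mem
      intro v _
      show AT G ss [] ≤ v.val
      simp [AT]
    rw [this, Finset.card_univ, Fintype.card_fin]
  have := chain_count (Fin.val : Fin m → ℕ) (windowT G ss) (AT G ss)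
    (windowT_hwin) (windowT_hstep) (windowT_hmono) hκ m []
    (le_of_eq hν) (TFiber G ss) ?_
  · rw [hν] at this
    exact this
  · intro C hC
    simp only [TFiber, Finset.mem_filter, Finset.mem_univ, true_and] at hC
    exact tside_chain hG hss hC.1 hC.2

end TSide

/-! ### S-side fiber: counting the U-parts for a fixed W-part -/

section SSide

variable {a m : ℕ} (G : SimpleGraph (Fin a ⊕ Fin m)) (ts : Finset (Fin m))

/-- the covering constraints determined by `ts`: all singletons, plus consecutive pairs -/
def ZS : Finset (ℕ × ℕ) :=
  ((Finset.univ : Finset (Fin m)).image (fun w => (w.val, w.val))) ∪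
  (((ts ×ˢ ts).filter (fun q => q.1 < q.2 ∧ ∀ s ∈ ts, ¬(q.1 < s ∧ s < q.2))).image
    (fun q => (q.1.val, q.2.val)))

/-- `u` covers the constraint `z` -/
def covS (u : Fin a) (z : ℕ × ℕ) : Prop :=
  hasN G u ∧ lu G u ≤ z.1 ∧ z.2 ≤ ru G u

def pendingS (pfx : List (Fin a)) : Finset (ℕ × ℕ) :=
  (ZS ts).filter (fun z => ∀ q ∈ pfx, ¬ covS G q z)

def MS (pfx : List (Fin a)) : ℕ := fmin ((pendingS G ts pfx).image Prod.fst) m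

def mPrivL (x : Fin a) (pfx : List (Fin a)) : ℕ :=
  fmin (((ZS ts).filter (fun z => covS G x z ∧ ∀ q ∈ pfx, ru G q < z.2)).image Prod.fst) (m+1)

def AS : List (Fin a) → ℕ
  | [] => 0
  | x :: rest => mPrivL G ts x rest + 1

def κS (v : Fin a) : ℕ := lu G v * a + v.val

def AκS (pfx : List (Fin a)) : ℕ := AS G ts pfx * a

def windowS (pfx : List (Fin a)) : Finset (Fin a) :=
  Finset.univ.filter (fun v => AS G ts pfx ≤ lu G v ∧ lu G v ≤ MS G ts pfx)

variable {G ts}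

lemma κS_inj : Function.Injective (κS G) := by
  intro u v h
  rw [κS, κS] at h
  rcases Nat.lt_trichotomy (lu G u) (lu G v) with hc | hc | hc
  · exfalso
    have he : (lu G u + 1) * a = lu G u * a + a := by ring
    have h1 : lu G u * a + u.val < (lu G u + 1) * a := by
      have := u.isLt; omega
    have h2 : (lu G u + 1) * a ≤ lu G v * a := Nat.mul_le_mul_right a hc
    omega
  · rw [hc] at h
    exact Fin.ext (by omega)
  · exfalso
    have he : (lu G v + 1) * a = lu G v * a + a := by ring
    have h1 : lu G v * a + v.val < (lu G v + 1) * a := by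
      have := v.isLt; omega
    have h2 : (lu G v + 1) * a ≤ lu G u * a := Nat.mul_le_mul_right a hc
    omega

lemma κS_lu_le {u v : Fin a} (h : κS G u < κS G v) : lu G u ≤ lu G v := by
  by_contra hc
  push_neg at hc
  rw [κS, κS] at h
  have he : (lu G v + 1) * a = lu G v * a + a := by ring
  have h1 : lu G v * a + v.val < (lu G v + 1) * a := by
    have := v.isLt; omega
  have h2 : (lu G v + 1) * a ≤ lu G u * a := Nat.mul_le_mul_right a hc
  omega

lemma κS_lu_le' {u v : Fin a} (h : κS G u ≤ κS G v) : lu G u ≤ lu G v := by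
  rcases eq_or_lt_of_le h with hc | hc
  · exact le_of_eq (by rw [κS_inj hc])
  · exact κS_lu_le hc

lemma ZS_fst_lt (hm : 0 < m) {z : ℕ × ℕ} (hz : z ∈ ZS ts) : z.1 < m := by
  rw [ZS, Finset.mem_union] at hz
  rcases hz with h | h
  · simp only [Finset.mem_image, Finset.mem_univ, true_and] at h
    obtain ⟨w, hw⟩ := h
    rw [← hw]
    exact w.isLt
  · simp only [Finset.mem_image, Finset.mem_filter, Finset.mem_product] at h
    obtain ⟨q, _, hq⟩ := h
    rw [← hq]
    exact q.1.isLt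

lemma MS_le (hm : 0 < m) : MS G ts pfx ≤ m := by
  apply fmin_le_of le_rfl
  intro x hx
  simp only [Finset.mem_image] at hx
  obtain ⟨z, hz, hzx⟩ := hx
  rw [← hzx]
  exact le_of_lt (ZS_fst_lt hm (Finset.mem_filter.1 hz).1)

lemma MS_le_mPrivL (hm : 0 < m) (pfx : List (Fin a)) (x : Fin a) :
    MS G ts pfx ≤ mPrivL G ts x pfx := by
  apply le_fmin (le_trans (MS_le hm) (by omega))
  intro y hy
  simp only [Finset.mem_image, Finset.mem_filter] at hy
  obtain ⟨z, ⟨hzZS, hzcov, hzr⟩, hzy⟩ := hy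
  rw [← hzy]
  apply fmin_le
  simp only [Finset.mem_image, pendingS, Finset.mem_filter]
  refine ⟨z, ⟨hzZS, ?_⟩, rfl⟩
  intro q hq hcov
  exact absurd hcov.2.2 (not_le.2 (hzr q hq))

lemma AS_step (hm : 0 < m) (pfx : List (Fin a)) (x : Fin a) :
    MS G ts pfx < AS G ts (x :: pfx) := by
  show MS G ts pfx < mPrivL G ts x pfx + 1
  have := MS_le_mPrivL (G := G) (ts := ts) hm pfx x
  omega

lemma windowS_hwin (hm : 0 < m) : ∀ pfx, ∀ x ∈ windowS G ts pfx, AκS G ts pfx ≤ κS G x := by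
  intro pfx x hx
  have h1 := (Finset.mem_filter.1 hx).2.1
  rw [AκS, κS]
  calc AS G ts pfx * a ≤ lu G x * a := Nat.mul_le_mul_right a h1
    _ ≤ lu G x * a + x.val := Nat.le_add_right _ _

lemma windowS_hstep (hm : 0 < m) : ∀ pfx, ∀ x ∈ windowS G ts pfx, ∀ y ∈ windowS G ts pfx,
    ¬ (AκS G ts (x :: pfx) ≤ κS G y) := by
  intro pfx x _ y hy h
  have h2 := (Finset.mem_filter.1 hy).2.2
  have h3 := MS_le_mPrivL (G := G) (ts := ts) hm pfx x
  have h4 : lu G y ≤ mPrivL G ts x pfx := le_trans h2 h3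
  rw [AκS, κS] at h
  have he1 : (lu G y + 1) * a = lu G y * a + a := by ring
  have he2 : (mPrivL G ts x pfx + 1) * a = mPrivL G ts x pfx * a + a := by ring
  have h5 : lu G y * a + y.val < (lu G y + 1) * a := by
    have := y.isLt; omega
  have h6 : (lu G y + 1) * a ≤ (mPrivL G ts x pfx + 1) * a :=
    Nat.mul_le_mul_right a (by omega)
  have h7 : AS G ts (x :: pfx) = mPrivL G ts x pfx + 1 := rfl
  rw [h7] at h
  omega

lemma windowS_hmono (hm : 0 < m) : ∀ pfx, ∀ x ∈ windowS G ts pfx,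
    AκS G ts pfx ≤ AκS G ts (x :: pfx) := by
  intro pfx x hx
  have h1 := (Finset.mem_filter.1 hx).2.1
  have h2 := (Finset.mem_filter.1 hx).2.2
  have h3 := AS_step (G := G) (ts := ts) hm pfx x
  rw [AκS, AκS]
  exact Nat.mul_le_mul_right a (by omega)

variable (G ts)

variable {ss : Finset (Fin a)}

lemma DD_erase_inl (q : Fin a) : DD (ss.erase q) ts = DD ss ts \ {Sum.inl q} := by
  ext v
  cases v with
  | inl u =>
    show u ∈ ss.erase q ↔ (Sum.inl u : Fin a ⊕ Fin m) ∈ (DD ss ts \ {Sum.inl q})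
    rw [Set.mem_diff, Set.mem_singleton_iff, Finset.mem_erase]
    constructor
    · rintro ⟨h1, h2⟩; exact ⟨h2, by simpa using h1⟩
    · rintro ⟨h1, h2⟩; exact ⟨by simpa using h2, h1⟩
  | inr w =>
    show w ∈ ts ↔ (Sum.inr w : Fin a ⊕ Fin m) ∈ (DD ss ts \ {Sum.inl q})
    rw [Set.mem_diff, Set.mem_singleton_iff]
    constructor
    · intro h; exact ⟨h, by simp⟩
    · intro h; exact h.1

lemma not_cds_erase_inl (hmin : IsMinimalCDS G (DD ss ts)) {q : Fin a} (hq : q ∈ ss) :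
    ¬ IsConnectedDominatingSet G (DD (ss.erase q) ts) := by
  rw [DD_erase_inl]
  apply hmin.2
  constructor
  · exact Set.diff_subset
  · intro hsub
    have : (Sum.inl q : Fin a ⊕ Fin m) ∈ DD ss ts \ {Sum.inl q} := hsub hq
    simp at this

variable {G ts}

/-- covering a singleton constraint means adjacency -/
lemma covS_single (hG : ConvexBipartite G) {u : Fin a} {w : Fin m}
    (h : covS G u (w.val, w.val)) : adjU G u w :=
  adj_of_between G hG h.1 h.2.1 h.2.2

lemma covS_pair (hG : ConvexBipartite G) {u : Fin a} {t t' : Fin m} (hle : t ≤ t')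
    (h : covS G u (t.val, t'.val)) : adjU G u t ∧ adjU G u t' := by
  have h1 : adjU G u t := adj_of_between G hG h.1 h.2.1 (le_trans hle h.2.2)
  have h2 : adjU G u t' := adj_of_between G hG h.1 (le_trans h.2.1 hle) h.2.2
  exact ⟨h1, h2⟩

lemma adj_covS_single {u : Fin a} {w : Fin m} (h : adjU G u w) : covS G u (w.val, w.val) :=
  ⟨adj_hasN G h, adj_lu G h, adj_ru G h⟩

lemma adj2_covS_pair {u : Fin a} {t t' : Fin m} (h : adjU G u t) (h' : adjU G u t') :
    covS G u (t.val, t'.val) :=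
  ⟨adj_hasN G h, adj_lu G h, adj_ru G h'⟩

/-- every constraint is covered by some member of `ss` -/
lemma satZ (hG : ConvexBipartite G) (hsat1 : Sat1 G ss) (hsat2 : Sat2 G ss ts)
    {z : ℕ × ℕ} (hz : z ∈ ZS ts) : ∃ u ∈ ss, covS G u z := by
  rw [ZS, Finset.mem_union] at hz
  rcases hz with h | h
  · simp only [Finset.mem_image, Finset.mem_univ, true_and] at h
    obtain ⟨w, hw⟩ := h
    obtain ⟨u, hu, hadj⟩ := hsat1 w
    exact ⟨u, hu, by rw [← hw]; exact adj_covS_single hadj⟩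
  · simp only [Finset.mem_image, Finset.mem_filter, Finset.mem_product] at h
    obtain ⟨q, ⟨⟨hq1, hq2⟩, hqlt, hqcons⟩, hq⟩ := h
    obtain ⟨u, hu, ha1, ha2⟩ := hsat2 q.1 hq1 q.2 hq2 hqlt hqcons
    exact ⟨u, hu, by rw [← hq]; exact adj2_covS_pair ha1 ha2⟩

/-- no member's interval is contained in another member's interval -/
lemma no_nested (hG : ConvexBipartite G) (hts : ts.Nonempty)
    (hmin : IsMinimalCDS G (DD ss ts))
    (hsat1 : Sat1 G ss) (hsat2 : Sat2 G ss ts) (hsat3 : Sat3 G ts)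
    {u v : Fin a} (hu : u ∈ ss) (hv : v ∈ ss) (huv : u ≠ v)
    (hlu : lu G u ≤ lu G v) : ru G v < ru G u → False := by
  intro hru
  -- v's interval is contained in u's: removing v keeps a CDS
  have hsub : ∀ w : Fin m, adjU G v w → adjU G u w := by
    intro w h
    have h1 := adj_lu G h
    have h2 := adj_ru G h
    apply adj_of_between G hG (adj_hasN G (hsat3 u).choose_spec.2)
    · omega
    · omega
  have hsat1' : Sat1 G (ss.erase v) := by
    intro w
    obtain ⟨u0, hu0, hadj⟩ := hsat1 w
    by_cases h : u0 = v
    · subst h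
      exact ⟨u, Finset.mem_erase.2 ⟨huv, hu⟩, hsub w hadj⟩
    · exact ⟨u0, Finset.mem_erase.2 ⟨h, hu0⟩, hadj⟩
  have hsat2' : Sat2 G (ss.erase v) ts := by
    intro t ht t' ht' hlt hcons
    obtain ⟨u0, hu0, ha1, ha2⟩ := hsat2 t ht t' ht' hlt hcons
    by_cases h : u0 = v
    · subst h
      exact ⟨u, Finset.mem_erase.2 ⟨huv, hu⟩, hsub t ha1, hsub t' ha2⟩
    · exact ⟨u0, Finset.mem_erase.2 ⟨h, hu0⟩, ha1, ha2⟩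
  exact not_cds_erase_inl G ts hmin hv
    (cds_of_sats G hG ⟨u, Finset.mem_erase.2 ⟨huv, hu⟩⟩ hts hsat1' hsat2' hsat3)

/-- privacy: each member of a minimal CDS covers a constraint privately -/
lemma privacyS (hG : ConvexBipartite G) (hts : ts.Nonempty)
    (hmin : IsMinimalCDS G (DD ss ts))
    (hsat1 : Sat1 G ss) (hsat2 : Sat2 G ss ts) (hsat3 : Sat3 G ts)
    {q x : Fin a} (hq : q ∈ ss) (hx : x ∈ ss) (hqx : x ≠ q) :
    ∃ z ∈ ZS ts, covS G q z ∧ ∀ u ∈ ss, u ≠ q → ¬ covS G u z := by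
  by_contra hno
  push_neg at hno
  have hno' : ∀ z ∈ ZS ts, covS G q z → ∃ u ∈ ss, u ≠ q ∧ covS G u z := by
    intro z hz hcov
    obtain ⟨u, hu, hune, hucov⟩ := hno z hz hcov
    exact ⟨u, hu, hune, hucov⟩
  have hsat1' : Sat1 G (ss.erase q) := by
    intro w
    obtain ⟨u0, hu0, hadj⟩ := hsat1 w
    by_cases h : u0 = q
    · subst h
      have hzmem : ((w.val, w.val) : ℕ × ℕ) ∈ ZS ts := by
        rw [ZS, Finset.mem_union]
        left
        simp only [Finset.mem_image, Finset.mem_univ, true_and]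
        exact ⟨w, rfl⟩
      obtain ⟨u, hu, hune, hucov⟩ := hno' _ hzmem (adj_covS_single hadj)
      exact ⟨u, Finset.mem_erase.2 ⟨hune, hu⟩, covS_single hG hucov⟩
    · exact ⟨u0, Finset.mem_erase.2 ⟨h, hu0⟩, hadj⟩
  have hsat2' : Sat2 G (ss.erase q) ts := by
    intro t ht t' ht' hlt hcons
    obtain ⟨u0, hu0, ha1, ha2⟩ := hsat2 t ht t' ht' hlt hcons
    by_cases h : u0 = q
    · subst h
      have hzmem : ((t.val, t'.val) : ℕ × ℕ) ∈ ZS ts := by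
        rw [ZS, Finset.mem_union]
        right
        simp only [Finset.mem_image, Finset.mem_filter, Finset.mem_product]
        exact ⟨(t, t'), ⟨⟨ht, ht'⟩, hlt, hcons⟩, rfl⟩
      obtain ⟨u, hu, hune, hucov⟩ := hno' _ hzmem (adj2_covS_pair ha1 ha2)
      obtain ⟨hb1, hb2⟩ := covS_pair hG (le_of_lt hlt) hucov
      exact ⟨u, Finset.mem_erase.2 ⟨hune, hu⟩, hb1, hb2⟩
    · exact ⟨u0, Finset.mem_erase.2 ⟨h, hu0⟩, ha1, ha2⟩
  exact not_cds_erase_inl G ts hmin hq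
    (cds_of_sats G hG ⟨x, Finset.mem_erase.2 ⟨hqx, hx⟩⟩ hts hsat1' hsat2' hsat3)

lemma lu_lt {u : Fin a} (hu : hasN G u) : lu G u < m := by
  rw [lu, fmin, dif_pos (hu.image Fin.val)]
  obtain ⟨w, hw, hwv⟩ := Finset.mem_image.1 (Finset.min'_mem ((nbrF G u).image Fin.val) _)
  rw [← hwv]; exact w.isLt

/-- the invariant for peeling `ss` -/
def PS (ss : Finset (Fin a)) (G : SimpleGraph (Fin a ⊕ Fin m)) (pfx : List (Fin a))
    (C : Finset (Fin a)) : Prop :=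
  (∀ p ∈ pfx, p ∈ ss) ∧ (∀ y ∈ C, y ∈ ss) ∧ (∀ u ∈ ss, u ∈ C ∨ u ∈ pfx) ∧
    pfx.Pairwise (fun p r => κS G r < κS G p) ∧ (∀ p ∈ pfx, ∀ y ∈ C, κS G p < κS G y)

theorem sside_chain (hG : ConvexBipartite G) (hss : ss.Nonempty) (hts : ts.Nonempty)
    (hmin : IsMinimalCDS G (DD ss ts)) :
    IsChainAux (κS G) (windowS G ts) [] ss := by
  obtain ⟨hsat1, hsat2, hsat3⟩ := sats_of_mincds G hG hss hts hmin.1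
  have hasN_mem : ∀ u : Fin a, hasN G u := by
    intro u
    obtain ⟨t, _, hadj⟩ := hsat3 u
    exact adj_hasN G hadj
  apply isChainAux_of_inv (κS G) (windowS G ts) (PS ss G) _ ss.card ss le_rfl []
  · exact ⟨by simp, fun y hy => hy, fun u hu => Or.inl hu, List.Pairwise.nil, by simp⟩
  · intro pfx C hC hP
    obtain ⟨hpfx, hCss, hcover, hpw, hplt⟩ := hP
    set x := pick (κS G) C hC with hxdef
    have hxC : x ∈ C := pick_mem _ _ _
    have hxss : x ∈ ss := hCss x hxC
    have hxmin : ∀ y ∈ C, κS G x ≤ κS G y := pick_min _ C hC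
    have hwinmem : x ∈ windowS G ts pfx := by
      simp only [windowS, Finset.mem_filter, Finset.mem_univ, true_and]
      constructor
      · -- lower bound AS
        cases pfx with
        | nil => simp [AS]
        | cons q rest =>
          have hqss : q ∈ ss := hpfx q (List.mem_cons_self)
          have hκqx : κS G q < κS G x := hplt q (List.mem_cons_self) x hxC
          have hxq : x ≠ q := by
            intro h; rw [h] at hκqx; exact lt_irrefl _ hκqx
          obtain ⟨z, hzZS, hzq, hzpriv⟩ :=
            privacyS hG hts hmin hsat1 hsat2 hsat3 hqss hxss hxq
          have hmp : mPrivL G ts q rest ≤ z.1 := by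
            apply fmin_le
            simp only [Finset.mem_image, Finset.mem_filter]
            refine ⟨z, ⟨hzZS, hzq, ?_⟩, rfl⟩
            intro p hp
            have hpss : p ∈ ss := hpfx p (List.mem_cons.2 (Or.inr hp))
            have hκpq : κS G p < κS G q := (List.pairwise_cons.1 hpw).1 p hp
            have hpq : p ≠ q := by
              intro h; rw [h] at hκpq; exact lt_irrefl _ hκpq
            have hnc := hzpriv p hpss hpq
            by_contra hc
            push_neg at hc
            exact hnc ⟨hasN_mem p, le_trans (le_trans (κS_lu_le hκpq) hzq.2.1) le_rfl, hc⟩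
          have hzx : z.1 < lu G x := by
            by_contra hc
            push_neg at hc
            apply hzpriv x hxss hxq
            refine ⟨hasN_mem x, hc, ?_⟩
            have hrux : ru G x < ru G q → False :=
              no_nested hG hts hmin hsat1 hsat2 hsat3 hqss hxss
                (Ne.symm hxq) (κS_lu_le hκqx)
            have : ru G q ≤ ru G x := by
              by_contra hc2; push_neg at hc2; exact hrux hc2
            exact le_trans hzq.2.2 this
          show mPrivL G ts q rest + 1 ≤ lu G x
          omega
      · -- upper bound MS
        apply le_fmin (le_of_lt (lu_lt (hasN_mem x)))
        intro y hy
        simp only [Finset.mem_image, pendingS, Finset.mem_filter] at hy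
        obtain ⟨z, ⟨hzZS, hzpend⟩, hzy⟩ := hy
        obtain ⟨u0, hu0, hu0cov⟩ := satZ hG hsat1 hsat2 hzZS
        have hu0C : u0 ∈ C := by
          rcases hcover u0 hu0 with h | h
          · exact h
          · exact absurd hu0cov (hzpend u0 h)
        rw [← hzy]
        exact le_trans (κS_lu_le' (hxmin u0 hu0C)) hu0cov.2.1
    refine ⟨hwinmem, ?_, ?_, ?_, ?_, ?_⟩
    · intro p hp
      rcases List.mem_cons.1 hp with h | h
      · subst h; exact hxss
      · exact hpfx p h
    · intro y hy
      exact hCss y (Finset.mem_of_mem_erase hy)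
    · intro u hu
      rcases hcover u hu with hsC | hspfx
      · by_cases hsx : u = x
        · exact Or.inr (by subst hsx; exact List.mem_cons_self)
        · exact Or.inl (Finset.mem_erase.2 ⟨hsx, hsC⟩)
      · exact Or.inr (List.mem_cons.2 (Or.inr hspfx))
    · rw [List.pairwise_cons]
      exact ⟨fun p hp => hplt p hp x hxC, hpw⟩
    · intro p hp y hy
      have hyC : y ∈ C := Finset.mem_of_mem_erase hy
      rcases List.mem_cons.1 hp with h | h
      · subst h
        rcases lt_or_eq_of_le (hxmin y hyC) with hc | hc
        · exact hc
        · exact absurd (κS_inj hc).symm (Finset.mem_erase.1 hy).1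
      · exact hplt p h y hyC

/-- the fiber of minimal CDS with a fixed `W`-part -/
def SFiber (G : SimpleGraph (Fin a ⊕ Fin m)) (ts : Finset (Fin m)) : Finset (Finset (Fin a)) :=
  Finset.univ.filter (fun ss => ss.Nonempty ∧ IsMinimalCDS G (DD ss ts))

theorem sfiber_bound (hG : ConvexBipartite G) (hts : ts.Nonempty) (hm : 0 < m) :
    ((SFiber G ts).card : ℝ) ≤ 14 * 1.48 ^ a := by
  have hν : νcap (κS G) (AκS G ts) [] = a := by
    rw [νcap]
    have : (Finset.univ.filter (fun v : Fin a => AκS G ts [] ≤ κS G v)) = Finset.univ := by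
      apply Finset.filter_true_of_mem
      intro v _
      show AκS G ts [] ≤ κS G v
      show AS G ts [] * a ≤ κS G v
      simp [AS]
    rw [this, Finset.card_univ, Fintype.card_fin]
  have := chain_count (κS G) (windowS G ts) (AκS G ts)
    (windowS_hwin hm) (windowS_hstep hm) (windowS_hmono hm) κS_inj a []
    (le_of_eq hν) (SFiber G ts) ?_
  · rw [hν] at this
    exact this
  · intro C hC
    simp only [SFiber, Finset.mem_filter, Finset.mem_univ, true_and] at hC
    exact sside_chain hG hC.1 hts hC.2

end SSide

/-! ### assembly -/

section Assembly

variable {a m : ℕ} (G : SimpleGraph (Fin a ⊕ Fin m))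

def ssOf (D : Set (Fin a ⊕ Fin m)) : Finset (Fin a) :=
  Finset.univ.filter (fun u => Sum.inl u ∈ D)

def tsOf (D : Set (Fin a ⊕ Fin m)) : Finset (Fin m) :=
  Finset.univ.filter (fun w => Sum.inr w ∈ D)

lemma DD_of (D : Set (Fin a ⊕ Fin m)) : DD (ssOf D) (tsOf D) = D := by
  ext v
  cases v with
  | inl u =>
    show u ∈ ssOf D ↔ _
    simp [ssOf]
  | inr w =>
    show w ∈ tsOf D ↔ _
    simp [tsOf]

def Dmain : Finset (Finset (Fin a) × Finset (Fin m)) :=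
  Finset.univ.filter (fun p => p.1.Nonempty ∧ p.2.Nonempty ∧ IsMinimalCDS G (DD p.1 p.2))

def Ddeg : Finset (Finset (Fin a) × Finset (Fin m)) :=
  Finset.univ.filter (fun p => (p.1 = ∅ ∨ p.2 = ∅) ∧ IsMinimalCDS G (DD p.1 p.2))

variable {G}

lemma ddeg_sub (hG : ConvexBipartite G) :
    Ddeg G ⊆ {((Finset.univ : Finset (Fin a)), (∅ : Finset (Fin m))),
      ((∅ : Finset (Fin a)), (Finset.univ : Finset (Fin m)))} := by
  intro p hp
  simp only [Ddeg, Finset.mem_filter, Finset.mem_univ, true_and] at hp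
  obtain ⟨hcase, hmin⟩ := hp
  obtain ⟨hdom, _⟩ := hmin.1
  rcases hcase with h1 | h2
  · have hall : p.2 = Finset.univ := by
      apply Finset.eq_univ_of_forall
      intro w
      rcases hdom (Sum.inr w) with hmem | ⟨d, hd, hadj⟩
      · exact hmem
      · cases d with
        | inl u =>
          rw [h1] at hd
          exact (Finset.notMem_empty u hd).elim
        | inr w' => exact absurd hadj (hG.2.1 w' w)
    have : p = (∅, Finset.univ) := Prod.ext h1 hall
    rw [this]
    simp
  · have hall : p.1 = Finset.univ := by
      apply Finset.eq_univ_of_forall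
      intro u
      rcases hdom (Sum.inl u) with hmem | ⟨d, hd, hadj⟩
      · exact hmem
      · cases d with
        | inr w =>
          rw [h2] at hd
          exact (Finset.notMem_empty w hd).elim
        | inl u' => exact absurd hadj (hG.1 u' u)
    have : p = (Finset.univ, ∅) := Prod.ext hall h2
    rw [this]
    simp

lemma ddeg_card (hG : ConvexBipartite G) : (Ddeg G).card ≤ 2 :=
  le_trans (Finset.card_le_card (ddeg_sub hG)) (Finset.card_insert_le _ _ |>.trans (by simp))

lemma dmain_bound1 (hG : ConvexBipartite G) :
    ((Dmain G).card : ℝ) ≤ 2^a * (14 * 1.48^m) := by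
  have hsum : (Dmain G).card = ∑ ss ∈ (Finset.univ : Finset (Finset (Fin a))),
      ((Dmain G).filter (fun p => p.1 = ss)).card :=
    Finset.card_eq_sum_card_fiberwise (fun p _ => Finset.mem_univ _)
  have hfiber : ∀ ss : Finset (Fin a),
      (((Dmain G).filter (fun p => p.1 = ss)).card : ℝ) ≤ 14 * 1.48^m := by
    intro ss
    by_cases hne : ((Dmain G).filter (fun p => p.1 = ss)).Nonempty
    · obtain ⟨p₀, hp₀⟩ := hne
      have hp₀' := Finset.mem_filter.1 hp₀
      have hssne : ss.Nonempty := by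
        rw [← hp₀'.2]
        exact (Finset.mem_filter.1 hp₀'.1).2.1
      have hinj : Set.InjOn (fun p : Finset (Fin a) × Finset (Fin m) => p.2)
          ↑((Dmain G).filter (fun p => p.1 = ss)) := by
        intro p1 h1 p2 h2 heq
        have e1 := (Finset.mem_filter.1 h1).2
        have e2 := (Finset.mem_filter.1 h2).2
        exact Prod.ext (e1.trans e2.symm) heq
      have himg : ((Dmain G).filter (fun p => p.1 = ss)).image Prod.snd ⊆ TFiber G ss := by
        intro ts hts
        obtain ⟨p, hp, hpeq⟩ := Finset.mem_image.1 hts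
        have hp1 := Finset.mem_filter.1 hp
        have hp2 := Finset.mem_filter.1 hp1.1
        simp only [TFiber, Finset.mem_filter, Finset.mem_univ, true_and]
        rw [← hpeq, ← hp1.2]
        exact ⟨hp2.2.2.1, hp2.2.2.2⟩
      have hcard : ((Dmain G).filter (fun p => p.1 = ss)).card ≤ (TFiber G ss).card := by
        calc ((Dmain G).filter (fun p => p.1 = ss)).card
            = (((Dmain G).filter (fun p => p.1 = ss)).image Prod.snd).card :=
              (Finset.card_image_of_injOn hinj).symm
          _ ≤ (TFiber G ss).card := Finset.card_le_card himg
      calc (((Dmain G).filter (fun p => p.1 = ss)).card : ℝ)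
          ≤ ((TFiber G ss).card : ℝ) := by exact_mod_cast hcard
        _ ≤ 14 * 1.48^m := tfiber_bound hG hssne
    · rw [Finset.not_nonempty_iff_eq_empty] at hne
      rw [hne]
      simp
      positivity
  calc ((Dmain G).card : ℝ)
      = ∑ ss ∈ (Finset.univ : Finset (Finset (Fin a))),
        (((Dmain G).filter (fun p => p.1 = ss)).card : ℝ) := by
        rw [hsum]; push_cast; rfl
    _ ≤ ∑ _ss ∈ (Finset.univ : Finset (Finset (Fin a))), (14 * 1.48^m : ℝ) :=
        Finset.sum_le_sum (fun ss _ => hfiber ss)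
    _ = 2^a * (14 * 1.48^m) := by
        rw [Finset.sum_const, Finset.card_univ, Fintype.card_finset, Fintype.card_fin]
        simp [nsmul_eq_mul]

lemma dmain_bound2 (hG : ConvexBipartite G) :
    ((Dmain G).card : ℝ) ≤ 2^m * (14 * 1.48^a) := by
  have hsum : (Dmain G).card = ∑ ts ∈ (Finset.univ : Finset (Finset (Fin m))),
      ((Dmain G).filter (fun p => p.2 = ts)).card :=
    Finset.card_eq_sum_card_fiberwise (fun p _ => Finset.mem_univ _)
  have hfiber : ∀ ts : Finset (Fin m),
      (((Dmain G).filter (fun p => p.2 = ts)).card : ℝ) ≤ 14 * 1.48^a := by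
    intro ts
    by_cases hne : ((Dmain G).filter (fun p => p.2 = ts)).Nonempty
    · obtain ⟨p₀, hp₀⟩ := hne
      have hp₀' := Finset.mem_filter.1 hp₀
      have htsne : ts.Nonempty := by
        rw [← hp₀'.2]
        exact (Finset.mem_filter.1 hp₀'.1).2.2.1
      have hm : 0 < m := by
        obtain ⟨t, _⟩ := htsne
        have := t.isLt
        omega
      have hinj : Set.InjOn (fun p : Finset (Fin a) × Finset (Fin m) => p.1)
          ↑((Dmain G).filter (fun p => p.2 = ts)) := by
        intro p1 h1 p2 h2 heq
        have e1 := (Finset.mem_filter.1 h1).2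
        have e2 := (Finset.mem_filter.1 h2).2
        exact Prod.ext heq (e1.trans e2.symm)
      have himg : ((Dmain G).filter (fun p => p.2 = ts)).image Prod.fst ⊆ SFiber G ts := by
        intro ss hss
        obtain ⟨p, hp, hpeq⟩ := Finset.mem_image.1 hss
        have hp1 := Finset.mem_filter.1 hp
        have hp2 := Finset.mem_filter.1 hp1.1
        simp only [SFiber, Finset.mem_filter, Finset.mem_univ, true_and]
        rw [← hpeq, ← hp1.2]
        exact ⟨hp2.2.1, hp2.2.2.2⟩
      have hcard : ((Dmain G).filter (fun p => p.2 = ts)).card ≤ (SFiber G ts).card := by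
        calc ((Dmain G).filter (fun p => p.2 = ts)).card
            = (((Dmain G).filter (fun p => p.2 = ts)).image Prod.fst).card :=
              (Finset.card_image_of_injOn hinj).symm
          _ ≤ (SFiber G ts).card := Finset.card_le_card himg
      calc (((Dmain G).filter (fun p => p.2 = ts)).card : ℝ)
          ≤ ((SFiber G ts).card : ℝ) := by exact_mod_cast hcard
        _ ≤ 14 * 1.48^a := sfiber_bound hG htsne hm
    · rw [Finset.not_nonempty_iff_eq_empty] at hne
      rw [hne]
      simp
      positivity
  calc ((Dmain G).card : ℝ)
      = ∑ ts ∈ (Finset.univ : Finset (Finset (Fin m))),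
        (((Dmain G).filter (fun p => p.2 = ts)).card : ℝ) := by
        rw [hsum]; push_cast; rfl
    _ ≤ ∑ _ts ∈ (Finset.univ : Finset (Finset (Fin m))), (14 * 1.48^a : ℝ) :=
        Finset.sum_le_sum (fun ts _ => hfiber ts)
    _ = 2^m * (14 * 1.48^a) := by
        rw [Finset.sum_const, Finset.card_univ, Fintype.card_finset, Fintype.card_fin]
        simp [nsmul_eq_mul]

lemma total_bound (hG : ConvexBipartite G) :
    (({D : Set (Fin a ⊕ Fin m) | IsMinimalCDS G D}.ncard : ℝ)) ≤
      ((Dmain G).card : ℝ) + 2 := by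
  set 𝒮 := {D : Set (Fin a ⊕ Fin m) | IsMinimalCDS G D} with h𝒮
  set φ : Set (Fin a ⊕ Fin m) → Finset (Fin a) × Finset (Fin m) :=
    fun D => (ssOf D, tsOf D) with hφdef
  have hφ : Function.Injective φ := by
    intro D1 D2 h
    have e1 : ssOf D1 = ssOf D2 := congrArg Prod.fst h
    have e2 : tsOf D1 = tsOf D2 := congrArg Prod.snd h
    rw [← DD_of D1, ← DD_of D2, e1, e2]
  have himg : φ '' 𝒮 ⊆ ↑(Dmain G ∪ Ddeg G) := by
    rintro p ⟨D, hD, rfl⟩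
    have hmin : IsMinimalCDS G D := hD
    rw [← DD_of D] at hmin
    rw [Finset.coe_union, Set.mem_union]
    by_cases hcase : (ssOf D).Nonempty ∧ (tsOf D).Nonempty
    · left
      rw [Finset.mem_coe]
      simp only [Dmain, Finset.mem_filter, Finset.mem_univ, true_and]
      exact ⟨hcase.1, hcase.2, hmin⟩
    · right
      rw [Finset.mem_coe]
      simp only [Ddeg, Finset.mem_filter, Finset.mem_univ, true_and]
      refine ⟨?_, hmin⟩
      rw [Finset.nonempty_iff_ne_empty, Finset.nonempty_iff_ne_empty] at hcase
      tauto
  have h1 : 𝒮.ncard = (φ '' 𝒮).ncard := (Set.ncard_image_of_injective 𝒮 hφ).symm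
  have h2 : (φ '' 𝒮).ncard ≤ (Dmain G ∪ Ddeg G).card := by
    have := Set.ncard_le_ncard himg (Finset.finite_toSet _)
    rwa [Set.ncard_coe_finset] at this
  have h3 : (Dmain G ∪ Ddeg G).card ≤ (Dmain G).card + (Ddeg G).card :=
    Finset.card_union_le _ _
  have h4 := ddeg_card hG
  have : 𝒮.ncard ≤ (Dmain G).card + 2 := by omega
  calc ((𝒮.ncard : ℝ)) ≤ (((Dmain G).card + 2 : ℕ) : ℝ) := by exact_mod_cast this
    _ = ((Dmain G).card : ℝ) + 2 := by push_cast; ring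

end Assembly

end GraphSetup

end MCDS

/-- There is a constant `C > 0` such that every convex bipartite graph on `n ≥ 1` vertices
has at most `C * 1.7254 ^ n` minimal connected dominating sets. -/
theorem mcds_upper_bound_convex_bipartite :
    ∃ C : ℝ, 0 < C ∧
      ∀ n : ℕ, 0 < n → ∀ a m : ℕ, a + m = n →
        ∀ G : SimpleGraph (Fin a ⊕ Fin m), ConvexBipartite G →
          (({D : Set (Fin a ⊕ Fin m) | IsMinimalCDS G D}.ncard : ℝ)) ≤
            C * 1.7254 ^ n := by
  refine ⟨16, by norm_num, ?_⟩
  intro n hn a m hnm G hG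
  have hb1 := MCDS.dmain_bound1 (G := G) hG
  have hb2 := MCDS.dmain_bound2 (G := G) hG
  have htot := MCDS.total_bound (G := G) hG
  set X := ((MCDS.Dmain G).card : ℝ) with hX
  have hXnn : 0 ≤ X := Nat.cast_nonneg _
  have hY : (0:ℝ) ≤ 14 * 1.7254 ^ n := by positivity
  have hsq : X^2 ≤ (14 * 1.7254 ^ n)^2 := by
    have hprod : X^2 ≤ (2^a * (14 * 1.48^m)) * (2^m * (14 * 1.48^a)) := by
      have hp1 : (0:ℝ) ≤ 2^a * (14 * 1.48^m) := by positivity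
      nlinarith
    have e1 : (2:ℝ)^a * 2^m = 2^n := by rw [← pow_add, hnm]
    have e2 : (1.48:ℝ)^m * 1.48^a = 1.48^n := by
      rw [← pow_add]
      congr 1
      omega
    have heqq : (2^a * (14 * (1.48:ℝ)^m)) * (2^m * (14 * 1.48^a))
        = 196 * (2^n * (1.48:ℝ)^n) := by
      rw [← e1, ← e2]; ring
    have e3 : (2:ℝ)^n * 1.48^n = (2.96:ℝ)^n := by
      rw [← mul_pow]; norm_num
    have hle : ((2.96:ℝ))^n ≤ (((1.7254:ℝ)^2))^n := by
      apply pow_le_pow_left₀ (by norm_num) (by norm_num)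
    have heq2 : (14 * (1.7254:ℝ)^n)^2 = 196 * (((1.7254:ℝ)^2))^n := by
      rw [mul_pow, ← pow_mul, ← pow_mul, mul_comm n 2]
      norm_num
    rw [heq2]
    calc X^2 ≤ 196 * (2^n * (1.48:ℝ)^n) := by rw [← heqq]; exact hprod
      _ = 196 * (2.96:ℝ)^n := by rw [e3]
      _ ≤ 196 * (((1.7254:ℝ)^2))^n := by nlinarith
  have hXle : X ≤ 14 * 1.7254 ^ n := by
    nlinarith [sq_nonneg (X - 14 * 1.7254 ^ n), sq_nonneg (X + 14 * 1.7254 ^ n)]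
  have hpow1 : (1:ℝ) ≤ 1.7254 ^ n := one_le_pow₀ (by norm_num)
  calc (({D : Set (Fin a ⊕ Fin m) | IsMinimalCDS G D}.ncard : ℝ))
      ≤ X + 2 := htot
    _ ≤ 14 * 1.7254 ^ n + 2 := by linarith
    _ ≤ 16 * 1.7254 ^ n := by linarith
end

section
/- Let G be a graph with at least one vertex and let D be a connected dominating set of G. Then D is a minimal connected dominating set of G if and only if for every v ∈ D, either v has a private neighbor with respect to D, or v is a cut vertex of the induced subgraph G[D] (i.e. G[D \ {v}] is disconnected). -/
lemma induce_connected_of_dominating {V : Type*} (G : SimpleGraph V) (D' S : Set V)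
    (hsub : D' ⊆ S) (hconn : (G.induce D').Connected)
    (hdom : ∀ s ∈ S, s ∈ D' ∨ ∃ u ∈ D', G.Adj u s) :
    (G.induce S).Connected := by
  rw [SimpleGraph.connected_iff]
  let hom : G.induce D' →g G.induce S :=
    ⟨fun x => ⟨x.1, hsub x.2⟩, fun {a b} h => h⟩
  have key : ∀ a : V, ∀ ha : a ∈ S, ∃ u : V, ∃ hu : u ∈ D',
      (G.induce S).Reachable ⟨a, ha⟩ ⟨u, hsub hu⟩ := by
    intro a ha
    rcases hdom a ha with h | ⟨u, hu, hadj⟩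
    · exact ⟨a, h, SimpleGraph.Reachable.refl _⟩
    · exact ⟨u, hu, (SimpleGraph.Adj.reachable (by exact hadj.symm : (G.induce S).Adj ⟨a, ha⟩ ⟨u, hsub hu⟩))⟩
  constructor
  · rintro ⟨a, ha⟩ ⟨b, hb⟩
    obtain ⟨u, hu, hru⟩ := key a ha
    obtain ⟨w, hw, hrw⟩ := key b hb
    have : (G.induce S).Reachable ⟨u, hsub hu⟩ ⟨w, hsub hw⟩ := by
      have := hconn.preconnected ⟨u, hu⟩ ⟨w, hw⟩
      exact this.map hom
    exact hru.trans (this.trans hrw.symm)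
  · obtain ⟨⟨x, hx⟩⟩ := hconn.nonempty
    exact ⟨⟨x, hsub hx⟩⟩


/-- A connected dominating set `D` of a graph `G` (with at least one vertex) is minimal
if and only if every `v ∈ D` has a private neighbor with respect to `D` (a vertex
dominated by `{v}` but not by `D \ {v}`) or is a cut vertex of the induced subgraph
`G[D]` (i.e. `G[D \ {v}]` is disconnected). -/
theorem mcds_iff_private_or_cut {V : Type*} [Fintype V] [Nonempty V]
    (G : SimpleGraph V) (D : Set V) (hD : IsConnectedDominatingSet G D) :
    IsMinimalCDS G D ↔
      ∀ v ∈ D,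
        (∃ x : V, (x = v ∨ G.Adj v x) ∧
          ¬ (x ∈ D \ {v} ∨ ∃ y ∈ D \ {v}, G.Adj y x)) ∨
        ¬ (G.induce (D \ {v})).Connected := by
  constructor
  · rintro ⟨-, hmin⟩ v hv
    by_contra hcon
    push_neg at hcon
    obtain ⟨hp, hc⟩ := hcon
    apply hmin (D \ {v}) (Set.sdiff_singleton_ssubset.mpr hv)
    refine ⟨fun x => ?_, hc⟩
    by_contra hnd
    push_neg at hnd
    obtain ⟨hnd1, hnd2⟩ := hnd
    have hnpv := hp x
    have hxdom := hD.1 x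
    rcases hxdom with hxD | ⟨u, huD, hadj⟩
    · have hxv : x = v := by
        by_contra hne
        exact hnd1 ⟨hxD, hne⟩
      have := hnpv (Or.inl hxv)
      rcases this with h | ⟨y, hy, hyx⟩
      · exact hnd1 h
      · exact hnd2 y hy hyx
    · by_cases huv : u = v
      · subst huv
        have := hnpv (Or.inr hadj)
        rcases this with h | ⟨y, hy, hyx⟩
        · exact hnd1 h
        · exact hnd2 y hy hyx
      · exact hnd2 u ⟨huD, huv⟩ hadj
  · intro h
    refine ⟨hD, fun D' hss hcds' => ?_⟩
    obtain ⟨v, hvD, hvD'⟩ := Set.exists_of_ssubset hss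
    have hsub : D' ⊆ D \ {v} := fun x hx =>
      ⟨hss.subset hx, fun hxv => hvD' (hxv ▸ hx)⟩
    rcases h v hvD with ⟨x, _, hnx⟩ | hncon
    · apply hnx
      rcases hcds'.1 x with hxD' | ⟨u, huD', hadj⟩
      · exact Or.inl (hsub hxD')
      · exact Or.inr ⟨u, hsub huD', hadj⟩
    · exact hncon (induce_connected_of_dominating G D' (D \ {v}) hsub hcds'.2
        (fun s _ => hcds'.1 s))
end

section
/- Let G = (U, W, E) be a convex bipartite graph with |U| ≥ 2 and |W| ≥ 2, with W ordered as w_1 < w_2 < ... < w_{|W|}, and let D be a minimal connected dominating set of G. Then |N(w_1) ∩ D| = 1, i.e. exactly one neighbor of the smallest vertex w_1 of W belongs to D. -/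
/-- Key rerouting lemma: if every neighbor of `u` (other than `u'`) is also a neighbor
of `u'`, then every vertex of `D \ {u}` is reachable from `u'` in the graph induced on
`D \ {u}`, provided it was reachable from `u'` in the graph induced on `D`. -/
lemma aux_reach {V : Type*} (G : SimpleGraph V) (D : Set V) (u u' : V)
    (hu' : u' ∈ D) (hne : u ≠ u')
    (hsub : ∀ v, v ≠ u' → G.Adj u v → G.Adj u' v) :
    ∀ (x y : ↥D) (_ : (G.induce D).Walk x y) (hxu : (x : V) ≠ u) (_ : (y : V) = u'),
      (G.induce (D \ {u})).Reachable ⟨x, x.2, hxu⟩ ⟨u', hu', Ne.symm hne⟩ := by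
  intro x y p
  induction p with
  | nil =>
    intro hxu hy
    subst hy
    exact SimpleGraph.Reachable.refl _
  | @cons s z t h p ih =>
    intro hxu hy
    by_cases hxu' : (s : V) = u'
    · have : (⟨(s : V), (s : ↥D).2, hxu⟩ : ↥(D \ {u})) = ⟨u', hu', Ne.symm hne⟩ :=
        Subtype.ext hxu'
      rw [this]
    · by_cases hz : (z : V) = u
      · have hadj : G.Adj (s : V) (z : V) := h
        rw [hz] at hadj
        have h2 : G.Adj u' (s : V) := hsub s hxu' hadj.symm
        exact SimpleGraph.Adj.reachable
          (show (G.induce (D \ {u})).Adj ⟨s, s.2, hxu⟩ ⟨u', hu', Ne.symm hne⟩ from h2.symm)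
      · exact (SimpleGraph.Adj.reachable
          (show (G.induce (D \ {u})).Adj ⟨s, s.2, hxu⟩ ⟨z, z.2, hz⟩ from h)).trans (ih hz hy)

/-- If `u`'s neighbors (other than `u'`) are all neighbors of `u'` and both lie in a
connected dominating set `D`, then `D \ {u}` is still a connected dominating set. -/
lemma remove_one {V : Type*} (G : SimpleGraph V) (D : Set V)
    (hD : IsConnectedDominatingSet G D) (u u' : V) (hu : u ∈ D) (hu' : u' ∈ D)
    (hne : u ≠ u')
    (hsub : ∀ v, v ≠ u' → G.Adj u v → G.Adj u' v) :
    IsConnectedDominatingSet G (D \ {u}) := by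
  obtain ⟨hdom, hconn⟩ := hD
  -- `u` has a neighbor in `D` distinct from `u`
  have hnbr : ∃ z, z ∈ D ∧ z ≠ u ∧ G.Adj z u := by
    obtain ⟨p⟩ := hconn.preconnected ⟨u, hu⟩ ⟨u', hu'⟩
    have hnn : ¬ p.Nil := SimpleGraph.Walk.not_nil_of_ne (by
      intro hcon
      exact hne (congrArg Subtype.val hcon))
    have hadj : (G.induce D).Adj ⟨u, hu⟩ (p.getVert 1) := p.adj_snd hnn
    have hadj' : G.Adj u ((p.getVert 1 : ↥D) : V) := hadj
    exact ⟨_, (p.getVert 1).2, (G.ne_of_adj hadj').symm, hadj'.symm⟩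
  constructor
  · -- domination
    intro v
    rcases hdom v with hv | ⟨z, hz, hadj⟩
    · by_cases hvu : v = u
      · right
        obtain ⟨z, hzD, hzu, hadj⟩ := hnbr
        exact ⟨z, ⟨hzD, hzu⟩, hvu ▸ hadj⟩
      · exact Or.inl ⟨hv, hvu⟩
    · by_cases hzu : z = u
      · subst hzu
        by_cases hvu' : v = u'
        · exact Or.inl ⟨hvu' ▸ hu', hvu' ▸ Ne.symm hne⟩
        · exact Or.inr ⟨u', ⟨hu', Ne.symm hne⟩, hsub v hvu' hadj⟩
      · exact Or.inr ⟨z, ⟨hz, hzu⟩, hadj⟩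
  · -- connectedness
    rw [SimpleGraph.connected_iff_exists_forall_reachable]
    refine ⟨⟨u', hu', Ne.symm hne⟩, ?_⟩
    intro b
    obtain ⟨p⟩ := hconn.preconnected ⟨(b : V), b.2.1⟩ ⟨u', hu'⟩
    have := aux_reach G D u u' hu' hne hsub ⟨(b : V), b.2.1⟩ ⟨u', hu'⟩ p b.2.2 rfl
    exact this.symm

/-- In a convex bipartite graph with `|U| ≥ 2` and `|W| ≥ 2`, every minimal connected
dominating set contains exactly one neighbor of the smallest vertex `w₁` of `W`. -/
theorem mcds_first_vertex_one_neighbor {a m : ℕ} (ha : 2 ≤ a) (hm : 2 ≤ m)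
    (G : SimpleGraph (Fin a ⊕ Fin m)) (hG : ConvexBipartite G)
    (D : Set (Fin a ⊕ Fin m)) (hD : IsMinimalCDS G D)
    (w₁ : Fin m) (hw₁ : ∀ w : Fin m, w₁ ≤ w) :
    (G.neighborSet (Sum.inr w₁) ∩ D).ncard = 1 := by
  classical
  obtain ⟨⟨hdom, hconn⟩, hmin⟩ := hD
  obtain ⟨hUU, hWW, hconv⟩ := hG
  -- a second vertex of W
  have hw1val : w₁ = ⟨0, by omega⟩ := by
    have h1 : w₁ ≤ (⟨0, by omega⟩ : Fin m) := hw₁ _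
    have h2 : (⟨0, by omega⟩ : Fin m) ≤ w₁ := by
      simp [Fin.le_def]
    exact le_antisymm h1 h2
  set w' : Fin m := ⟨1, by omega⟩ with hw'def
  have hw'ne : w' ≠ w₁ := by
    rw [hw1val]
    simp [hw'def, Fin.ext_iff]
  -- D contains some vertex other than inr w₁
  have hDother : ∃ d ∈ D, d ≠ Sum.inr w₁ := by
    rcases hdom (Sum.inr w') with hd | ⟨z, hz, hadj⟩
    · exact ⟨_, hd, by simp [hw'ne]⟩
    · refine ⟨z, hz, ?_⟩
      intro h
      subst h
      exact hWW w₁ w' hadj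
  -- D contains a neighbor of inr w₁
  have hex : ∃ d ∈ D, G.Adj (Sum.inr w₁) d := by
    rcases hdom (Sum.inr w₁) with hmem | ⟨z, hz, hadj⟩
    · obtain ⟨d, hd, hdw⟩ := hDother
      obtain ⟨p⟩ := hconn.preconnected ⟨_, hmem⟩ ⟨d, hd⟩
      have hnn : ¬ p.Nil := SimpleGraph.Walk.not_nil_of_ne (by
        intro hcon
        exact hdw (congrArg Subtype.val hcon).symm)
      have hadj : (G.induce D).Adj ⟨Sum.inr w₁, hmem⟩ (p.getVert 1) := p.adj_snd hnn
      exact ⟨_, (p.getVert 1).2, hadj⟩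
    · exact ⟨z, hz, hadj.symm⟩
  obtain ⟨d₀, hd₀D, hd₀adj⟩ := hex
  -- any two neighbors of inr w₁ in D coincide
  have key : ∀ x y : Fin a ⊕ Fin m, x ∈ D → y ∈ D →
      G.Adj (Sum.inr w₁) x → G.Adj (Sum.inr w₁) y → x = y := by
    intro x y hxD hyD hxadj hyadj
    by_contra hne
    obtain ⟨ux, rfl⟩ : ∃ u, x = Sum.inl u := by
      cases x with
      | inl u => exact ⟨u, rfl⟩
      | inr i => exact absurd hxadj (hWW w₁ i)
    obtain ⟨uy, rfl⟩ : ∃ u, y = Sum.inl u := by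
      cases y with
      | inl u => exact ⟨u, rfl⟩
      | inr i => exact absurd hyadj (hWW w₁ i)
    -- the neighborhoods are nested
    have hnest : (∀ i : Fin m, G.Adj (Sum.inl ux) (Sum.inr i) → G.Adj (Sum.inl uy) (Sum.inr i))
        ∨ (∀ i : Fin m, G.Adj (Sum.inl uy) (Sum.inr i) → G.Adj (Sum.inl ux) (Sum.inr i)) := by
      by_cases h : ∀ i : Fin m, G.Adj (Sum.inl ux) (Sum.inr i) → G.Adj (Sum.inl uy) (Sum.inr i)
      · exact Or.inl h
      · push_neg at h
        obtain ⟨i, hui, hnui⟩ := h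
        refine Or.inr ?_
        intro j hj
        rcases le_total j i with hji | hij
        · exact hconv ux w₁ j i (hw₁ j) hji hxadj.symm hui
        · exact absurd (hconv uy w₁ i j (hw₁ i) hij hyadj.symm hj) hnui
    -- remove the dominated one, contradicting minimality
    rcases hnest with hn | hn
    · refine hmin (D \ {Sum.inl ux}) (Set.sdiff_singleton_ssubset.mpr hxD) ?_
      refine remove_one G D ⟨hdom, hconn⟩ (Sum.inl ux) (Sum.inl uy) hxD hyD hne ?_
      intro v hv hadj
      cases v with
      | inl u => exact absurd hadj (hUU ux u)
      | inr i => exact hn i hadj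
    · refine hmin (D \ {Sum.inl uy}) (Set.sdiff_singleton_ssubset.mpr hyD) ?_
      refine remove_one G D ⟨hdom, hconn⟩ (Sum.inl uy) (Sum.inl ux) hyD hxD (Ne.symm hne) ?_
      intro v hv hadj
      cases v with
      | inl u => exact absurd hadj (hUU uy u)
      | inr i => exact hn i hadj
  rw [Set.ncard_eq_one]
  refine ⟨d₀, ?_⟩
  ext v
  simp only [Set.mem_inter_iff, SimpleGraph.mem_neighborSet, Set.mem_singleton_iff]
  constructor
  · rintro ⟨hadj, hvD⟩
    exact key v d₀ hvD hd₀D hadj hd₀adj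
  · rintro rfl
    exact ⟨hd₀adj, hd₀D⟩
end

section
/- Let G = (U, W, E) be a convex bipartite graph with |U| ≥ 2 and |W| ≥ 2, and let D be a minimal connected dominating set of G. Then every vertex w ∈ W has at most 3 neighbors in D, i.e. |N(w) ∩ D| ≤ 3 for all w ∈ W. -/
section Aux

set_option linter.unusedSectionVars false

variable {V : Type*} [DecidableEq V] {G : SimpleGraph V}

/-- There is a walk from `x` to `y` all of whose vertices lie in `D`. -/
def HasDWalk (G : SimpleGraph V) (D : Set V) (x y : V) : Prop :=
  ∃ p : G.Walk x y, ∀ v ∈ p.support, v ∈ D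

lemma hasDWalk_refl {D : Set V} {x : V} (hx : x ∈ D) : HasDWalk G D x x :=
  ⟨SimpleGraph.Walk.nil, by simp [hx]⟩

lemma HasDWalk.symm {D : Set V} {x y : V} (h : HasDWalk G D x y) : HasDWalk G D y x := by
  obtain ⟨p, hp⟩ := h
  exact ⟨p.reverse, by simpa using hp⟩

lemma HasDWalk.trans {D : Set V} {x y z : V} (h : HasDWalk G D x y) (h' : HasDWalk G D y z) :
    HasDWalk G D x z := by
  obtain ⟨p, hp⟩ := h; obtain ⟨q, hq⟩ := h'
  refine ⟨p.append q, fun v hv => ?_⟩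
  rcases (SimpleGraph.Walk.mem_support_append_iff _ _).1 hv with h | h
  exacts [hp v h, hq v h]

lemma hasDWalk_cons {D : Set V} {x y z : V} (hx : x ∈ D) (hxy : G.Adj x y)
    (h : HasDWalk G D y z) : HasDWalk G D x z := by
  obtain ⟨p, hp⟩ := h
  refine ⟨SimpleGraph.Walk.cons hxy p, fun v hv => ?_⟩
  rw [SimpleGraph.Walk.support_cons, List.mem_cons] at hv
  rcases hv with rfl | hv
  · exact hx
  · exact hp v hv

/-- the inclusion hom from the induced graph. -/
def inclHom (G : SimpleGraph V) (D : Set V) : (G.induce D) →g G where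
  toFun := Subtype.val
  map_rel' := fun h => h

lemma reachable_of_hasDWalk {D : Set V} {x y : V} (hx : x ∈ D) (hy : y ∈ D)
    (h : HasDWalk G D x y) : (G.induce D).Reachable ⟨x, hx⟩ ⟨y, hy⟩ := by
  obtain ⟨p, hp⟩ := h
  induction p with
  | nil => rfl
  | @cons u v w huv q ih =>
    have hu : u ∈ D := hp u (by simp)
    have hv : v ∈ D := hp v (by simp)
    have : (G.induce D).Adj ⟨u, hu⟩ ⟨v, hv⟩ := huv
    exact (this.reachable).trans (ih hv hy (fun z hz => hp z (by simp [hz])))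

lemma hasDWalk_of_reachable {D : Set V} {x y : V} (hx : x ∈ D) (hy : y ∈ D)
    (h : (G.induce D).Reachable ⟨x, hx⟩ ⟨y, hy⟩) : HasDWalk G D x y := by
  obtain ⟨p⟩ := h
  refine ⟨p.map (inclHom G D), ?_⟩
  intro v hv
  have key : ∀ v ∈ (p.map (inclHom G D)).support, v ∈ D := by
    intro v hv
    rw [SimpleGraph.Walk.support_map, List.mem_map] at hv
    obtain ⟨⟨z, hz⟩, _, rfl⟩ := hv
    exact hz
  exact key v hv

lemma induce_connected_iff {D : Set V} :
    (G.induce D).Connected ↔ D.Nonempty ∧ ∀ x ∈ D, ∀ y ∈ D, HasDWalk G D x y := by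
  constructor
  · intro hc
    obtain ⟨⟨x, hx⟩⟩ := hc.nonempty
    refine ⟨⟨x, hx⟩, fun u hu v hv => ?_⟩
    exact hasDWalk_of_reachable hu hv (hc.preconnected _ _)
  · rintro ⟨⟨x, hx⟩, h⟩
    have : Nonempty (D : Set V) := ⟨⟨x, hx⟩⟩
    refine ⟨fun ⟨u, hu⟩ ⟨v, hv⟩ => ?_⟩
    exact reachable_of_hasDWalk hu hv (h u hu v hv)

/-- Removing `u0` keeps connectivity if all its `D`-neighbours are pairwise
connected in `D \ {u0}`. -/
lemma remove_keeps_walk {D : Set V} {u0 : V}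
    (hrep : ∀ v ∈ D \ {u0}, ∀ w ∈ D \ {u0}, G.Adj u0 v → G.Adj u0 w →
      HasDWalk G (D \ {u0}) v w) :
    ∀ (n : ℕ) (x y : V), x ∈ D \ {u0} → y ∈ D \ {u0} →
      ∀ p : G.Walk x y, p.length ≤ n → (∀ v ∈ p.support, v ∈ D) →
      HasDWalk G (D \ {u0}) x y := by
  intro n
  induction n with
  | zero =>
    intro x y hx _ p hlen _
    rw [Nat.le_zero] at hlen
    cases p with
    | nil => exact hasDWalk_refl hx
    | cons h q => simp at hlen
  | succ n ih =>
    intro x y hx hy p hlen hsupp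
    cases p with
    | nil => exact hasDWalk_refl hx
    | @cons _ x₂ _ hadj q =>
      by_cases hx2 : x₂ = u0
      · cases q with
        | nil => exact absurd hx2 hy.2
        | @cons _ x₃ _ hadj' q' =>
          have hadj'' : G.Adj u0 x₃ := hx2 ▸ hadj'
          have hadjx : G.Adj u0 x := hx2 ▸ hadj.symm
          have hx3D : x₃ ∈ D := hsupp x₃ (by simp)
          have hx3 : x₃ ∈ D \ {u0} :=
            ⟨hx3D, fun h => G.irrefl (Set.mem_singleton_iff.mp h ▸ hadj'')⟩
          have h1 : HasDWalk G (D \ {u0}) x x₃ :=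
            hrep x hx x₃ hx3 hadjx hadj''
          have h2 : HasDWalk G (D \ {u0}) x₃ y := by
            refine ih x₃ y hx3 hy q' ?_ (fun v hv => hsupp v (by simp [hv]))
            have : q'.length + 2 ≤ n + 1 := by simpa using hlen
            omega
          exact h1.trans h2
      · have hx2D : x₂ ∈ D \ {u0} := ⟨hsupp x₂ (by simp), hx2⟩
        refine hasDWalk_cons hx hadj (ih x₂ y hx2D hy q (by simpa using hlen)
          (fun v hv => hsupp v (by simp [hv])))

/-- the vertex just before the end of a nontrivial path. -/
lemma exists_pred {s c : V} (q : G.Walk s c) (hq : q.IsPath) (hne : s ≠ c) :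
    ∃ (x : V) (_ : G.Adj x c) (t : G.Walk s x),
      (∀ v ∈ t.support, v ∈ q.support) ∧ c ∉ t.support := by
  obtain ⟨x, hadj, t', hq'⟩ := SimpleGraph.Walk.exists_eq_cons_of_ne (Ne.symm hne) q.reverse
  have hsup : q.support.reverse = c :: t'.support := by
    rw [← SimpleGraph.Walk.support_reverse, hq', SimpleGraph.Walk.support_cons]
  have hqs : q.support = t'.support.reverse ++ [c] := by
    have := congrArg List.reverse hsup
    simpa using this
  refine ⟨x, hadj.symm, t'.reverse, ?_, ?_⟩
  · intro v hv
    rw [SimpleGraph.Walk.support_reverse] at hv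
    rw [hqs]
    exact List.mem_append_left _ hv
  · rw [SimpleGraph.Walk.support_reverse]
    have hnd : q.support.Nodup := hq.support_nodup
    rw [hqs] at hnd
    have := List.disjoint_of_nodup_append hnd
    intro hc
    exact this hc (by simp)

lemma key_contradiction {D : Set V} {A B u u' : V}
    (hA : A ∈ D) (hB : B ∈ D)
    (huu' : u ≠ u') (huA : u ≠ A) (huB : u ≠ B) (hu'A : u' ≠ A) (hu'B : u' ≠ B)
    (hx_adj : ∀ c, (c = u ∨ c = u') → ∀ x, G.Adj c x → x ∈ D → G.Adj A x ∨ G.Adj B x)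
    (hx_ne : ∀ c, (c = u ∨ c = u') → ∀ x, G.Adj c x → x ≠ u ∧ x ≠ u')
    (hAB : HasDWalk G D A B)
    (h1 : ¬ HasDWalk G (D \ {u}) A B) (h2 : ¬ HasDWalk G (D \ {u'}) A B) :
    False := by
  obtain ⟨p0, hp0⟩ := hAB
  set P : G.Walk A B := (p0.toPath : G.Path A B).val with hPdef
  have hP : P.IsPath := p0.toPath.2
  have hPD : ∀ v ∈ P.support, v ∈ D := fun v hv =>
    hp0 v (SimpleGraph.Walk.support_toPath_subset p0 hv)
  have hu_mem : u ∈ P.support := by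
    by_contra hc
    exact h1 ⟨P, fun v hv => ⟨hPD v hv, fun h => hc (Set.mem_singleton_iff.mp h ▸ hv)⟩⟩
  have hu'_mem : u' ∈ P.support := by
    by_contra hc
    exact h2 ⟨P, fun v hv => ⟨hPD v hv, fun h => hc (Set.mem_singleton_iff.mp h ▸ hv)⟩⟩
  set tk : G.Walk A u' := P.takeUntil u' hu'_mem with htk
  set dp : G.Walk u' B := P.dropUntil u' hu'_mem with hdp
  have htkP : tk.IsPath := hP.takeUntil hu'_mem
  have hdpP : dp.IsPath := hP.dropUntil hu'_mem
  have hsplit : P.support = tk.support ++ dp.support.tail := by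
    rw [htk, hdp, ← SimpleGraph.Walk.support_append, SimpleGraph.Walk.take_spec]
  have htkD : ∀ v ∈ tk.support, v ∈ D := fun v hv =>
    hPD v (SimpleGraph.Walk.support_takeUntil_subset P hu'_mem hv)
  have hdpD : ∀ v ∈ dp.support, v ∈ D := fun v hv =>
    hPD v (SimpleGraph.Walk.support_dropUntil_subset P hu'_mem hv)
  have hdisj : List.Disjoint tk.support dp.support.tail :=
    List.disjoint_of_nodup_append (hsplit ▸ hP.support_nodup)
  have hdphead : dp.support = u' :: dp.support.tail := dp.support_eq_cons
  by_cases hcase : u ∈ tk.support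
  · -- u occurs before u'
    obtain ⟨x, hxadj, t, htsub, hu'nt⟩ := exists_pred tk htkP (Ne.symm hu'A)
    have hxD : x ∈ D := htkD x (htsub x (SimpleGraph.Walk.end_mem_support t))
    have hxne := hx_ne u' (Or.inr rfl) x hxadj.symm
    rcases hx_adj u' (Or.inr rfl) x hxadj.symm hxD with hAx | hBx
    · -- walk A - x - u' - dp avoids u
      refine h1 ⟨SimpleGraph.Walk.cons hAx (SimpleGraph.Walk.cons hxadj dp), ?_⟩
      intro v hv
      rw [SimpleGraph.Walk.support_cons, SimpleGraph.Walk.support_cons, List.mem_cons,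
        List.mem_cons] at hv
      rcases hv with rfl | rfl | hv
      · exact ⟨hA, fun h => huA (Set.mem_singleton_iff.mp h).symm⟩
      · exact ⟨hxD, fun h => hxne.1 (Set.mem_singleton_iff.mp h)⟩
      · refine ⟨hdpD v hv, fun h => ?_⟩
        have hvu : v = u := Set.mem_singleton_iff.mp h
        subst hvu
        rw [hdphead, List.mem_cons] at hv
        rcases hv with h' | h'
        · exact huu' h'
        · exact hdisj hcase h'
    · -- walk t - B avoids u'
      refine h2 ⟨t.concat hBx.symm, ?_⟩
      intro v hv
      rw [SimpleGraph.Walk.support_concat, List.mem_append,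
        List.mem_singleton] at hv
      rcases hv with hv | rfl
      · exact ⟨htkD v (htsub v hv), fun h => hu'nt (Set.mem_singleton_iff.mp h ▸ hv)⟩
      · exact ⟨hB, fun h => hu'B (Set.mem_singleton_iff.mp h).symm⟩
  · -- u occurs after u'
    have hu_dp : u ∈ dp.support := by
      rw [hsplit, List.mem_append] at hu_mem
      rcases hu_mem with h | h
      · exact absurd h hcase
      · exact List.mem_of_mem_tail h
    set tk2 : G.Walk u' u := dp.takeUntil u hu_dp with htk2
    set dp2 : G.Walk u B := dp.dropUntil u hu_dp with hdp2
    have htk2P : tk2.IsPath := hdpP.takeUntil hu_dp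
    have hsplit2 : dp.support = tk2.support ++ dp2.support.tail := by
      rw [htk2, hdp2, ← SimpleGraph.Walk.support_append, SimpleGraph.Walk.take_spec]
    have hdisj2 : List.Disjoint tk2.support dp2.support.tail :=
      List.disjoint_of_nodup_append (hsplit2 ▸ hdpP.support_nodup)
    obtain ⟨x, hxadj, t, htsub, hunt⟩ := exists_pred tk2 htk2P huu'.symm
    have htk2D : ∀ v ∈ tk2.support, v ∈ D := fun v hv =>
      hdpD v (SimpleGraph.Walk.support_takeUntil_subset dp hu_dp hv)
    have hdp2D : ∀ v ∈ dp2.support, v ∈ D := fun v hv =>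
      hdpD v (SimpleGraph.Walk.support_dropUntil_subset dp hu_dp hv)
    have hxD : x ∈ D := htk2D x (htsub x (SimpleGraph.Walk.end_mem_support t))
    have hxne := hx_ne u (Or.inl rfl) x hxadj.symm
    rcases hx_adj u (Or.inl rfl) x hxadj.symm hxD with hAx | hBx
    · -- walk A - x - u - dp2 avoids u'
      refine h2 ⟨SimpleGraph.Walk.cons hAx (SimpleGraph.Walk.cons hxadj dp2), ?_⟩
      intro v hv
      rw [SimpleGraph.Walk.support_cons, SimpleGraph.Walk.support_cons, List.mem_cons,
        List.mem_cons] at hv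
      rcases hv with rfl | rfl | hv
      · exact ⟨hA, fun h => hu'A (Set.mem_singleton_iff.mp h).symm⟩
      · exact ⟨hxD, fun h => hxne.2 (Set.mem_singleton_iff.mp h)⟩
      · refine ⟨hdp2D v hv, fun h => ?_⟩
        have hvu : v = u' := Set.mem_singleton_iff.mp h
        subst hvu
        rw [dp2.support_eq_cons, List.mem_cons] at hv
        rcases hv with h' | h'
        · exact huu' h'.symm
        · exact hdisj2 (SimpleGraph.Walk.start_mem_support tk2) h'
    · -- walk tk ++ t ++ B avoids u
      refine h1 ⟨(tk.append t).concat hBx.symm, ?_⟩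
      intro v hv
      rw [SimpleGraph.Walk.support_concat, List.mem_append,
        List.mem_singleton, SimpleGraph.Walk.mem_support_append_iff] at hv
      rcases hv with (hv | hv) | rfl
      · exact ⟨htkD v hv, fun h => hcase (Set.mem_singleton_iff.mp h ▸ hv)⟩
      · exact ⟨htk2D v (htsub v hv), fun h => hunt (Set.mem_singleton_iff.mp h ▸ hv)⟩
      · exact ⟨hB, fun h => huB (Set.mem_singleton_iff.mp h).symm⟩

/-- Removing a suitable vertex from a CDS yields a CDS. -/
lemma cds_of_remove {D : Set V} {u0 A0 : V} (hcds : IsConnectedDominatingSet G D)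
    (hu0 : u0 ∈ D) (hA0 : A0 ∈ D \ {u0})
    (hdom : ∀ x, G.Adj u0 x → ∃ d ∈ D \ {u0}, G.Adj d x)
    (hu0dom : ∃ d ∈ D \ {u0}, G.Adj d u0)
    (hconn : ∀ v ∈ D \ {u0}, ∀ w ∈ D \ {u0}, G.Adj u0 v → G.Adj u0 w →
      HasDWalk G (D \ {u0}) v w) :
    IsConnectedDominatingSet G (D \ {u0}) := by
  constructor
  · intro v
    rcases hcds.1 v with hv | ⟨d, hd, hadj⟩
    · by_cases hvu : v = u0
      · subst hvu; exact Or.inr hu0dom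
      · exact Or.inl ⟨hv, hvu⟩
    · by_cases hdu : d = u0
      · subst hdu; exact Or.inr (hdom v hadj)
      · exact Or.inr ⟨d, ⟨hd, hdu⟩, hadj⟩
  · refine induce_connected_iff.mpr ⟨⟨A0, hA0⟩, fun x hx y hy => ?_⟩
    obtain ⟨p, hp⟩ := (induce_connected_iff.mp hcds.2).2 x hx.1 y hy.1
    exact remove_keeps_walk hconn p.length x y hx hy p le_rfl hp

lemma exists_other_nbr {D : Set V}
    (hDc : ∀ x ∈ D, ∀ y ∈ D, HasDWalk G D x y) {x y : V} (hx : x ∈ D) (hy : y ∈ D)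
    (hxy : x ≠ y) : ∃ d ∈ D \ {x}, G.Adj d x := by
  obtain ⟨p, hp⟩ := hDc x hx y hy
  cases p with
  | nil => exact absurd rfl hxy
  | @cons _ v₂ _ h q =>
    exact ⟨v₂, ⟨hp v₂ (by simp), fun hh => G.irrefl (Set.mem_singleton_iff.mp hh ▸ h)⟩, h.symm⟩

end Aux

/-- In a convex bipartite graph with `|U| ≥ 2` and `|W| ≥ 2`, every vertex `w ∈ W`
has at most `3` neighbors in a minimal connected dominating set `D`. -/
theorem mcds_W_vertex_at_most_three_neighbors {a m : ℕ} (ha : 2 ≤ a) (hm : 2 ≤ m)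
    (G : SimpleGraph (Fin a ⊕ Fin m)) (hG : ConvexBipartite G)
    (D : Set (Fin a ⊕ Fin m)) (hD : IsMinimalCDS G D) :
    ∀ w : Fin m, (G.neighborSet (Sum.inr w) ∩ D).ncard ≤ 3 := by
  classical
  intro w
  by_contra hcon
  push_neg at hcon
  -- extract four distinct neighbours of w in D
  set N : Set (Fin a ⊕ Fin m) := G.neighborSet (Sum.inr w) ∩ D with hN
  have hfin : N.Finite := Set.toFinite N
  have hcard : 4 ≤ hfin.toFinset.card := by
    rw [← Set.ncard_eq_toFinset_card _ hfin]; omega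
  obtain ⟨a₁, h₁⟩ := Finset.card_pos.mp (show 0 < hfin.toFinset.card by omega)
  have hc₁ : 3 ≤ (hfin.toFinset.erase a₁).card := by
    rw [Finset.card_erase_of_mem h₁]; omega
  obtain ⟨a₂, h₂⟩ := Finset.card_pos.mp (show 0 < (hfin.toFinset.erase a₁).card by omega)
  have hc₂ : 2 ≤ ((hfin.toFinset.erase a₁).erase a₂).card := by
    rw [Finset.card_erase_of_mem h₂]; omega
  obtain ⟨a₃, h₃⟩ := Finset.card_pos.mp
    (show 0 < ((hfin.toFinset.erase a₁).erase a₂).card by omega)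
  have hc₃ : 1 ≤ (((hfin.toFinset.erase a₁).erase a₂).erase a₃).card := by
    rw [Finset.card_erase_of_mem h₃]; omega
  obtain ⟨a₄, h₄⟩ := Finset.card_pos.mp
    (show 0 < (((hfin.toFinset.erase a₁).erase a₂).erase a₃).card by omega)
  rw [Finset.mem_erase] at h₄ h₃ h₂
  rw [Finset.mem_erase] at h₄ h₃
  rw [Finset.mem_erase] at h₄
  have hmem : ∀ x ∈ hfin.toFinset, x ∈ N := fun x hx => hfin.mem_toFinset.mp hx
  -- every element of N is of the form inl v
  set S : Set (Fin a) := {v | G.Adj (Sum.inl v) (Sum.inr w) ∧ Sum.inl v ∈ D} with hS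
  have getU : ∀ x ∈ N, ∃ v : Fin a, x = Sum.inl v ∧ v ∈ S := by
    rintro x ⟨hadj, hxD⟩
    rw [SimpleGraph.mem_neighborSet] at hadj
    match x with
    | Sum.inl v => exact ⟨v, rfl, hadj.symm, hxD⟩
    | Sum.inr j => exact absurd hadj (hG.2.1 w j)
  obtain ⟨u₁, hu₁e, hu₁S⟩ := getU a₁ (hmem a₁ h₁)
  obtain ⟨u₂, hu₂e, hu₂S⟩ := getU a₂ (hmem a₂ h₂.2)
  obtain ⟨u₃, hu₃e, hu₃S⟩ := getU a₃ (hmem a₃ h₃.2.2)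
  obtain ⟨u₄, hu₄e, hu₄S⟩ := getU a₄ (hmem a₄ h₄.2.2.2)
  have h12 : u₁ ≠ u₂ := fun h => h₂.1 (by rw [hu₂e, hu₁e, h])
  have h13 : u₁ ≠ u₃ := fun h => h₃.2.1 (by rw [hu₃e, hu₁e, h])
  have h14 : u₁ ≠ u₄ := fun h => h₄.2.2.1 (by rw [hu₄e, hu₁e, h])
  have h23 : u₂ ≠ u₃ := fun h => h₃.1 (by rw [hu₃e, hu₂e, h])
  have h24 : u₂ ≠ u₄ := fun h => h₄.2.1 (by rw [hu₄e, hu₂e, h])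
  have h34 : u₃ ≠ u₄ := fun h => h₄.1 (by rw [hu₄e, hu₃e, h])
  -- extremal neighbours A (leftmost reach) and B (rightmost reach)
  set T : Set (Fin m) := {t | ∃ v ∈ S, G.Adj (Sum.inl v) (Sum.inr t)} with hT
  have hwT : w ∈ T := ⟨u₁, hu₁S, hu₁S.1⟩
  obtain ⟨t₀, ht₀T, ht₀min⟩ := Set.exists_min_image T id (Set.toFinite T) ⟨w, hwT⟩
  obtain ⟨A, hAS, hAadj⟩ := ht₀T
  obtain ⟨t₁, ht₁T, ht₁max⟩ := Set.exists_max_image T id (Set.toFinite T) ⟨w, hwT⟩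
  obtain ⟨B, hBS, hBadj⟩ := ht₁T
  have core : ∀ v ∈ S, ∀ t : Fin m, G.Adj (Sum.inl v) (Sum.inr t) →
      G.Adj (Sum.inl A) (Sum.inr t) ∨ G.Adj (Sum.inl B) (Sum.inr t) := by
    intro v hv t ht
    rcases le_total t w with h | h
    · exact Or.inl (hG.2.2 A t₀ t w (ht₀min t ⟨v, hv, ht⟩) h hAadj hAS.1)
    · exact Or.inr (hG.2.2 B w t t₁ h (ht₁max t ⟨v, hv, ht⟩) hBS.1 hBadj)
  -- pick two vertices u u' among u₁..u₄ distinct from A and B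
  have hcFS : ({u₁, u₂, u₃, u₄} : Finset (Fin a)).card = 4 := by
    rw [Finset.card_insert_of_notMem (by simp [h12, h13, h14]),
      Finset.card_insert_of_notMem (by simp [h23, h24]),
      Finset.card_insert_of_notMem (by simp [h34]), Finset.card_singleton]
  have h2' : 1 < ((({u₁, u₂, u₃, u₄} : Finset (Fin a)).erase A).erase B).card := by
    have e1 := Finset.pred_card_le_card_erase
      (s := ({u₁, u₂, u₃, u₄} : Finset (Fin a))) (a := A)
    have e2 := Finset.pred_card_le_card_erase
      (s := (({u₁, u₂, u₃, u₄} : Finset (Fin a)).erase A)) (a := B)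
    omega
  obtain ⟨u, hu, u', hu', huu'⟩ := Finset.one_lt_card.mp h2'
  rw [Finset.mem_erase, Finset.mem_erase] at hu hu'
  have hmemS : ∀ z : Fin a, z ∈ ({u₁, u₂, u₃, u₄} : Finset (Fin a)) → z ∈ S := by
    intro z hz
    rw [Finset.mem_insert, Finset.mem_insert, Finset.mem_insert, Finset.mem_singleton] at hz
    rcases hz with rfl | rfl | rfl | rfl
    exacts [hu₁S, hu₂S, hu₃S, hu₄S]
  have huS : u ∈ S := hmemS u hu.2.2
  have hu'S : u' ∈ S := hmemS u' hu'.2.2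
  have huB : u ≠ B := hu.1
  have huA : u ≠ A := hu.2.1
  have hu'B : u' ≠ B := hu'.1
  have hu'A : u' ≠ A := hu'.2.1
  -- general facts
  have hDconn := induce_connected_iff.mp hD.1.2
  have hDdwalk := hDconn.2
  have notCDS : ∀ u0 ∈ D, ¬ IsConnectedDominatingSet G (D \ {u0}) := by
    intro u0 h hC
    exact hD.2 _ (Set.sdiff_singleton_ssubset.mpr h) hC
  have nbr_inr : ∀ (v : Fin a) (x : Fin a ⊕ Fin m), G.Adj (Sum.inl v) x →
      ∃ t : Fin m, x = Sum.inr t ∧ G.Adj (Sum.inl v) (Sum.inr t) := by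
    intro v x hx
    match x with
    | Sum.inl z => exact absurd hx (hG.1 v z)
    | Sum.inr t => exact ⟨t, rfl, hx⟩
  by_cases hABeq : A = B
  · -- easy case: every D-neighbour of u is adjacent to A
    subst hABeq
    have coreA : ∀ v ∈ S, ∀ t : Fin m, G.Adj (Sum.inl v) (Sum.inr t) →
        G.Adj (Sum.inl A) (Sum.inr t) := by
      intro v hv t ht
      rcases core v hv t ht with h | h <;> exact h
    refine notCDS (Sum.inl u) huS.2 ?_
    have hA0 : Sum.inl A ∈ D \ {Sum.inl u} :=
      ⟨hAS.2, fun h => huA (Sum.inl.inj (Set.mem_singleton_iff.mp h)).symm⟩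
    refine cds_of_remove hD.1 huS.2 hA0 ?_ ?_ ?_
    · intro x hx
      obtain ⟨t, rfl, ht⟩ := nbr_inr u x hx
      exact ⟨Sum.inl A, hA0, coreA u huS t ht⟩
    · exact exists_other_nbr hDdwalk huS.2 hAS.2
        (fun h => huA (Sum.inl.inj h))
    · intro v hv x hx hav hax
      obtain ⟨tv, rfl, htv⟩ := nbr_inr u v hav
      obtain ⟨tx, rfl, htx⟩ := nbr_inr u x hax
      refine ⟨SimpleGraph.Walk.cons (coreA u huS tv htv).symm
        (SimpleGraph.Walk.cons (coreA u huS tx htx) SimpleGraph.Walk.nil), ?_⟩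
      intro z hz
      rw [SimpleGraph.Walk.support_cons, SimpleGraph.Walk.support_cons,
        SimpleGraph.Walk.support_nil, List.mem_cons, List.mem_cons, List.mem_singleton] at hz
      rcases hz with rfl | rfl | rfl
      exacts [hv, hA0, hx]
  · -- hard case: A ≠ B
    have hremove : ∀ u0 : Fin a, u0 ∈ S → u0 ≠ A → u0 ≠ B →
        ¬ HasDWalk G (D \ {Sum.inl u0}) (Sum.inl A) (Sum.inl B) := by
      intro u0 hu0S hu0A hu0B hABwalk
      refine notCDS (Sum.inl u0) hu0S.2 ?_
      have hA0 : Sum.inl A ∈ D \ {Sum.inl u0} :=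
        ⟨hAS.2, fun h => hu0A (Sum.inl.inj (Set.mem_singleton_iff.mp h)).symm⟩
      have hB0 : Sum.inl B ∈ D \ {Sum.inl u0} :=
        ⟨hBS.2, fun h => hu0B (Sum.inl.inj (Set.mem_singleton_iff.mp h)).symm⟩
      have reach1 : ∀ z ∈ D \ {Sum.inl u0}, G.Adj (Sum.inl u0) z →
          HasDWalk G (D \ {Sum.inl u0}) z (Sum.inl A) := by
        intro z hz haz
        obtain ⟨t, rfl, ht⟩ := nbr_inr u0 z haz
        rcases core u0 hu0S t ht with h | h
        · exact hasDWalk_cons hz h.symm (hasDWalk_refl hA0)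
        · exact (hasDWalk_cons hz h.symm (hasDWalk_refl hB0)).trans hABwalk.symm
      refine cds_of_remove hD.1 hu0S.2 hA0 ?_ ?_ ?_
      · intro x hx
        obtain ⟨t, rfl, ht⟩ := nbr_inr u0 x hx
        rcases core u0 hu0S t ht with h | h
        · exact ⟨Sum.inl A, hA0, h⟩
        · exact ⟨Sum.inl B, hB0, h⟩
      · exact exists_other_nbr hDdwalk hu0S.2 hAS.2 (fun h => hu0A (Sum.inl.inj h))
      · intro v hv x hx hav hax
        exact (reach1 v hv hav).trans (reach1 x hx hax).symm
    have h1 := hremove u huS huA huB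
    have h2 := hremove u' hu'S hu'A hu'B
    refine key_contradiction (G := G) (D := D) hAS.2 hBS.2
      (fun h => huu' (Sum.inl.inj h))
      (fun h => huA (Sum.inl.inj h)) (fun h => huB (Sum.inl.inj h))
      (fun h => hu'A (Sum.inl.inj h)) (fun h => hu'B (Sum.inl.inj h))
      ?_ ?_ (hDdwalk _ hAS.2 _ hBS.2) h1 h2
    · rintro c (rfl | rfl) x hcx _
      · obtain ⟨t, rfl, ht⟩ := nbr_inr u x hcx
        exact core u huS t ht
      · obtain ⟨t, rfl, ht⟩ := nbr_inr u' x hcx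
        exact core u' hu'S t ht
    · rintro c (rfl | rfl) x hcx
      · obtain ⟨t, rfl, _⟩ := nbr_inr u x hcx
        exact ⟨by simp, by simp⟩
      · obtain ⟨t, rfl, _⟩ := nbr_inr u' x hcx
        exact ⟨by simp, by simp⟩
end

section
/- Let G = (U, W, E) be a convex bipartite graph with |U| ≥ 2 and |W| ≥ 2, let D be a minimal connected dominating set of G with |D ∩ U| ≥ 2, and let i ∈ D ∩ U be a vertex whose neighbor interval has the smallest right endpoint among all vertices of D ∩ U; write r for the vertex of W that is this right endpoint. If the set of neighbors of r belonging to D ∩ U is exactly {i, j} for some j ≠ i, then D ∩ N(i) ∩ N(j) ≠ ∅. -/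
/-- Let `D` be a minimal connected dominating set of a convex bipartite graph with
`|U| ≥ 2`, `|W| ≥ 2` and `|D ∩ U| ≥ 2`, and let `i ∈ D ∩ U` have the smallest right
endpoint `r` among the neighbor intervals of the vertices of `D ∩ U`. If the neighbors
of `r` in `D ∩ U` are exactly `{i, j}` for some `j ≠ i`, then `D ∩ N(i) ∩ N(j) ≠ ∅`. -/
theorem mcds_degree_two_common_neighbor_in_D {a m : ℕ} (ha : 2 ≤ a) (hm : 2 ≤ m)
    (G : SimpleGraph (Fin a ⊕ Fin m)) (hG : ConvexBipartite G)
    (D : Set (Fin a ⊕ Fin m)) (hD : IsMinimalCDS G D)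
    (hDU : 2 ≤ (D ∩ Set.range (Sum.inl : Fin a → Fin a ⊕ Fin m)).ncard)
    (i : Fin a) (hiD : Sum.inl i ∈ D)
    (r : Fin m) (hr : IsGreatest {w : Fin m | G.Adj (Sum.inl i) (Sum.inr w)} r)
    (hmin : ∀ x : Fin a, Sum.inl x ∈ D →
      ∀ rx : Fin m, IsGreatest {w : Fin m | G.Adj (Sum.inl x) (Sum.inr w)} rx → r ≤ rx)
    (j : Fin a) (hij : j ≠ i)
    (hnbhd : {x : Fin a | Sum.inl x ∈ D ∧ G.Adj (Sum.inl x) (Sum.inr r)} = {i, j}) :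
    (D ∩ G.neighborSet (Sum.inl i) ∩ G.neighborSet (Sum.inl j)).Nonempty := by
  obtain ⟨hUU, hWW, hconv⟩ := hG
  have hconn : (G.induce D).Connected := hD.1.2
  -- j ∈ D and j adjacent to r
  have hj : Sum.inl j ∈ D ∧ G.Adj (Sum.inl j) (Sum.inr r) := by
    have : j ∈ ({i, j} : Set (Fin a)) := by simp
    rw [← hnbhd] at this
    exact this
  by_contra hempty
  rw [Set.not_nonempty_iff_eq_empty] at hempty
  set S : Set (Fin a ⊕ Fin m) :=
    {x | x = Sum.inl i ∨ ∃ w : Fin m, x = Sum.inr w ∧ G.Adj (Sum.inl i) (Sum.inr w)} with hS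
  -- S is closed under adjacency inside D
  have hstep : ∀ x y : Fin a ⊕ Fin m, x ∈ D → y ∈ D → x ∈ S → G.Adj x y → y ∈ S := by
    intro x y hxD hyD hxS hadj
    rcases hxS with hx | ⟨w, hxw, hiw⟩
    · subst hx
      cases y with
      | inl u => exact absurd hadj (hUU i u)
      | inr w => exact Or.inr ⟨w, rfl, hadj⟩
    · subst hxw
      cases y with
      | inr w' => exact absurd hadj (hWW w w')
      | inl u =>
        -- u ∈ D adjacent to w ≤ r; show u adjacent to r, hence u ∈ {i,j}, and u ≠ j.
        have hwr : w ≤ r := hr.2 hiw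
        have huw : G.Adj (Sum.inl u) (Sum.inr w) := hadj.symm
        -- greatest neighbor of u
        have hfin : {w' : Fin m | G.Adj (Sum.inl u) (Sum.inr w')}.Finite := Set.toFinite _
        obtain ⟨rx, hrx, hmax⟩ := hfin.exists_maximal ⟨w, huw⟩
        have hrxg : IsGreatest {w' : Fin m | G.Adj (Sum.inl u) (Sum.inr w')} rx := by
          refine ⟨hrx, fun b hb => ?_⟩
          rcases le_total b rx with h | h
          · exact h
          · exact hmax hb h
        have hrrx : r ≤ rx := hmin u hyD rx hrxg
        have hur : G.Adj (Sum.inl u) (Sum.inr r) := hconv u w r rx hwr hrrx huw hrxg.1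
        have : u ∈ ({i, j} : Set (Fin a)) := by rw [← hnbhd]; exact ⟨hyD, hur⟩
        rcases this with hu | hu
        · exact Or.inl (by rw [hu])
        · exfalso
          have : Sum.inr w ∈ D ∩ G.neighborSet (Sum.inl i) ∩ G.neighborSet (Sum.inl j) :=
            ⟨⟨hxD, hiw⟩, by rw [← hu]; exact huw⟩
          rw [hempty] at this
          exact this
  -- anything reachable from a vertex of S stays in S
  have key : ∀ (u v : ↥D), (G.induce D).Walk u v → (u : Fin a ⊕ Fin m) ∈ S →
      (v : Fin a ⊕ Fin m) ∈ S := by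
    intro u v p
    induction p with
    | nil => exact id
    | cons h q ih =>
      intro hu
      exact ih (hstep _ _ (Subtype.mem _) (Subtype.mem _) hu h)
  obtain ⟨p⟩ := hconn.preconnected ⟨Sum.inl i, hiD⟩ ⟨Sum.inl j, hj.1⟩
  have : (Sum.inl j : Fin a ⊕ Fin m) ∈ S := key _ _ p (Or.inl rfl)
  rcases this with h | ⟨w, hw, -⟩
  · exact hij (Sum.inl_injective h)
  · exact Sum.inl_ne_inr hw
end

section
/- For every integer t ≥ 3 and every real number x ≥ 1.7254, one has x^{t+1} − x^t − x − (t − 1) > 0. Consequently, for every integer t ≥ 3, the unique positive real root of the polynomial x^{t+1} − x^t − x − (t − 1) is less than 1.7254, and the maximum over t ≥ 3 of these roots is attained at t = 3. -/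
lemma bnAux_base {x : ℝ} (hx : 1.7254 ≤ x) : 0 < x ^ 4 - x ^ 3 - x - 2 := by
  nlinarith [sq_nonneg (x - 1.7254), sq_nonneg x, sq_nonneg (x + 1), sq_nonneg (x^2 - 1)]

lemma bnAux_step {x : ℝ} (hx : 1.7 ≤ x) {t : ℕ} (ht : 3 ≤ t) :
    1 < x ^ t * (x - 1) ^ 2 := by
  have h3 : (1.7 : ℝ) ^ 3 ≤ x ^ 3 := pow_le_pow_left₀ (by norm_num) hx 3
  have h4 : x ^ 3 ≤ x ^ t := pow_le_pow_right₀ (by linarith) ht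
  have hxt : (4.913 : ℝ) ≤ x ^ t := by norm_num at h3; linarith
  have h5 : (0.7 : ℝ) ^ 2 ≤ (x - 1) ^ 2 := pow_le_pow_left₀ (by norm_num) (by linarith) 2
  have hsq : (0.49 : ℝ) ≤ (x - 1) ^ 2 := by norm_num at h5; linarith
  nlinarith [mul_le_mul hxt hsq (by norm_num) (by linarith : (0:ℝ) ≤ x ^ t)]

lemma bnAux_mono {t : ℕ} (ht : 1 ≤ t) {x y : ℝ} (hx : 1 ≤ x) (hxy : x < y) :
    x ^ (t+1) - x ^ t - x < y ^ (t+1) - y ^ t - y := by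
  have h1 : x ^ t ≤ y ^ t := pow_le_pow_left₀ (by linarith) hxy.le t
  have h2 : 1 < y ^ t := one_lt_pow₀ (by linarith) (by omega)
  have h3 : 0 ≤ (y ^ t - x ^ t) * (x - 1) := mul_nonneg (by linarith) (by linarith)
  have h4 : (1 : ℝ) * (y - x) < y ^ t * (y - x) :=
    mul_lt_mul_of_pos_right h2 (by linarith)
  rw [pow_succ, pow_succ]
  nlinarith

lemma bnAux_neg {t : ℕ} (ht : 3 ≤ t) {x : ℝ} (hx0 : 0 < x) (hx1 : x ≤ 1) :
    x ^ (t+1) - x ^ t - x - ((t : ℝ) - 1) < 0 := by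
  have h1 : x ^ (t+1) ≤ x ^ t := pow_le_pow_of_le_one hx0.le hx1 (by omega)
  have h2 : (3 : ℝ) ≤ (t : ℝ) := by exact_mod_cast ht
  linarith

-- Part 1
lemma bnAux_P1 : ∀ t : ℕ, 3 ≤ t → ∀ x : ℝ, 1.7254 ≤ x →
    0 < x ^ (t + 1) - x ^ t - x - ((t : ℝ) - 1) := by
  intro t ht
  induction t, ht using Nat.le_induction with
  | base =>
    intro x hx
    have := bnAux_base hx
    norm_num
    linarith
  | succ t ht ih =>
    intro x hx
    have h1 := ih x hx
    have h2 := bnAux_step (by linarith : (1.7:ℝ) ≤ x) ht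
    have key : x ^ (t + 1 + 1) - x ^ (t + 1) - x - (((t:ℝ) + 1) - 1)
        = (x ^ (t + 1) - x ^ t - x - ((t:ℝ) - 1)) + (x ^ t * (x - 1) ^ 2 - 1) := by
      ring
    push_cast
    rw [key]
    linarith

-- roots are > 1
lemma bnAux_root_gt_one {t : ℕ} (ht : 3 ≤ t) {ρ : ℝ} (h0 : 0 < ρ)
    (hr : ρ ^ (t + 1) - ρ ^ t - ρ - ((t : ℝ) - 1) = 0) : 1 < ρ := by
  by_contra h
  push_neg at h
  have := bnAux_neg ht h0 h
  linarith

-- nonneg of p_t at ρ₃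
lemma bnAux_P4 {ρ₃ : ℝ} (h0 : 0 < ρ₃) (h3 : ρ₃ ^ 4 - ρ₃ ^ 3 - ρ₃ - 2 = 0) :
    ∀ t : ℕ, 3 ≤ t → 0 ≤ ρ₃ ^ (t + 1) - ρ₃ ^ t - ρ₃ - ((t : ℝ) - 1) := by
  have hone : 1 < ρ₃ := by
    have := bnAux_root_gt_one (le_refl 3) h0 (by push_cast; linarith)
    exact this
  have h17 : (1.7 : ℝ) ≤ ρ₃ := by
    by_contra h
    push_neg at h
    have := bnAux_mono (t := 3) (by norm_num) hone.le h
    norm_num at this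
    nlinarith
  intro t ht
  induction t, ht using Nat.le_induction with
  | base => push_cast; norm_num; linarith
  | succ t ht ih =>
    have h2 := bnAux_step h17 ht
    have key : ρ₃ ^ (t + 1 + 1) - ρ₃ ^ (t + 1) - ρ₃ - (((t:ℝ) + 1) - 1)
        = (ρ₃ ^ (t + 1) - ρ₃ ^ t - ρ₃ - ((t:ℝ) - 1)) + (ρ₃ ^ t * (ρ₃ - 1) ^ 2 - 1) := by
      ring
    push_cast
    rw [key]
    linarith

/-- Branching-number estimate for the branching vector `(t, t+1, …, t+1, 1)` with
characteristic polynomial `p(x) = x^(t+1) - x^t - x - (t-1)`: for every `t ≥ 3`,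
`p(x) > 0` whenever `x ≥ 1.7254`; consequently `p` has a unique positive real root,
this root is less than `1.7254`, and the maximum over `t ≥ 3` of these roots is
attained at `t = 3`. -/
theorem branching_number_step6 :
    (∀ t : ℕ, 3 ≤ t → ∀ x : ℝ, 1.7254 ≤ x →
      0 < x ^ (t + 1) - x ^ t - x - ((t : ℝ) - 1)) ∧
    (∀ t : ℕ, 3 ≤ t →
      ∃! ρ : ℝ, 0 < ρ ∧ ρ ^ (t + 1) - ρ ^ t - ρ - ((t : ℝ) - 1) = 0) ∧
    (∀ t : ℕ, 3 ≤ t → ∀ ρ : ℝ,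
      0 < ρ → ρ ^ (t + 1) - ρ ^ t - ρ - ((t : ℝ) - 1) = 0 → ρ < 1.7254) ∧
    (∀ t : ℕ, 3 ≤ t → ∀ ρ ρ₃ : ℝ,
      0 < ρ → ρ ^ (t + 1) - ρ ^ t - ρ - ((t : ℝ) - 1) = 0 →
      0 < ρ₃ → ρ₃ ^ 4 - ρ₃ ^ 3 - ρ₃ - 2 = 0 → ρ ≤ ρ₃) := by
  refine ⟨bnAux_P1, ?_, ?_, ?_⟩
  · -- unique positive root
    intro t ht
    set f : ℝ → ℝ := fun x => x ^ (t + 1) - x ^ t - x - ((t : ℝ) - 1) with hf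
    have hcont : ContinuousOn f (Set.Icc 1 1.7254) := by
      apply Continuous.continuousOn
      fun_prop
    have hf1 : f 1 ≤ 0 := by
      have : (3:ℝ) ≤ (t:ℝ) := by exact_mod_cast ht
      simp only [hf, one_pow]
      linarith
    have hf2 : (0:ℝ) ≤ f 1.7254 := (bnAux_P1 t ht 1.7254 le_rfl).le
    obtain ⟨ρ, hρmem, hρ⟩ := intermediate_value_Icc (by norm_num : (1:ℝ) ≤ 1.7254)
      hcont ⟨hf1, hf2⟩
    refine ⟨ρ, ⟨by linarith [hρmem.1], hρ⟩, ?_⟩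
    rintro ρ' ⟨h0', hr'⟩
    have h1' : 1 < ρ' := bnAux_root_gt_one ht h0' hr'
    have h1 : 1 ≤ ρ := hρmem.1
    rcases lt_trichotomy ρ' ρ with h | h | h
    · have hm := bnAux_mono (t := t) (by omega) h1'.le h
      have hlt : f ρ' < f ρ := by simp only [hf]; linarith
      rw [hρ] at hlt
      simp only [hf] at hlt
      linarith
    · exact h
    · have hm := bnAux_mono (t := t) (by omega) h1 h
      have : f ρ < f ρ' := by simp only [hf]; linarith
      rw [hρ] at this
      simp only [hf] at this
      linarith
  · intro t ht ρ h0 hr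
    by_contra h
    push_neg at h
    have := bnAux_P1 t ht ρ h
    linarith
  · intro t ht ρ ρ₃ h0 hr h03 hr3
    have hρ1 : 1 < ρ := bnAux_root_gt_one ht h0 hr
    have h31 : 1 < ρ₃ := bnAux_root_gt_one (le_refl 3) h03 (by push_cast; linarith)
    by_contra h
    push_neg at h
    have hm := bnAux_mono (t := t) (by omega) h31.le h
    have hp := bnAux_P4 h03 hr3 t ht
    linarith
end
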